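/- arXiv:0711.0807 — 7 statements merged into one kernel-verified Lean document; each statement's English description precedes it below -/
import Mathlib

section
/- Let χ be a standard Gaussian random variable (law N(0,1) on ℝ). Then for all real numbers a and b, the variance of the bias-corrected cosine statistic satisfies the exact identity Var(e^{b²/2} cos(a + bχ)) = (e^{b²} − e^{−b²})/2 − (1 − e^{−b²}) cos²(a), and consequently Var(e^{b²/2} cos(a + bχ)) ≤ b² e^{b²}. -/
open MeasureTheory Real ProbabilityTheory Complex
open scoped NNReal ENNReal

lemma integral_exp_mul_cos_aux (a t : ℝ) :
    ∫ x : ℝ, Real.exp (-x ^ 2 / 2) * Real.cos (a + t * x)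
      = Real.sqrt (2 * π) * (Real.exp (-t ^ 2 / 2) * Real.cos a) := by
  have hb : ((-2⁻¹ : ℂ)).re < 0 := by norm_num
  have h := integral_cexp_quadratic hb (t * Complex.I) (a * Complex.I)
  have hint := integrable_cexp_quadratic' hb (t * Complex.I) (a * Complex.I)
  have hre : (∫ x : ℝ, (Complex.exp (-2⁻¹ * (x : ℂ) ^ 2 + (t * Complex.I) * x + a * Complex.I)).re)
      = ((((π : ℂ)) / -(-2⁻¹)) ^ (1 / 2 : ℂ)
          * Complex.exp (a * Complex.I - (t * Complex.I) ^ 2 / (4 * (-2⁻¹)))).re := by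
    rw [← h]
    simpa using integral_re hint
  have hL : ∀ x : ℝ, (Complex.exp (-2⁻¹ * (x : ℂ) ^ 2 + (t * Complex.I) * x + a * Complex.I)).re
      = Real.exp (-x ^ 2 / 2) * Real.cos (a + t * x) := by
    intro x
    rw [Complex.exp_re]
    congr 1
    · congr 1
      simp [Complex.add_re, Complex.mul_re, ← Complex.ofReal_pow]
      ring
    · congr 1
      simp [Complex.add_im, Complex.mul_im, ← Complex.ofReal_pow]
      ring
  simp only [hL] at hre
  rw [hre]
  have hpow : ((π : ℂ) / -(-2⁻¹)) ^ (1 / 2 : ℂ) = (Real.sqrt (2 * π) : ℂ) := by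
    have h2 : ((π : ℂ) / -(-2⁻¹)) = ((2 * π : ℝ) : ℂ) := by
      push_cast
      field_simp
    rw [h2, show (1 / 2 : ℂ) = ((1 / 2 : ℝ) : ℂ) by norm_num,
      ← Complex.ofReal_cpow (by positivity), Real.sqrt_eq_rpow]
  have harg : (a : ℂ) * Complex.I - ((t : ℂ) * Complex.I) ^ 2 / (4 * (-2⁻¹))
      = ((-t ^ 2 / 2 : ℝ) : ℂ) + ((a : ℝ) : ℂ) * Complex.I := by
    rw [show ((t : ℂ) * Complex.I) ^ 2 = -((t : ℂ) ^ 2) by rw [mul_pow, Complex.I_sq]; ring]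
    push_cast
    ring
  have hre2 : (((-t ^ 2 / 2 : ℝ) : ℂ) + ((a : ℝ) : ℂ) * Complex.I).re = -t ^ 2 / 2 := by simp [← Complex.ofReal_pow]
  have him2 : (((-t ^ 2 / 2 : ℝ) : ℂ) + ((a : ℝ) : ℂ) * Complex.I).im = a := by simp [← Complex.ofReal_pow]
  rw [hpow, harg, Complex.re_ofReal_mul, Complex.exp_re, hre2, him2]

lemma integral_cos_gaussianReal (a t : ℝ) :
    ∫ x, Real.cos (a + t * x) ∂(gaussianReal 0 1) = Real.exp (-t ^ 2 / 2) * Real.cos a := by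
  rw [gaussianReal_of_var_ne_zero 0 one_ne_zero]
  rw [show gaussianPDF 0 1 = fun x => ((Real.toNNReal (gaussianPDFReal 0 1 x) : ℝ≥0) : ℝ≥0∞)
    from rfl]
  rw [integral_withDensity_eq_integral_smul
    (measurable_gaussianPDFReal 0 1).real_toNNReal _]
  have hs : (0 : ℝ) < Real.sqrt (2 * π) := Real.sqrt_pos.mpr (by positivity)
  have hpdf : ∀ x : ℝ, (Real.toNNReal (gaussianPDFReal 0 1 x) : ℝ≥0) • Real.cos (a + t * x)
      = (Real.sqrt (2 * π))⁻¹ * (Real.exp (-x ^ 2 / 2) * Real.cos (a + t * x)) := by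
    intro x
    rw [NNReal.smul_def, smul_eq_mul, Real.coe_toNNReal _ (gaussianPDFReal_nonneg 0 1 x)]
    rw [gaussianPDFReal]
    push_cast
    ring_nf
  simp only [hpdf]
  rw [integral_const_mul, integral_exp_mul_cos_aux]
  field_simp

lemma integrable_cos_lin (c d : ℝ) (ν : Measure ℝ) [IsProbabilityMeasure ν] :
    Integrable (fun x => Real.cos (c + d * x)) ν := by
  refine (integrable_const (1 : ℝ)).mono' ?_ ?_
  · exact (Real.continuous_cos.comp (by continuity)).aestronglyMeasurable
  · exact Filter.Eventually.of_forall fun x => by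
      simpa using Real.abs_cos_le_one (c + d * x)

/-- Variance of the bias-corrected cosine of a standard Gaussian random variable. -/
theorem gaussian_bias_corrected_cosine_variance
    {Ω : Type*} [MeasurableSpace Ω] (μ : Measure Ω) [IsProbabilityMeasure μ]
    (χ : Ω → ℝ) (hχ : Measurable χ) (hlaw : Measure.map χ μ = gaussianReal 0 1)
    (a b : ℝ) :
    variance (fun ω => Real.exp (b ^ 2 / 2) * Real.cos (a + b * χ ω)) μ
        = (Real.exp (b ^ 2) - Real.exp (-b ^ 2)) / 2
          - (1 - Real.exp (-b ^ 2)) * (Real.cos a) ^ 2 ∧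
    variance (fun ω => Real.exp (b ^ 2 / 2) * Real.cos (a + b * χ ω)) μ
        ≤ b ^ 2 * Real.exp (b ^ 2) := by
  set c : ℝ := Real.exp (b ^ 2 / 2) with hc
  set Y : Ω → ℝ := fun ω => c * Real.cos (a + b * χ ω) with hY
  have hmeas : Measurable Y := by
    apply Measurable.const_mul
    exact Real.measurable_cos.comp (measurable_const.add (hχ.const_mul b))
  have hbound : ∀ ω, ‖Y ω‖ ≤ c := by
    intro ω
    rw [norm_mul, Real.norm_eq_abs, Real.norm_eq_abs, abs_of_pos (Real.exp_pos _)]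
    calc c * |Real.cos (a + b * χ ω)| ≤ c * 1 :=
          mul_le_mul_of_nonneg_left (Real.abs_cos_le_one _) (Real.exp_pos _).le
      _ = c := mul_one c
  have hmem : MemLp Y 2 μ :=
    (memLp_top_of_bound hmeas.aestronglyMeasurable c
      (Filter.Eventually.of_forall hbound)).mono_exponent le_top
  -- mean
  have hmean : ∫ ω, Y ω ∂μ = Real.cos a := by
    have h1 : ∫ ω, Real.cos (a + b * χ ω) ∂μ
        = ∫ x, Real.cos (a + b * x) ∂(Measure.map χ μ) := by
      rw [integral_map hχ.aemeasurable]
      exact (Real.continuous_cos.comp (by continuity)).aestronglyMeasurable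
    rw [hY]
    simp only
    rw [integral_const_mul, h1, hlaw, integral_cos_gaussianReal]
    rw [hc, ← mul_assoc, ← Real.exp_add, show b ^ 2 / 2 + -b ^ 2 / 2 = 0 by ring,
      Real.exp_zero, one_mul]
  -- second moment
  have hsq : ∫ ω, (Y ^ 2) ω ∂μ
      = Real.exp (b ^ 2) * (1 / 2 + Real.exp (-(2 * b) ^ 2 / 2) * Real.cos (2 * a) / 2) := by
    have hc2 : c ^ 2 = Real.exp (b ^ 2) := by
      rw [hc, sq, ← Real.exp_add]
      norm_num
    have hY2 : ∀ ω, (Y ω) ^ 2 = Real.exp (b ^ 2) *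
        (1 / 2 + Real.cos (2 * a + 2 * b * χ ω) / 2) := by
      intro ω
      have hcs : Real.cos (a + b * χ ω) ^ 2 = 1 / 2 + Real.cos (2 * (a + b * χ ω)) / 2 :=
        Real.cos_sq _
      have harg : 2 * (a + b * χ ω) = 2 * a + 2 * b * χ ω := by ring
      calc (Y ω) ^ 2 = c ^ 2 * Real.cos (a + b * χ ω) ^ 2 := by rw [hY]; ring
        _ = Real.exp (b ^ 2) * (1 / 2 + Real.cos (2 * a + 2 * b * χ ω) / 2) := by
            rw [hc2, hcs, harg]
    simp only [Pi.pow_apply]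
    simp only [hY2]
    rw [integral_const_mul]
    congr 1
    have hmeas2 : Measurable fun ω => Real.cos (2 * a + 2 * b * χ ω) :=
      Real.measurable_cos.comp (measurable_const.add (hχ.const_mul (2 * b)))
    have h1 : ∫ ω, Real.cos (2 * a + 2 * b * χ ω) ∂μ
        = ∫ x, Real.cos (2 * a + 2 * b * x) ∂(Measure.map χ μ) := by
      rw [integral_map hχ.aemeasurable]
      exact (Real.continuous_cos.comp (by continuity)).aestronglyMeasurable
    have hint : Integrable (fun ω => Real.cos (2 * a + 2 * b * χ ω)) μ := by
      refine (integrable_const (1 : ℝ)).mono' hmeas2.aestronglyMeasurable ?_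
      exact Filter.Eventually.of_forall fun ω => by
        simpa using Real.abs_cos_le_one (2 * a + 2 * b * χ ω)
    rw [integral_add (integrable_const _) (hint.div_const 2)]
    simp only [integral_div]
    rw [h1, hlaw, integral_cos_gaussianReal]
    simp
  have hvar : variance Y μ = (Real.exp (b ^ 2) - Real.exp (-b ^ 2)) / 2
      - (1 - Real.exp (-b ^ 2)) * (Real.cos a) ^ 2 := by
    rw [variance_eq_sub hmem, hmean, hsq]
    have h3 : Real.exp (b ^ 2) * Real.exp (-(2 * b) ^ 2 / 2) = Real.exp (-b ^ 2) := by
      rw [← Real.exp_add]; ring_nf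
    have h4 : Real.cos (2 * a) = 2 * Real.cos a ^ 2 - 1 := Real.cos_two_mul a
    linear_combination (Real.cos (2 * a) / 2) * h3 + (Real.exp (-b ^ 2) / 2) * h4
  refine ⟨hvar, ?_⟩
  rw [hvar]
  have he1 : Real.exp (-b ^ 2) ≤ 1 := Real.exp_le_one_iff.mpr (by nlinarith [sq_nonneg b])
  have he2 : 1 - 2 * b ^ 2 ≤ Real.exp (-(2 * b ^ 2)) := by
    nlinarith [Real.add_one_le_exp (-(2 * b ^ 2))]
  have he3 : Real.exp (b ^ 2) * Real.exp (-(2 * b ^ 2)) = Real.exp (-b ^ 2) := by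
    rw [← Real.exp_add]; ring_nf
  nlinarith [sq_nonneg (Real.cos a), sq_nonneg b, Real.exp_pos (b ^ 2),
    mul_le_mul_of_nonneg_left he2 (Real.exp_pos (b ^ 2)).le]
end

section
/- Let X and Y be real random variables with cumulative distribution functions F_X(x) = P(X ≤ x) and F_Y(x) = P(Y ≤ x), and assume ∫_{ℝ} |F_X(x) − F_Y(x)| dx < ∞. Then for every real λ: |E[cos(λX)] − E[cos(λY)]| ≤ |λ| · ∫_{ℝ} |F_X(x) − F_Y(x)| dx, and the same bound holds with sin in place of cos. -/
open MeasureTheory Filter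


lemma clamp_integral (g g' : ℝ → ℝ) (hd : ∀ t, HasDerivAt g (g' t) t) (hc : Continuous g')
    (R a : ℝ) (hR : 0 ≤ R) :
    ∫ t in Set.Ioc (-R) R, (Set.Iio a).indicator g' t
      = g (max (-R) (min a R)) - g (-R) := by
  rw [MeasureTheory.integral_indicator measurableSet_Iio, Measure.restrict_restrict measurableSet_Iio]
  rcases le_or_gt a (-R) with ha | ha
  · have hs : Set.Iio a ∩ Set.Ioc (-R) R = ∅ := by
      ext t; simp only [Set.mem_inter_iff, Set.mem_Iio, Set.mem_Ioc, Set.mem_empty_iff_false,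
        iff_false]
      rintro ⟨h1, h2, _⟩; linarith
    have hmin : min a R = a := min_eq_left (by linarith)
    have hmax : max (-R) a = -R := max_eq_left ha
    rw [hs, hmin, hmax]
    simp
  · rcases le_or_gt a R with haR | haR
    · have hs : Set.Iio a ∩ Set.Ioc (-R) R = Set.Ioo (-R) a := by
        ext t; simp only [Set.mem_inter_iff, Set.mem_Iio, Set.mem_Ioc, Set.mem_Ioo]
        constructor
        · rintro ⟨h1, h2, _⟩; exact ⟨h2, h1⟩
        · rintro ⟨h1, h2⟩; exact ⟨h2, h1, by linarith⟩
      have hmin : min a R = a := min_eq_left haR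
      have hmax : max (-R) a = a := max_eq_right ha.le
      rw [hs, hmin, hmax]
      rw [show (∫ t in Set.Ioo (-R) a, g' t) = ∫ t in Set.Ioc (-R) a, g' t from
        (MeasureTheory.integral_Ioc_eq_integral_Ioo).symm,
        ← intervalIntegral.integral_of_le ha.le]
      exact intervalIntegral.integral_eq_sub_of_hasDerivAt (fun t _ => hd t)
        (hc.intervalIntegrable _ _)
    · have hs : Set.Iio a ∩ Set.Ioc (-R) R = Set.Ioc (-R) R := by
        ext t; simp only [Set.mem_inter_iff, Set.mem_Iio, Set.mem_Ioc]
        constructor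
        · rintro ⟨_, h⟩; exact h
        · rintro ⟨h1, h2⟩; exact ⟨by linarith, h1, h2⟩
      have hmin : min a R = R := min_eq_right haR.le
      have hmax : max (-R) R = R := max_eq_right (by linarith)
      rw [hs, hmin, hmax, ← intervalIntegral.integral_of_le (by linarith : -R ≤ R)]
      exact intervalIntegral.integral_eq_sub_of_hasDerivAt (fun t _ => hd t)
        (hc.intervalIntegrable _ _)


lemma swap_one {Ω : Type*} [MeasurableSpace Ω] (μ : Measure Ω) [IsProbabilityMeasure μ]
    (Z : Ω → ℝ) (hZ : Measurable Z) (g' : ℝ → ℝ) (hc : Continuous g')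
    (R C : ℝ) (hC : ∀ t, |g' t| ≤ C) :
    ∫ ω, (∫ t in Set.Ioc (-R) R, (Set.Iio (Z ω)).indicator g' t) ∂μ
      = ∫ t in Set.Ioc (-R) R, g' t * (1 - (μ {ω | Z ω ≤ t}).toReal) := by
  set ν : Measure ℝ := volume.restrict (Set.Ioc (-R) R) with hν
  haveI : IsFiniteMeasure ν := by
    constructor
    rw [hν, Measure.restrict_apply_univ, Real.volume_Ioc]
    exact ENNReal.ofReal_lt_top
  have hs : MeasurableSet {p : Ω × ℝ | p.2 < Z p.1} :=
    measurableSet_lt measurable_snd (hZ.comp measurable_fst)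
  have hmeas : Measurable (Function.uncurry fun ω t => (Set.Iio (Z ω)).indicator g' t) := by
    have : (Function.uncurry fun ω t => (Set.Iio (Z ω)).indicator g' t)
        = Set.indicator {p : Ω × ℝ | p.2 < Z p.1} (fun p => g' p.2) := by
      funext p
      simp [Function.uncurry, Set.indicator_apply, Set.mem_Iio]
    rw [this]
    exact (hc.measurable.comp measurable_snd).indicator hs
  have hint : Integrable (Function.uncurry fun ω t => (Set.Iio (Z ω)).indicator g' t)
      (μ.prod ν) := by
    refine (integrable_const C).mono' hmeas.aestronglyMeasurable ?_
    refine Filter.Eventually.of_forall fun p => ?_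
    simp only [Function.uncurry, Real.norm_eq_abs]
    by_cases h : p.2 ∈ Set.Iio (Z p.1)
    · rw [Set.indicator_of_mem h]; exact hC _
    · rw [Set.indicator_of_notMem h, abs_zero]
      exact (abs_nonneg _).trans (hC 0)
  rw [MeasureTheory.integral_integral_swap hint]
  refine setIntegral_congr_fun measurableSet_Ioc fun t _ => ?_
  have h1 : (fun ω => (Set.Iio (Z ω)).indicator g' t)
      = fun ω => Set.indicator {ω | t < Z ω} (fun _ => g' t) ω := by
    funext ω; simp [Set.indicator_apply, Set.mem_Iio]
  have hms : MeasurableSet {ω | t < Z ω} := hZ measurableSet_Ioi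
  rw [h1, integral_indicator_const _ hms]
  have hcompl : {ω | t < Z ω} = {ω | Z ω ≤ t}ᶜ := by
    ext ω; simp [not_le]
  have hms2 : MeasurableSet {ω | Z ω ≤ t} := hZ measurableSet_Iic
  rw [hcompl, measureReal_def, prob_compl_eq_one_sub hms2,
    ENNReal.toReal_sub_of_le prob_le_one ENNReal.one_ne_top, smul_eq_mul, mul_comm]
  simp

lemma key {Ω : Type*} [MeasurableSpace Ω] (μ : Measure Ω) [IsProbabilityMeasure μ]
    (X Y : Ω → ℝ) (hX : Measurable X) (hY : Measurable Y)
    (hint : Integrable (fun x : ℝ => (μ {ω | X ω ≤ x}).toReal - (μ {ω | Y ω ≤ x}).toReal)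
      (volume : Measure ℝ))
    (g g' : ℝ → ℝ) (hd : ∀ t, HasDerivAt g (g' t) t) (hc : Continuous g')
    (hg1 : ∀ t, |g t| ≤ 1) (C : ℝ) (hC : ∀ t, |g' t| ≤ C) :
    |(∫ ω, g (X ω) ∂μ) - ∫ ω, g (Y ω) ∂μ|
      ≤ C * ∫ x : ℝ, |(μ {ω | X ω ≤ x}).toReal - (μ {ω | Y ω ≤ x}).toReal| := by
  have hgc : Continuous g := by
    rw [continuous_iff_continuousAt]; exact fun t => (hd t).continuousAt
  have hC0 : (0 : ℝ) ≤ C := (abs_nonneg _).trans (hC 0)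
  set I : ℝ := ∫ x : ℝ, |(μ {ω | X ω ≤ x}).toReal - (μ {ω | Y ω ≤ x}).toReal| with hI
  -- F-monotonicity / measurability
  have hFmono : ∀ Z : Ω → ℝ, Monotone (fun t => (μ {ω | Z ω ≤ t}).toReal) := by
    intro Z s t hst
    exact ENNReal.toReal_mono (measure_ne_top μ _)
      (measure_mono fun ω (h : Z ω ≤ s) => h.trans hst)
  -- step A : identity for truncations
  have e1 : ∀ (n : ℕ) (Z : Ω → ℝ), Measurable Z →
      (∫ ω, g (max (-(n:ℝ)) (min (Z ω) (n:ℝ))) ∂μ)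
        = g (-(n:ℝ)) + ∫ t in Set.Ioc (-(n:ℝ)) (n:ℝ), g' t * (1 - (μ {ω | Z ω ≤ t}).toReal) := by
    intro n Z hZ
    have hclamp : ∀ ω, g (max (-(n:ℝ)) (min (Z ω) (n:ℝ)))
        = g (-(n:ℝ)) + ∫ t in Set.Ioc (-(n:ℝ)) (n:ℝ), (Set.Iio (Z ω)).indicator g' t := by
      intro ω
      rw [clamp_integral g g' hd hc _ _ (Nat.cast_nonneg n)]; ring
    have hgint : Integrable (fun ω => g (max (-(n:ℝ)) (min (Z ω) (n:ℝ)))) μ := by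
      refine (integrable_const (1:ℝ)).mono' ?_ (Filter.Eventually.of_forall fun ω => ?_)
      · exact (hgc.measurable.comp
          ((measurable_const.max (hZ.min measurable_const)))).aestronglyMeasurable
      · exact (Real.norm_eq_abs _).le.trans_eq' rfl |>.trans (hg1 _)
    have hFn_int : Integrable
        (fun ω => ∫ t in Set.Ioc (-(n:ℝ)) (n:ℝ), (Set.Iio (Z ω)).indicator g' t) μ := by
      have heq : (fun ω => ∫ t in Set.Ioc (-(n:ℝ)) (n:ℝ), (Set.Iio (Z ω)).indicator g' t)
          = fun ω => g (max (-(n:ℝ)) (min (Z ω) (n:ℝ))) - g (-(n:ℝ)) :=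
        funext fun ω => clamp_integral g g' hd hc _ _ (Nat.cast_nonneg n)
      rw [heq]
      exact hgint.sub (integrable_const _)
    calc (∫ ω, g (max (-(n:ℝ)) (min (Z ω) (n:ℝ))) ∂μ)
        = ∫ ω, (g (-(n:ℝ)) + ∫ t in Set.Ioc (-(n:ℝ)) (n:ℝ), (Set.Iio (Z ω)).indicator g' t) ∂μ := by
          exact integral_congr_ae (Filter.Eventually.of_forall hclamp)
      _ = g (-(n:ℝ)) + ∫ ω, (∫ t in Set.Ioc (-(n:ℝ)) (n:ℝ), (Set.Iio (Z ω)).indicator g' t) ∂μ := by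
          rw [integral_add (integrable_const _) hFn_int, integral_const, measureReal_def, measure_univ,
            ENNReal.toReal_one, one_smul]
      _ = _ := by rw [swap_one μ Z hZ g' hc _ C hC]
  -- integrability of the cdf-type integrands on the restricted measure
  have hνint : ∀ (n : ℕ) (Z : Ω → ℝ), Measurable Z →
      Integrable (fun t => g' t * (1 - (μ {ω | Z ω ≤ t}).toReal))
        (volume.restrict (Set.Ioc (-(n:ℝ)) (n:ℝ))) := by
    intro n Z hZ
    haveI : IsFiniteMeasure (volume.restrict (Set.Ioc (-(n:ℝ)) (n:ℝ))) := by
      constructor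
      rw [Measure.restrict_apply_univ, Real.volume_Ioc]
      exact ENNReal.ofReal_lt_top
    refine (integrable_const C).mono' ?_ (Filter.Eventually.of_forall fun t => ?_)
    · exact (hc.measurable.mul
        ((measurable_const.sub (hFmono Z).measurable))).aestronglyMeasurable
    · rw [Real.norm_eq_abs, abs_mul]
      have h1 : |1 - (μ {ω | Z ω ≤ t}).toReal| ≤ 1 := by
        rw [abs_le]
        have h2 : (μ {ω | Z ω ≤ t}).toReal ≤ 1 := by
          have := prob_le_one (μ := μ) (s := {ω | Z ω ≤ t})
          simpa using ENNReal.toReal_mono ENNReal.one_ne_top this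
        have h3 : (0:ℝ) ≤ (μ {ω | Z ω ≤ t}).toReal := ENNReal.toReal_nonneg
        constructor <;> linarith
      calc |g' t| * |1 - (μ {ω | Z ω ≤ t}).toReal| ≤ C * 1 :=
            mul_le_mul (hC t) h1 (abs_nonneg _) hC0
        _ = C := mul_one C
  -- bound for each n
  have bound_n : ∀ n : ℕ,
      |(∫ ω, g (max (-(n:ℝ)) (min (X ω) (n:ℝ))) ∂μ)
        - ∫ ω, g (max (-(n:ℝ)) (min (Y ω) (n:ℝ))) ∂μ| ≤ C * I := by
    intro n
    rw [e1 n X hX, e1 n Y hY]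
    have hdiff : (g (-(n:ℝ)) + ∫ t in Set.Ioc (-(n:ℝ)) (n:ℝ), g' t * (1 - (μ {ω | X ω ≤ t}).toReal))
        - (g (-(n:ℝ)) + ∫ t in Set.Ioc (-(n:ℝ)) (n:ℝ), g' t * (1 - (μ {ω | Y ω ≤ t}).toReal))
        = ∫ t in Set.Ioc (-(n:ℝ)) (n:ℝ),
            g' t * ((μ {ω | Y ω ≤ t}).toReal - (μ {ω | X ω ≤ t}).toReal) := by
      rw [add_sub_add_left_eq_sub, ← integral_sub (hνint n X hX) (hνint n Y hY)]
      congr 1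
      funext t
      ring
    rw [hdiff]
    have habsint : Integrable
        (fun t => |(μ {ω | X ω ≤ t}).toReal - (μ {ω | Y ω ≤ t}).toReal|)
        (volume.restrict (Set.Ioc (-(n:ℝ)) (n:ℝ))) := hint.abs.restrict
    have hmulint : Integrable
        (fun t => g' t * ((μ {ω | Y ω ≤ t}).toReal - (μ {ω | X ω ≤ t}).toReal))
        (volume.restrict (Set.Ioc (-(n:ℝ)) (n:ℝ))) := by
      have h1 : Integrable (fun t => (μ {ω | Y ω ≤ t}).toReal - (μ {ω | X ω ≤ t}).toReal)
          (volume.restrict (Set.Ioc (-(n:ℝ)) (n:ℝ))) := by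
        have := hint.neg.restrict (s := Set.Ioc (-(n:ℝ)) (n:ℝ))
        refine this.congr (Filter.Eventually.of_forall fun t => by simp [neg_sub])
      exact h1.bdd_mul hc.aestronglyMeasurable (c := C) (Filter.Eventually.of_forall fun t => (Real.norm_eq_abs _) ▸ hC t)
    calc |∫ t in Set.Ioc (-(n:ℝ)) (n:ℝ),
            g' t * ((μ {ω | Y ω ≤ t}).toReal - (μ {ω | X ω ≤ t}).toReal)|
        ≤ ∫ t in Set.Ioc (-(n:ℝ)) (n:ℝ),
            |g' t * ((μ {ω | Y ω ≤ t}).toReal - (μ {ω | X ω ≤ t}).toReal)| := by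
          exact (Real.norm_eq_abs _) ▸ (norm_integral_le_integral_norm _)
      _ ≤ ∫ t in Set.Ioc (-(n:ℝ)) (n:ℝ),
            C * |(μ {ω | X ω ≤ t}).toReal - (μ {ω | Y ω ≤ t}).toReal| := by
          refine integral_mono hmulint.abs (habsint.const_mul C) fun t => ?_
          rw [abs_mul, abs_sub_comm]
          exact mul_le_mul_of_nonneg_right (hC t) (abs_nonneg _)
      _ = C * ∫ t in Set.Ioc (-(n:ℝ)) (n:ℝ),
            |(μ {ω | X ω ≤ t}).toReal - (μ {ω | Y ω ≤ t}).toReal| := integral_const_mul _ _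
      _ ≤ C * I := by
          refine mul_le_mul_of_nonneg_left ?_ hC0
          exact setIntegral_le_integral hint.abs
            (Filter.Eventually.of_forall fun t => abs_nonneg _)
  -- step B : limit
  have hlim : ∀ Z : Ω → ℝ, Measurable Z →
      Tendsto (fun n : ℕ => ∫ ω, g (max (-(n:ℝ)) (min (Z ω) (n:ℝ))) ∂μ) atTop
        (nhds (∫ ω, g (Z ω) ∂μ)) := by
    intro Z hZ
    refine tendsto_integral_of_dominated_convergence (fun _ => (1:ℝ))
      (fun n => (hgc.measurable.comp
        ((measurable_const.max (hZ.min measurable_const)))).aestronglyMeasurable)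
      (integrable_const 1)
      (fun n => Filter.Eventually.of_forall fun ω => (Real.norm_eq_abs _) ▸ hg1 _)
      (Filter.Eventually.of_forall fun ω => ?_)
    obtain ⟨N, hN⟩ := exists_nat_ge |Z ω|
    have hev : ∀ᶠ (n : ℕ) in atTop, g (max (-(n:ℝ)) (min (Z ω) (n:ℝ))) = g (Z ω) := by
      filter_upwards [Filter.eventually_ge_atTop N] with n hn
      have h1 : |Z ω| ≤ (n:ℝ) := hN.trans (Nat.cast_le.2 hn)
      obtain ⟨h2, h3⟩ := abs_le.mp h1
      rw [min_eq_left h3, max_eq_right h2]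
    exact Tendsto.congr' (hev.mono fun n h => h.symm) tendsto_const_nhds
  have htend : Tendsto (fun n : ℕ =>
      |(∫ ω, g (max (-(n:ℝ)) (min (X ω) (n:ℝ))) ∂μ)
        - ∫ ω, g (max (-(n:ℝ)) (min (Y ω) (n:ℝ))) ∂μ|) atTop
      (nhds |(∫ ω, g (X ω) ∂μ) - ∫ ω, g (Y ω) ∂μ|) :=
    ((hlim X hX).sub (hlim Y hY)).abs
  exact le_of_tendsto htend (Filter.Eventually.of_forall bound_n)

/-- Comparison of trigonometric moments via the L¹ distance between distribution functions. -/
theorem trig_moment_comparison_via_cdf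
    {Ω : Type*} [MeasurableSpace Ω] (μ : Measure Ω) [IsProbabilityMeasure μ]
    (X Y : Ω → ℝ) (hX : Measurable X) (hY : Measurable Y)
    (hint : Integrable
      (fun x : ℝ => (μ {ω | X ω ≤ x}).toReal - (μ {ω | Y ω ≤ x}).toReal)
      (volume : Measure ℝ))
    (l : ℝ) :
    |(∫ ω, Real.cos (l * X ω) ∂μ) - ∫ ω, Real.cos (l * Y ω) ∂μ|
        ≤ |l| * ∫ x : ℝ, |(μ {ω | X ω ≤ x}).toReal - (μ {ω | Y ω ≤ x}).toReal| ∧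
    |(∫ ω, Real.sin (l * X ω) ∂μ) - ∫ ω, Real.sin (l * Y ω) ∂μ|
        ≤ |l| * ∫ x : ℝ, |(μ {ω | X ω ≤ x}).toReal - (μ {ω | Y ω ≤ x}).toReal| := by
  constructor
  · refine key μ X Y hX hY hint (fun t => Real.cos (l * t))
      (fun t => -Real.sin (l * t) * l) (fun t => ?_) ?_ (fun t => Real.abs_cos_le_one _)
      |l| (fun t => ?_)
    · have h1 : HasDerivAt (fun y : ℝ => l * y) l t := by
        simpa using (hasDerivAt_id t).const_mul l
      exact (Real.hasDerivAt_cos (l * t)).comp t h1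
    · exact ((Real.continuous_sin.comp (continuous_const.mul continuous_id)).neg).mul
        continuous_const
    · rw [abs_mul, abs_neg]
      exact mul_le_of_le_one_left (abs_nonneg l) (Real.abs_sin_le_one _)
  · refine key μ X Y hX hY hint (fun t => Real.sin (l * t))
      (fun t => Real.cos (l * t) * l) (fun t => ?_) ?_ (fun t => Real.abs_sin_le_one _)
      |l| (fun t => ?_)
    · have h1 : HasDerivAt (fun y : ℝ => l * y) l t := by
        simpa using (hasDerivAt_id t).const_mul l
      exact (Real.hasDerivAt_sin (l * t)).comp t h1
    · exact (Real.continuous_cos.comp (continuous_const.mul continuous_id)).mul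
        continuous_const
    · rw [abs_mul]
      exact mul_le_of_le_one_left (abs_nonneg l) (Real.abs_cos_le_one _)
end

section
/- Let X be a real random variable and D ≥ 0 a constant such that |P(X ≤ x) − F_{N(0,1)}(x)| ≤ D/(1 + x²) for all real x, where F_{N(0,1)} is the standard normal cumulative distribution function. Then for every real λ: |E[cos(λX)] − e^{−λ²/2}| ≤ π |λ| D and |E[sin(λX)]| ≤ π |λ| D. -/
open MeasureTheory ProbabilityTheory

section TrigAuxSec
open Set Filter Topology Complex
open scoped NNReal ENNReal Real

namespace TrigAux
set_option maxHeartbeats 1000000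

noncomputable def clamp (R x : ℝ) : ℝ := max (min x R) (-R)
lemma clamp_continuous (R : ℝ) : Continuous (clamp R) :=
  (continuous_id.min continuous_const).max continuous_const
lemma clamp_le {R : ℝ} (hR : 0 ≤ R) (x : ℝ) : clamp R x ≤ R :=
  max_le (min_le_right _ _) (by linarith)
lemma le_clamp (R x : ℝ) : -R ≤ clamp R x := le_max_right _ _
lemma lt_clamp_iff {R t : ℝ} (hR : 0 ≤ R) (ht : 0 ≤ t) (x : ℝ) :
    t < clamp R x ↔ t < x ∧ t < R := by
  rw [clamp, lt_max_iff, lt_min_iff]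
  constructor
  · rintro (h | h)
    · exact h
    · linarith
  · exact Or.inl
lemma clamp_le_iff {R t : ℝ} (hR : 0 ≤ R) (ht : t < 0) (x : ℝ) :
    clamp R x ≤ t ↔ x ≤ t ∧ -R ≤ t := by
  rw [clamp, max_le_iff, min_le_iff]
  constructor
  · rintro ⟨h | h, h2⟩
    · exact ⟨h, h2⟩
    · linarith
  · rintro ⟨h1, h2⟩
    exact ⟨Or.inl h1, h2⟩

noncomputable def Phi (ν : Measure ℝ) (g' : ℝ → ℝ) (R : ℝ) : ℝ → ℝ := fun t =>
  (Set.Ico 0 R).indicator (fun s => g' s * (ν (Set.Ioi s)).toReal) t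
  - (Set.Ico (-R) 0).indicator (fun s => g' s * (ν (Set.Iic s)).toReal) t

lemma integral_clamp_eq (ν : Measure ℝ) [IsProbabilityMeasure ν]
    {g g' : ℝ → ℝ} {B : ℝ}
    (hderiv : ∀ x, HasDerivAt g (g' x) x) (hg'c : Continuous g')
    (hg'b : ∀ x, |g' x| ≤ B) {R : ℝ} (hR : 0 ≤ R) :
    ∫ x, g (clamp R x) ∂ν = g 0 + ∫ t, Phi ν g' R t := by
  have hB : 0 ≤ B := le_trans (abs_nonneg _) (hg'b 0)
  have hio : ∀ a b : ℝ, IntegrableOn g' (Set.Ico a b) volume := fun a b =>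
    (hg'c.integrableOn_Icc).mono_set Set.Ico_subset_Icc_self
  set F : ℝ × ℝ → ℝ := fun p =>
    (Set.Ico 0 (clamp R p.1)).indicator g' p.2
      - (Set.Ico (clamp R p.1) 0).indicator g' p.2 with hF
  have hstep1 : ∀ x : ℝ, g (clamp R x) = g 0 + ∫ t, F (x, t) := by
    intro x
    have h1 : ∫ t in (0:ℝ)..(clamp R x), g' t = g (clamp R x) - g 0 :=
      intervalIntegral.integral_eq_sub_of_hasDerivAt (fun t _ => hderiv t)
        (hg'c.intervalIntegrable _ _)
    have h2 : ∫ t in (0:ℝ)..(clamp R x), g' t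
        = (∫ t in Set.Ico 0 (clamp R x), g' t) - ∫ t in Set.Ico (clamp R x) 0, g' t := by
      show (∫ t in Set.Ioc 0 (clamp R x), g' t) - (∫ t in Set.Ioc (clamp R x) 0, g' t) = _
      rw [integral_Ioc_eq_integral_Ioo, integral_Ioc_eq_integral_Ioo,
        ← integral_Ico_eq_integral_Ioo, ← integral_Ico_eq_integral_Ioo]
    have h3 : ∫ t, F (x, t)
        = (∫ t, (Set.Ico 0 (clamp R x)).indicator g' t)
          - ∫ t, (Set.Ico (clamp R x) 0).indicator g' t :=
      integral_sub (f := fun t => (Set.Ico 0 (clamp R x)).indicator g' t)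
        (g := fun t => (Set.Ico (clamp R x) 0).indicator g' t)
        ((hio _ _).integrable_indicator measurableSet_Ico)
        ((hio _ _).integrable_indicator measurableSet_Ico)
    rw [h3, MeasureTheory.integral_indicator measurableSet_Ico,
      MeasureTheory.integral_indicator measurableSet_Ico]
    linarith [h1, h2]
  have hmeasF : AEStronglyMeasurable F (ν.prod volume) := by
    have hs1 : MeasurableSet {p : ℝ × ℝ | 0 ≤ p.2 ∧ p.2 < clamp R p.1} :=
      (measurableSet_le measurable_const measurable_snd).inter
        (measurableSet_lt measurable_snd ((clamp_continuous R).measurable.comp measurable_fst))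
    have hs2 : MeasurableSet {p : ℝ × ℝ | clamp R p.1 ≤ p.2 ∧ p.2 < 0} :=
      (measurableSet_le ((clamp_continuous R).measurable.comp measurable_fst)
        measurable_snd).inter (measurableSet_lt measurable_snd measurable_const)
    have hFe : F = fun p =>
        ({p : ℝ × ℝ | 0 ≤ p.2 ∧ p.2 < clamp R p.1}.indicator (fun q => g' q.2) p
        - {p : ℝ × ℝ | clamp R p.1 ≤ p.2 ∧ p.2 < 0}.indicator (fun q => g' q.2) p) := by
      funext p
      simp only [hF, Set.indicator_apply, Set.mem_Ico, Set.mem_setOf_eq]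
    rw [hFe]
    exact (((hg'c.measurable.comp measurable_snd).indicator hs1).sub
      ((hg'c.measurable.comp measurable_snd).indicator hs2)).aestronglyMeasurable
  have hFint : Integrable F (ν.prod volume) := by
    refine Integrable.mono'
      (g := (Set.univ ×ˢ Set.Icc (-R) R).indicator (fun _ => B)) ?_ hmeasF
      (ae_of_all _ fun p => ?_)
    · refine ((integrableOn_const_iff enorm_ne_top).mpr (Or.inr ?_)).integrable_indicator
        (MeasurableSet.univ.prod measurableSet_Icc)
      rw [Measure.prod_prod, measure_univ, one_mul, Real.volume_Icc]
      exact ENNReal.ofReal_lt_top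
    · have hc1 := clamp_le hR p.1
      have hc2 := le_clamp R p.1
      rw [Real.norm_eq_abs, Set.indicator_apply]
      simp only [Set.mem_prod, Set.mem_univ, Set.mem_Icc, true_and]
      simp only [hF, Set.indicator_apply, Set.mem_Ico]
      split_ifs with hA hC hM hM hC hM hM
      · exact absurd hC.2 (by linarith [hA.1])
      · exact absurd hC.2 (by linarith [hA.1])
      · rw [sub_zero]; exact hg'b _
      · exact absurd ⟨by linarith [hA.1], by linarith [hA.2]⟩ hM
      · rw [zero_sub, abs_neg]; exact hg'b _
      · exact absurd ⟨le_trans hc2 hC.1, by linarith [hC.2]⟩ hM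
      · simpa using hB
      · simp
  have hswap : ∫ x, (∫ t, F (x, t)) ∂ν = ∫ t, (∫ x, F (x, t) ∂ν) :=
    integral_integral_swap (f := fun x t => F (x, t)) hFint
  have hinner : ∀ t : ℝ, ∫ x, F (x, t) ∂ν = Phi ν g' R t := by
    intro t
    have e1 : ∀ x, (Set.Ico 0 (clamp R x)).indicator g' t
        = (Set.Ioi t).indicator (fun _ => (Set.Ico 0 R).indicator g' t) x := by
      intro x
      simp only [Set.indicator_apply, Set.mem_Ico, Set.mem_Ioi]
      by_cases ht : 0 ≤ t
      · have hiff := lt_clamp_iff hR ht x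
        simp only [ht, true_and, hiff]
        split_ifs <;> tauto
      · simp [ht]
    have e2 : ∀ x, (Set.Ico (clamp R x) 0).indicator g' t
        = (Set.Iic t).indicator (fun _ => (Set.Ico (-R) 0).indicator g' t) x := by
      intro x
      simp only [Set.indicator_apply, Set.mem_Ico, Set.mem_Iic]
      by_cases ht : t < 0
      · have hiff := clamp_le_iff hR ht x
        simp only [ht, and_true, hiff]
        split_ifs <;> tauto
      · simp [ht]
    have hInt1 : Integrable ((Set.Ioi t).indicator
        (fun _ => (Set.Ico 0 R).indicator g' t)) ν :=
      ((integrableOn_const_iff enorm_ne_top).mpr (Or.inr (measure_lt_top _ _))).integrable_indicator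
        measurableSet_Ioi
    have hInt2 : Integrable ((Set.Iic t).indicator
        (fun _ => (Set.Ico (-R) 0).indicator g' t)) ν :=
      ((integrableOn_const_iff enorm_ne_top).mpr (Or.inr (measure_lt_top _ _))).integrable_indicator
        measurableSet_Iic
    calc ∫ x, F (x, t) ∂ν
        = ∫ x, ((Set.Ioi t).indicator (fun _ => (Set.Ico 0 R).indicator g' t) x
            - (Set.Iic t).indicator (fun _ => (Set.Ico (-R) 0).indicator g' t) x) ∂ν := by
          refine integral_congr_ae (ae_of_all _ fun x => ?_)
          simp only [hF]
          rw [e1 x, e2 x]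
      _ = (ν (Set.Ioi t)).toReal • (Set.Ico 0 R).indicator g' t
            - (ν (Set.Iic t)).toReal • (Set.Ico (-R) 0).indicator g' t := by
          rw [integral_sub hInt1 hInt2, integral_indicator_const _ measurableSet_Ioi,
            integral_indicator_const _ measurableSet_Iic, measureReal_def, measureReal_def]
      _ = Phi ν g' R t := by
          unfold Phi
          rw [Set.indicator_apply, Set.indicator_apply, Set.indicator_apply,
            Set.indicator_apply]
          split_ifs <;> simp [smul_eq_mul] <;> ring
  calc ∫ x, g (clamp R x) ∂ν
      = ∫ x, (g 0 + ∫ t, F (x, t)) ∂ν :=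
        integral_congr_ae (ae_of_all _ fun x => hstep1 x)
    _ = g 0 + ∫ x, (∫ t, F (x, t)) ∂ν := by
        rw [integral_add (integrable_const _) hFint.integral_prod_left, integral_const,
          probReal_univ, one_smul]
    _ = g 0 + ∫ t, (∫ x, F (x, t) ∂ν) := by rw [hswap]
    _ = g 0 + ∫ t, Phi ν g' R t := by
        rw [show (fun t => ∫ x, F (x, t) ∂ν) = Phi ν g' R from funext hinner]

lemma meas_Ioi (ν : Measure ℝ) [IsFiniteMeasure ν] :
    Measurable fun t => (ν (Set.Ioi t)).toReal :=
  Antitone.measurable fun _ _ hab =>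
    ENNReal.toReal_mono (measure_ne_top _ _) (measure_mono (Set.Ioi_subset_Ioi hab))

lemma meas_Iic (ν : Measure ℝ) [IsFiniteMeasure ν] :
    Measurable fun t => (ν (Set.Iic t)).toReal :=
  Monotone.measurable fun _ _ hab =>
    ENNReal.toReal_mono (measure_ne_top _ _) (measure_mono (Set.Iic_subset_Iic.mpr hab))

lemma measurable_Phi (ν : Measure ℝ) [IsFiniteMeasure ν] {g' : ℝ → ℝ}
    (hg' : Continuous g') (R : ℝ) : Measurable (Phi ν g' R) :=
  ((hg'.measurable.mul (meas_Ioi ν)).indicator measurableSet_Ico).sub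
    ((hg'.measurable.mul (meas_Iic ν)).indicator measurableSet_Ico)

lemma abs_Phi_le (ν : Measure ℝ) [IsProbabilityMeasure ν] {g' : ℝ → ℝ} {B R : ℝ}
    (hg'b : ∀ x, |g' x| ≤ B) (t : ℝ) :
    |Phi ν g' R t| ≤ (Set.Icc (-R) R).indicator (fun _ => B) t := by
  have hB : 0 ≤ B := le_trans (abs_nonneg _) (hg'b 0)
  have hm : ∀ s : Set ℝ, 0 ≤ (ν s).toReal ∧ (ν s).toReal ≤ 1 := fun s =>
    ⟨ENNReal.toReal_nonneg, by
      simpa using ENNReal.toReal_mono (by simp) (prob_le_one (μ := ν) (s := s))⟩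
  unfold Phi
  rw [Set.indicator_apply, Set.indicator_apply, Set.indicator_apply]
  simp only [Set.mem_Ico, Set.mem_Icc]
  split_ifs with h1 h2 h3 h3 h2 h3 h3
  · linarith [h1.1, h2.2]
  · linarith [h1.1, h2.2]
  · rw [sub_zero, abs_mul]
    have := hm (Set.Ioi t)
    nlinarith [abs_nonneg (g' t), hg'b t, _root_.abs_of_nonneg this.1]
  · exact absurd ⟨by linarith [h1.1, h1.2], le_of_lt h1.2⟩ h3
  · rw [zero_sub, abs_neg, abs_mul]
    have := hm (Set.Iic t)
    nlinarith [abs_nonneg (g' t), hg'b t, _root_.abs_of_nonneg this.1]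
  · exact absurd ⟨h2.1, by linarith [h2.1, h2.2]⟩ h3
  · simpa using hB
  · simp

lemma integrable_Phi (ν : Measure ℝ) [IsProbabilityMeasure ν] {g' : ℝ → ℝ} {B R : ℝ}
    (hg' : Continuous g') (hg'b : ∀ x, |g' x| ≤ B) :
    Integrable (Phi ν g' R) volume := by
  refine Integrable.mono' (g := (Set.Icc (-R) R).indicator (fun _ => B)) ?_
    (measurable_Phi ν hg' R).aestronglyMeasurable (ae_of_all _ fun t => ?_)
  · exact ((integrableOn_const_iff enorm_ne_top).mpr (Or.inr (by rw [Real.volume_Icc]; exact ENNReal.ofReal_lt_top))).integrable_indicator measurableSet_Icc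
  · rw [Real.norm_eq_abs]
    exact abs_Phi_le ν hg'b t

lemma toReal_Ioi (ν : Measure ℝ) [IsProbabilityMeasure ν] (t : ℝ) :
    (ν (Set.Ioi t)).toReal = 1 - (ν (Set.Iic t)).toReal := by
  rw [← Set.compl_Iic, prob_compl_eq_one_sub measurableSet_Iic,
    ENNReal.toReal_sub_of_le prob_le_one ENNReal.one_ne_top, ENNReal.toReal_one]

lemma abs_Phi_sub_le (ν γ' : Measure ℝ) [IsProbabilityMeasure ν] [IsProbabilityMeasure γ']
    {g' : ℝ → ℝ} {B D R : ℝ} (hg'b : ∀ x, |g' x| ≤ B) (hD : 0 ≤ D)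
    (hclose : ∀ t : ℝ, |(ν (Set.Iic t)).toReal - (γ' (Set.Iic t)).toReal| ≤ D / (1 + t ^ 2))
    (t : ℝ) : |Phi ν g' R t - Phi γ' g' R t| ≤ B * D * (1 + t ^ 2)⁻¹ := by
  have hB : 0 ≤ B := le_trans (abs_nonneg _) (hg'b 0)
  have pos : (0:ℝ) < 1 + t ^ 2 := by positivity
  have hb := hclose t
  have habs : |(γ' (Set.Iic t)).toReal - (ν (Set.Iic t)).toReal| ≤ D / (1 + t ^ 2) := by
    rw [abs_sub_comm]; exact hb
  unfold Phi
  simp only [Set.indicator_apply, Set.mem_Ico]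
  split_ifs with h1 h2 h2
  · linarith [h1.1, h2.2]
  · have he : (g' t * (ν (Set.Ioi t)).toReal - 0) - (g' t * (γ' (Set.Ioi t)).toReal - 0)
        = g' t * ((γ' (Set.Iic t)).toReal - (ν (Set.Iic t)).toReal) := by
      rw [toReal_Ioi, toReal_Ioi]; ring
    rw [he, abs_mul]
    calc |g' t| * |(γ' (Set.Iic t)).toReal - (ν (Set.Iic t)).toReal|
        ≤ B * (D / (1 + t ^ 2)) :=
          mul_le_mul (hg'b t) habs (abs_nonneg _) hB
      _ = B * D * (1 + t ^ 2)⁻¹ := by ring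
  · have he : (0 - g' t * (ν (Set.Iic t)).toReal) - (0 - g' t * (γ' (Set.Iic t)).toReal)
        = g' t * ((γ' (Set.Iic t)).toReal - (ν (Set.Iic t)).toReal) := by ring
    rw [he, abs_mul]
    calc |g' t| * |(γ' (Set.Iic t)).toReal - (ν (Set.Iic t)).toReal|
        ≤ B * (D / (1 + t ^ 2)) :=
          mul_le_mul (hg'b t) habs (abs_nonneg _) hB
      _ = B * D * (1 + t ^ 2)⁻¹ := by ring
  · simp only [sub_zero, sub_self, abs_zero]
    positivity

lemma clamp_diff_bound (ν γ' : Measure ℝ) [IsProbabilityMeasure ν] [IsProbabilityMeasure γ']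
    {g g' : ℝ → ℝ} {B D : ℝ}
    (hderiv : ∀ x, HasDerivAt g (g' x) x) (hg'c : Continuous g')
    (hg'b : ∀ x, |g' x| ≤ B) (hD : 0 ≤ D)
    (hclose : ∀ t : ℝ, |(ν (Set.Iic t)).toReal - (γ' (Set.Iic t)).toReal| ≤ D / (1 + t ^ 2))
    {R : ℝ} (hR : 0 ≤ R) :
    |(∫ x, g (clamp R x) ∂ν) - ∫ x, g (clamp R x) ∂γ'| ≤ Real.pi * B * D := by
  rw [integral_clamp_eq ν hderiv hg'c hg'b hR, integral_clamp_eq γ' hderiv hg'c hg'b hR]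
  have h0 : (g 0 + ∫ t, Phi ν g' R t) - (g 0 + ∫ t, Phi γ' g' R t)
      = (∫ t, Phi ν g' R t) - ∫ t, Phi γ' g' R t := by ring
  rw [h0, ← integral_sub (integrable_Phi ν hg'c hg'b) (integrable_Phi γ' hg'c hg'b)]
  have hint : Integrable (fun t => Phi ν g' R t - Phi γ' g' R t) volume :=
    (integrable_Phi ν hg'c hg'b).sub (integrable_Phi γ' hg'c hg'b)
  calc |∫ t, (Phi ν g' R t - Phi γ' g' R t)|
      ≤ ∫ t, |Phi ν g' R t - Phi γ' g' R t| := by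
        simpa [Real.norm_eq_abs] using norm_integral_le_integral_norm
          (fun t => Phi ν g' R t - Phi γ' g' R t) (μ := volume)
    _ ≤ ∫ t, B * D * (1 + t ^ 2)⁻¹ :=
        integral_mono hint.abs (integrable_inv_one_add_sq.const_mul (B * D))
          (abs_Phi_sub_le ν γ' hg'b hD hclose)
    _ = B * D * Real.pi := by
        rw [integral_const_mul, integral_univ_inv_one_add_sq]
    _ = Real.pi * B * D := by ring

lemma clamp_eq {R x : ℝ} (h : |x| ≤ R) : clamp R x = x := by
  rw [abs_le] at h
  rw [clamp, min_eq_left h.2, max_eq_left (by linarith [h.1])]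

lemma diff_bound (ν γ' : Measure ℝ) [IsProbabilityMeasure ν] [IsProbabilityMeasure γ']
    {g g' : ℝ → ℝ} {B D : ℝ}
    (hderiv : ∀ x, HasDerivAt g (g' x) x) (hg'c : Continuous g')
    (hg'b : ∀ x, |g' x| ≤ B) (hgb : ∀ x, |g x| ≤ 1) (hD : 0 ≤ D)
    (hclose : ∀ t : ℝ, |(ν (Set.Iic t)).toReal - (γ' (Set.Iic t)).toReal| ≤ D / (1 + t ^ 2)) :
    |(∫ x, g x ∂ν) - ∫ x, g x ∂γ'| ≤ Real.pi * B * D := by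
  have hgc : Continuous g := by
    have : Differentiable ℝ g := fun x => (hderiv x).differentiableAt
    exact this.continuous
  have hten : ∀ (m : Measure ℝ), IsProbabilityMeasure m →
      Tendsto (fun n : ℕ => ∫ x, g (clamp (n : ℝ) x) ∂m) atTop (𝓝 (∫ x, g x ∂m)) := by
    intro m _
    refine tendsto_integral_of_dominated_convergence (fun _ => 1)
      (fun n => (hgc.comp (clamp_continuous _)).aestronglyMeasurable)
      (integrable_const 1)
      (fun n => ae_of_all _ fun x => by rw [Real.norm_eq_abs]; exact hgb _)
      (ae_of_all _ fun x => ?_)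
    refine tendsto_const_nhds.congr' ?_
    filter_upwards [eventually_ge_atTop ⌈|x|⌉₊] with n hn
    rw [clamp_eq (le_trans (Nat.le_ceil _) (Nat.cast_le.mpr hn))]
  have hb : ∀ n : ℕ, |(∫ x, g (clamp (n : ℝ) x) ∂ν) - ∫ x, g (clamp (n : ℝ) x) ∂γ'|
      ≤ Real.pi * B * D := fun n =>
    clamp_diff_bound ν γ' hderiv hg'c hg'b hD hclose (Nat.cast_nonneg n)
  exact le_of_tendsto (((hten ν inferInstance).sub (hten γ' inferInstance)).abs)
    (Eventually.of_forall hb)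

lemma gauss_vals (l : ℝ) :
    (∫ x, Real.cos (l * x) ∂(gaussianReal 0 1)) = Real.exp (-l ^ 2 / 2) ∧
    (∫ x, Real.sin (l * x) ∂(gaussianReal 0 1)) = 0 := by
  -- reduce to a Lebesgue integral against the density
  have hγ : ∀ f : ℝ → ℝ, ∫ x, f x ∂(gaussianReal 0 1)
      = ∫ x, gaussianPDFReal 0 1 x * f x := by
    intro f
    rw [gaussianReal_of_var_ne_zero 0 one_ne_zero]
    have h0 : volume.withDensity (gaussianPDF 0 1)
        = volume.withDensity (fun x => ((Real.toNNReal (gaussianPDFReal 0 1 x) : ℝ≥0) : ℝ≥0∞)) :=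
      rfl
    rw [h0, integral_withDensity_eq_integral_smul
      ((measurable_gaussianPDFReal 0 1).real_toNNReal) f]
    congr 1
    funext x
    rw [NNReal.smul_def, Real.coe_toNNReal _ (gaussianPDFReal_nonneg 0 1 x), smul_eq_mul]
  have hpdf : ∀ x : ℝ, gaussianPDFReal 0 1 x
      = (Real.sqrt (2 * Real.pi))⁻¹ * Real.exp (-x ^ 2 / 2) := by
    intro x
    simp [gaussianPDFReal]
  set f : ℝ → ℂ := fun x => Complex.exp (Complex.I * l * x) * Complex.exp (-(1/2 : ℂ) * x ^ 2)
    with hf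
  have hint : Integrable f volume := by
    refine Integrable.mono' (integrable_exp_neg_mul_sq (by norm_num : (0:ℝ) < 1/2)) ?_
      (ae_of_all _ fun x => ?_)
    · apply Continuous.aestronglyMeasurable
      rw [hf]; continuity
    · rw [hf]
      rw [norm_mul, Complex.norm_exp, Complex.norm_exp]
      have h1 : (Complex.I * l * x).re = 0 := by simp
      have h2 : ((-(1/2 : ℂ)) * (x:ℂ) ^ 2).re = -(1/2) * x ^ 2 := by
        have : (-(1/2:ℂ)) * (x:ℂ)^2 = ((-(1/2) * x^2 : ℝ) : ℂ) := by push_cast; ring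
        rw [this, Complex.ofReal_re]
      rw [h1, h2, Real.exp_zero, one_mul]
  have hfx : ∀ x : ℝ, f x
      = ((Real.cos (l*x) * Real.exp (-x^2/2) : ℝ) : ℂ)
        + ((Real.sin (l*x) * Real.exp (-x^2/2) : ℝ) : ℂ) * Complex.I := by
    intro x
    show Complex.exp (Complex.I * l * x) * Complex.exp (-(1/2 : ℂ) * x ^ 2) = _
    have h1 : (Complex.I * l * x : ℂ) = ((l * x : ℝ) : ℂ) * Complex.I := by push_cast; ring
    have h2 : (-(1/2:ℂ) * (x:ℂ) ^ 2) = ((-x^2/2 : ℝ) : ℂ) := by push_cast; ring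
    rw [h1, h2, Complex.exp_mul_I, ← Complex.ofReal_exp, ← Complex.ofReal_cos,
      ← Complex.ofReal_sin]
    push_cast
    ring
  have hF : ∫ x : ℝ, f x = ((Real.pi : ℂ) / (1/2 : ℂ)) ^ (1/2 : ℂ)
      * Complex.exp (-(l:ℂ)^2 / (4 * (1/2 : ℂ))) :=
    fourierIntegral_gaussian (by norm_num) (l : ℂ)
  have hrhs : ((Real.pi : ℂ) / (1/2 : ℂ)) ^ (1/2 : ℂ)
      * Complex.exp (-(l:ℂ)^2 / (4 * (1/2 : ℂ)))
      = ((Real.sqrt (2*Real.pi) * Real.exp (-l^2/2) : ℝ) : ℂ) := by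
    have h1 : ((Real.pi : ℂ) / (1/2:ℂ)) = ((2*Real.pi : ℝ) : ℂ) := by push_cast; ring
    have h2 : ((2*Real.pi:ℝ):ℂ) ^ (1/2:ℂ) = ((Real.sqrt (2*Real.pi) : ℝ) : ℂ) := by
      rw [show ((1/2 : ℂ)) = (((1/2 : ℝ) : ℝ) : ℂ) by norm_num,
        ← Complex.ofReal_cpow (by positivity)]
      exact_mod_cast congrArg Complex.ofReal (Real.sqrt_eq_rpow (2*Real.pi)).symm
    have h3 : Complex.exp (-(l:ℂ)^2 / (4 * (1/2:ℂ))) = ((Real.exp (-l^2/2) : ℝ) : ℂ) := by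
      rw [show (-(l:ℂ)^2 / (4 * (1/2:ℂ))) = ((-l^2/2 : ℝ) : ℂ) by push_cast; ring,
        ← Complex.ofReal_exp]
    rw [h1, h2, h3, ← Complex.ofReal_mul]
  rw [hrhs] at hF
  have hre : ∫ x, (f x).re = ((Real.sqrt (2*Real.pi) * Real.exp (-l^2/2) : ℝ) : ℂ).re := by
    rw [← hF]
    exact Complex.reCLM.integral_comp_comm hint
  have him : ∫ x, (f x).im = ((Real.sqrt (2*Real.pi) * Real.exp (-l^2/2) : ℝ) : ℂ).im := by
    rw [← hF]
    exact Complex.imCLM.integral_comp_comm hint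
  simp_rw [hfx] at hre him
  simp only [Complex.add_re, Complex.add_im, Complex.ofReal_re, Complex.ofReal_im,
    Complex.mul_re, Complex.mul_im, Complex.I_re, Complex.I_im, mul_zero, mul_one,
    zero_mul, sub_zero, zero_add, add_zero, zero_sub, neg_zero] at hre him
  -- hre : ∫ x, cos (l x) * exp (-x²/2) = √(2π) * exp (-l²/2)
  -- him : ∫ x, sin (l x) * exp (-x²/2) = 0
  have hs : Real.sqrt (2*Real.pi) ≠ 0 := by
    positivity
  constructor
  · rw [hγ]
    calc ∫ x, gaussianPDFReal 0 1 x * Real.cos (l * x)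
        = ∫ x, (Real.sqrt (2*Real.pi))⁻¹ * (Real.cos (l*x) * Real.exp (-x^2/2)) := by
          congr 1; funext x; rw [hpdf x]; ring
      _ = (Real.sqrt (2*Real.pi))⁻¹ * ∫ x, Real.cos (l*x) * Real.exp (-x^2/2) :=
          integral_const_mul _ _
      _ = Real.exp (-l^2/2) := by rw [hre]; field_simp
  · rw [hγ]
    calc ∫ x, gaussianPDFReal 0 1 x * Real.sin (l * x)
        = ∫ x, (Real.sqrt (2*Real.pi))⁻¹ * (Real.sin (l*x) * Real.exp (-x^2/2)) := by
          congr 1; funext x; rw [hpdf x]; ring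
      _ = (Real.sqrt (2*Real.pi))⁻¹ * ∫ x, Real.sin (l*x) * Real.exp (-x^2/2) :=
          integral_const_mul _ _
      _ = 0 := by rw [him]; ring

end TrigAux

end TrigAuxSec

open TrigAux in
/-- Trigonometric moments of a random variable close to a standard Gaussian in the
nonuniform Kolmogorov sense. -/
theorem trig_moments_near_gaussian
    {Ω : Type*} [MeasurableSpace Ω] (μ : Measure Ω) [IsProbabilityMeasure μ]
    (X : Ω → ℝ) (hX : Measurable X) (D : ℝ) (hD : 0 ≤ D)
    (hclose : ∀ x : ℝ,
      |(μ {ω | X ω ≤ x}).toReal - cdf (gaussianReal 0 1) x| ≤ D / (1 + x ^ 2))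
    (l : ℝ) :
    |(∫ ω, Real.cos (l * X ω) ∂μ) - Real.exp (-l ^ 2 / 2)| ≤ Real.pi * |l| * D ∧
    |∫ ω, Real.sin (l * X ω) ∂μ| ≤ Real.pi * |l| * D := by
  have hg := gauss_vals l
  set ν := μ.map X with hν
  haveI : IsProbabilityMeasure ν := Measure.isProbabilityMeasure_map hX.aemeasurable
  have hclose' : ∀ t : ℝ,
      |(ν (Set.Iic t)).toReal - ((gaussianReal 0 1) (Set.Iic t)).toReal| ≤ D / (1 + t ^ 2) := by
    intro t
    have h1 : ν (Set.Iic t) = μ {ω | X ω ≤ t} := by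
      rw [hν, Measure.map_apply hX measurableSet_Iic]
      rfl
    have h2 : ((gaussianReal 0 1) (Set.Iic t)).toReal = cdf (gaussianReal 0 1) t :=
      (cdf_eq_real _ t).symm
    rw [h1, h2]
    exact hclose t
  have hmapc : ∫ ω, Real.cos (l * X ω) ∂μ = ∫ x, Real.cos (l * x) ∂ν := by
    have hcc : Continuous fun x : ℝ => Real.cos (l * x) := by continuity
    rw [hν, integral_map hX.aemeasurable hcc.aestronglyMeasurable]
  have hmaps : ∫ ω, Real.sin (l * X ω) ∂μ = ∫ x, Real.sin (l * x) ∂ν := by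
    have hsc : Continuous fun x : ℝ => Real.sin (l * x) := by continuity
    rw [hν, integral_map hX.aemeasurable hsc.aestronglyMeasurable]
  have hdc : ∀ x : ℝ, HasDerivAt (fun t => Real.cos (l * t)) (-Real.sin (l * x) * l) x :=
    fun x => by simpa [Function.comp_def] using (Real.hasDerivAt_cos (l * x)).comp x ((hasDerivAt_id x).const_mul l)
  have hds : ∀ x : ℝ, HasDerivAt (fun t => Real.sin (l * t)) (Real.cos (l * x) * l) x :=
    fun x => by simpa [Function.comp_def] using (Real.hasDerivAt_sin (l * x)).comp x ((hasDerivAt_id x).const_mul l)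
  have hdcb : ∀ x : ℝ, |(-Real.sin (l * x) * l)| ≤ |l| := fun x => by
    rw [abs_mul, abs_neg]
    nlinarith [abs_nonneg l, abs_nonneg (Real.sin (l * x)), Real.abs_sin_le_one (l*x)]
  have hdsb : ∀ x : ℝ, |(Real.cos (l * x) * l)| ≤ |l| := fun x => by
    rw [abs_mul]
    nlinarith [abs_nonneg l, abs_nonneg (Real.cos (l * x)), Real.abs_cos_le_one (l * x)]
  have hdcc : Continuous fun x : ℝ => -Real.sin (l * x) * l :=
    ((Real.continuous_sin.comp (continuous_const.mul continuous_id)).neg).mul continuous_const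
  have hdsc : Continuous fun x : ℝ => Real.cos (l * x) * l :=
    (Real.continuous_cos.comp (continuous_const.mul continuous_id)).mul continuous_const
  have hcos := diff_bound ν (gaussianReal 0 1) hdc hdcc hdcb
    (fun x => Real.abs_cos_le_one (l * x)) hD hclose'
  have hsin := diff_bound ν (gaussianReal 0 1) hds hdsc hdsb
    (fun x => Real.abs_sin_le_one (l * x)) hD hclose'
  constructor
  · rw [hmapc, ← hg.1]
    exact hcos
  · rw [hmaps]
    have := hsin
    rw [hg.2, sub_zero] at this
    exact this
end

section
/- Let X be a real random variable and D ≥ 0 a constant such that |P(X ≤ x) − F_{N(0,1)}(x)| ≤ D/(1 + x²) for all real x. Then for all real a and all λ > 0: |e^{λ²/2} · E[cos(a + λX)] − cos(a)| ≤ 2π λ D e^{λ²/2}. That is, the exponentially bias-corrected cosine of a + λX estimates cos(a) with bias at most 2πλD e^{λ²/2}. -/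
open MeasureTheory ProbabilityTheory Real Set Filter Topology
open scoped NNReal ENNReal

lemma exp_re_aux (c d : ℝ) :
    (Complex.exp (Complex.ofReal c + Complex.ofReal d * Complex.I)).re
      = Real.exp c * Real.cos d := by
  rw [Complex.exp_re]; simp

lemma aux_complex (a l : ℝ) :
    ∫ x : ℝ, Real.exp (-x^2/2) * Real.cos (a + l * x) =
      Real.sqrt (2*π) * (Real.exp (-(l^2)/2) * Real.cos a) := by
  have hb : (-(1/2) : ℂ).re < 0 := by norm_num
  have key := integral_cexp_quadratic hb (Complex.I * l) (Complex.I * a)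
  have hint : Integrable (fun x : ℝ => Complex.exp (-(1/2) * x^2 + (Complex.I*l) * x + Complex.I*a)) := by
    have := integrable_cexp_quadratic (b := 1/2) (by norm_num) (Complex.I * l) (Complex.I * a)
    simpa using this
  have hre := integral_re hint
  simp only [RCLike.re_to_complex] at hre
  rw [key] at hre
  have hL : ∀ x : ℝ, (Complex.exp (-(1/2) * x^2 + (Complex.I*l) * x + Complex.I*a)).re
      = Real.exp (-x^2/2) * Real.cos (a + l * x) := by
    intro x
    have h1 : (-(1/2) * (x:ℂ)^2 + (Complex.I*l) * x + Complex.I*a) =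
        Complex.ofReal (-x^2/2) + Complex.ofReal (a + l*x) * Complex.I := by
      push_cast; ring
    rw [h1, exp_re_aux]
  simp_rw [hL] at hre
  rw [hre]
  have h2π : ((π:ℂ) / - -(1/2)) = ((2*π : ℝ) : ℂ) := by push_cast; ring
  rw [h2π]
  have h2πpos : (0:ℝ) ≤ 2*π := by positivity
  have hsq : ((2*π : ℝ) : ℂ) ^ (1/2 : ℂ) = (Real.sqrt (2*π) : ℂ) := by
    have h := Complex.ofReal_cpow h2πpos (1/2)
    rw [Real.sqrt_eq_rpow, h]
    norm_num
  rw [hsq]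
  have hexp : (Complex.I*(a:ℂ) - (Complex.I*l)^2 / (4 * -(1/2))) =
      Complex.ofReal (-(l^2)/2) + Complex.ofReal a * Complex.I := by
    have h2 : (Complex.I*(l:ℂ))^2 = Complex.I^2 * (l:ℂ)^2 := by ring
    rw [h2, Complex.I_sq]
    push_cast
    ring
  rw [hexp, Complex.re_ofReal_mul, exp_re_aux]

lemma gauss_cos (a l : ℝ) :
    ∫ x, Real.cos (a + l * x) ∂(gaussianReal 0 1) =
      Real.exp (-(l^2)/2) * Real.cos a := by
  rw [gaussianReal_of_var_ne_zero 0 one_ne_zero]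
  have hmeas : Measurable fun x => Real.toNNReal (gaussianPDFReal 0 1 x) :=
    (measurable_gaussianPDFReal 0 1).real_toNNReal
  have hpdf : (gaussianPDF 0 1) = fun x => ((Real.toNNReal (gaussianPDFReal 0 1 x) : ℝ≥0) : ℝ≥0∞) := rfl
  rw [hpdf, integral_withDensity_eq_integral_smul hmeas]
  have hsm : ∀ x : ℝ, (Real.toNNReal (gaussianPDFReal 0 1 x) : ℝ≥0) • Real.cos (a + l * x)
      = (Real.sqrt (2*π))⁻¹ * (Real.exp (-x^2/2) * Real.cos (a + l*x)) := by
    intro x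
    rw [NNReal.smul_def, Real.coe_toNNReal _ (gaussianPDFReal_nonneg 0 1 x)]
    rw [gaussianPDFReal_def, smul_eq_mul]
    push_cast
    ring_nf
  simp_rw [hsm]
  rw [integral_const_mul, aux_complex]
  rw [← mul_assoc, inv_mul_cancel₀ (by positivity)]
  ring

lemma cos_repr {Ω : Type*} [MeasurableSpace Ω] (μ : Measure Ω) [IsProbabilityMeasure μ]
    (X : Ω → ℝ) (hX : Measurable X) (a l : ℝ)
    (G : ℝ → ℝ) (hG : Integrable G)
    (hGb : ∀ t : ℝ, (if 0 < t then ((μ.map X) (Set.Ici t)).toReal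
        else ((μ.map X) (Set.Iio t)).toReal) ≤ G t) :
    ((∫ ω, Real.cos (a + l * X ω) ∂μ) = Real.cos a
        + ∫ t, (-l * Real.sin (a + l * t)) *
            (if 0 < t then ((μ.map X) (Set.Ici t)).toReal else -((μ.map X) (Set.Iio t)).toReal))
      ∧ Integrable (fun t => (-l * Real.sin (a + l * t)) *
            (if 0 < t then ((μ.map X) (Set.Ici t)).toReal else -((μ.map X) (Set.Iio t)).toReal)) := by
  set ν := μ.map X with hν
  haveI : IsProbabilityMeasure ν := Measure.isProbabilityMeasure_map hX.aemeasurable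
  set h : ℝ → ℝ := fun t => -l * Real.sin (a + l * t) with hh_def
  have hh : Continuous h := by fun_prop
  have hhb : ∀ t, |h t| ≤ |l| := by
    intro t
    rw [hh_def, abs_mul, abs_neg]
    calc |l| * |Real.sin (a + l*t)| ≤ |l| * 1 :=
      mul_le_mul_of_nonneg_left (Real.abs_sin_le_one _) (abs_nonneg l)
    _ = |l| := mul_one _
  set k : Ω → ℝ → ℝ := fun ω t =>
    (Set.Ioc 0 (X ω)).indicator h t - (Set.Ioc (X ω) 0).indicator h t with hk_def
  set W : ℝ → ℝ := fun t =>
    if 0 < t then (ν (Set.Ici t)).toReal else -((ν (Set.Iio t)).toReal) with hW_def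
  set A : Set (Ω × ℝ) := {p | 0 < p.2 ∧ p.2 ≤ X p.1} with hA_def
  set B : Set (Ω × ℝ) := {p | X p.1 < p.2 ∧ p.2 ≤ 0} with hB_def
  have hAm : MeasurableSet A :=
    (measurableSet_lt measurable_const measurable_snd).inter
      (measurableSet_le measurable_snd (hX.comp measurable_fst))
  have hBm : MeasurableSet B :=
    (measurableSet_lt (hX.comp measurable_fst) measurable_snd).inter
      (measurableSet_le measurable_snd measurable_const)
  have hk_eq : Function.uncurry k = fun p : Ω × ℝ =>
      A.indicator (fun q => h q.2) p - B.indicator (fun q => h q.2) p := by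
    funext p
    simp only [Function.uncurry, hk_def, Set.indicator_apply, Set.mem_Ioc, hA_def, hB_def,
      Set.mem_setOf_eq]
  have hk_meas : Measurable (Function.uncurry k) := by
    rw [hk_eq]
    exact ((hh.measurable.comp measurable_snd).indicator hAm).sub
      ((hh.measurable.comp measurable_snd).indicator hBm)
  have hG0 : ∀ t, 0 ≤ G t := fun t => le_trans (by positivity) (hGb t)
  have hinner : ∀ t : ℝ, (∫⁻ ω, ‖k ω t‖₊ ∂μ) ≤ ENNReal.ofReal (|l| * G t) := by
    intro t
    have h1 : (‖h t‖₊ : ℝ≥0∞) ≤ ENNReal.ofReal |l| := by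
      rw [← enorm_eq_nnnorm, Real.enorm_eq_ofReal_abs]
      exact ENNReal.ofReal_le_ofReal (hhb t)
    by_cases ht : 0 < t
    · have hkt : (fun ω => (‖k ω t‖₊ : ℝ≥0∞))
          = fun ω => (X ⁻¹' Set.Ici t).indicator (fun _ => (‖h t‖₊ : ℝ≥0∞)) ω := by
        funext ω
        by_cases hx : t ≤ X ω <;>
          simp [hk_def, Set.indicator_apply, Set.mem_Ioc, ht, hx, not_le.2 ht]
      rw [hkt, lintegral_indicator_const (hX measurableSet_Ici)]
      have h2 : μ (X ⁻¹' Set.Ici t) ≤ ENNReal.ofReal (G t) := by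
        have hb := hGb t
        rw [if_pos ht] at hb
        rw [show μ (X ⁻¹' Set.Ici t) = ν (Set.Ici t) from (Measure.map_apply hX measurableSet_Ici).symm]
        calc ν (Set.Ici t) = ENNReal.ofReal ((ν (Set.Ici t)).toReal) :=
          (ENNReal.ofReal_toReal (measure_ne_top _ _)).symm
        _ ≤ ENNReal.ofReal (G t) := ENNReal.ofReal_le_ofReal hb
      calc (‖h t‖₊ : ℝ≥0∞) * μ (X ⁻¹' Set.Ici t) ≤ ENNReal.ofReal |l| * ENNReal.ofReal (G t) :=
        mul_le_mul' h1 h2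
      _ = ENNReal.ofReal (|l| * G t) := (ENNReal.ofReal_mul (abs_nonneg l)).symm
    · have hkt : (fun ω => (‖k ω t‖₊ : ℝ≥0∞))
          = fun ω => (X ⁻¹' Set.Iio t).indicator (fun _ => (‖h t‖₊ : ℝ≥0∞)) ω := by
        funext ω
        by_cases hx : X ω < t <;>
          simp [hk_def, Set.indicator_apply, Set.mem_Ioc, ht, hx, not_lt.1 ht]
      rw [hkt, lintegral_indicator_const (hX measurableSet_Iio)]
      have h2 : μ (X ⁻¹' Set.Iio t) ≤ ENNReal.ofReal (G t) := by
        have hb := hGb t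
        rw [if_neg ht] at hb
        rw [show μ (X ⁻¹' Set.Iio t) = ν (Set.Iio t) from (Measure.map_apply hX measurableSet_Iio).symm]
        calc ν (Set.Iio t) = ENNReal.ofReal ((ν (Set.Iio t)).toReal) :=
          (ENNReal.ofReal_toReal (measure_ne_top _ _)).symm
        _ ≤ ENNReal.ofReal (G t) := ENNReal.ofReal_le_ofReal hb
      calc (‖h t‖₊ : ℝ≥0∞) * μ (X ⁻¹' Set.Iio t) ≤ ENNReal.ofReal |l| * ENNReal.ofReal (G t) :=
        mul_le_mul' h1 h2
      _ = ENNReal.ofReal (|l| * G t) := (ENNReal.ofReal_mul (abs_nonneg l)).symm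
  have hk_int : Integrable (Function.uncurry k) (μ.prod volume) := by
    refine ⟨hk_meas.aestronglyMeasurable, ?_⟩
    show (∫⁻ p, (‖Function.uncurry k p‖₊ : ℝ≥0∞) ∂(μ.prod volume)) < ⊤
    rw [lintegral_prod_symm' (fun p => (‖Function.uncurry k p‖₊ : ℝ≥0∞)) hk_meas.nnnorm.coe_nnreal_ennreal]
    calc ∫⁻ t, ∫⁻ ω, (‖Function.uncurry k (ω, t)‖₊ : ℝ≥0∞) ∂μ
        ≤ ∫⁻ t, ENNReal.ofReal (|l| * G t) := lintegral_mono hinner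
    _ < ⊤ := (hG.const_mul |l|).lintegral_lt_top
  have hFTC : ∀ x : ℝ, (∫ t, ((Set.Ioc (0:ℝ) x).indicator h t - (Set.Ioc x (0:ℝ)).indicator h t))
      = Real.cos (a + l*x) - Real.cos a := by
    intro x
    have i1 : Integrable ((Set.Ioc (0:ℝ) x).indicator h) :=
      (integrable_indicator_iff measurableSet_Ioc).2 (hh.integrableOn_Ioc)
    have i2 : Integrable ((Set.Ioc x (0:ℝ)).indicator h) :=
      (integrable_indicator_iff measurableSet_Ioc).2 (hh.integrableOn_Ioc)
    rw [integral_sub i1 i2, integral_indicator measurableSet_Ioc, integral_indicator measurableSet_Ioc]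
    have hii : (∫ t in Set.Ioc 0 x, h t) - (∫ t in Set.Ioc x 0, h t) = ∫ t in (0:ℝ)..x, h t := rfl
    rw [hii]
    have hderiv : ∀ t ∈ Set.uIcc (0:ℝ) x, HasDerivAt (fun u => Real.cos (a + l*u)) (h t) t := by
      intro t _
      have h1 : HasDerivAt (fun u : ℝ => a + l*u) l t := by
        simpa using ((hasDerivAt_id t).const_mul l).const_add a
      have h2 := (Real.hasDerivAt_cos (a + l*t)).comp t h1
      have h3 : HasDerivAt (fun u => Real.cos (a + l*u)) (-Real.sin (a + l*t) * l) t := h2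
      simpa [hh_def, mul_comm] using h3
    rw [intervalIntegral.integral_eq_sub_of_hasDerivAt hderiv (hh.intervalIntegrable 0 x)]
    simp
  have hcosint : Integrable (fun ω => Real.cos (a + l * X ω)) μ := by
    refine Integrable.mono' (integrable_const 1) ?_ (ae_of_all _ fun ω => ?_)
    · exact ((Real.continuous_cos.comp
        (continuous_const.add (continuous_const.mul continuous_id))).measurable.comp
          hX).aestronglyMeasurable
    · simpa using Real.abs_cos_le_one _
  have hRt : ∀ t : ℝ, (∫ ω, k ω t ∂μ) = h t * W t := by
    intro t
    by_cases ht : 0 < t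
    · have hke : (fun ω => k ω t) = fun ω => (X ⁻¹' Set.Ici t).indicator (fun _ => h t) ω := by
        funext ω
        by_cases hx : t ≤ X ω <;>
          simp [hk_def, Set.indicator_apply, Set.mem_Ioc, ht, hx, not_le.2 ht]
      rw [hke, integral_indicator_const (h t) (hX measurableSet_Ici), hW_def]
      simp only [if_pos ht]
      rw [show μ.real (X ⁻¹' Set.Ici t) = (ν (Set.Ici t)).toReal from
          congrArg ENNReal.toReal (Measure.map_apply hX measurableSet_Ici).symm,
        smul_eq_mul, mul_comm]
    · have hke : (fun ω => k ω t) = fun ω => -((X ⁻¹' Set.Iio t).indicator (fun _ => h t) ω) := by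
        funext ω
        by_cases hx : X ω < t <;>
          simp [hk_def, Set.indicator_apply, Set.mem_Ioc, ht, hx, not_lt.1 ht]
      rw [hke, integral_neg, integral_indicator_const (h t) (hX measurableSet_Iio), hW_def]
      simp only [if_neg ht]
      rw [show μ.real (X ⁻¹' Set.Iio t) = (ν (Set.Iio t)).toReal from
          congrArg ENNReal.toReal (Measure.map_apply hX measurableSet_Iio).symm,
        smul_eq_mul]
      ring
  have hswap := integral_integral_swap (f := k) hk_int
  have hL : (∫ ω, ∫ t, k ω t ∂volume ∂μ) = (∫ ω, Real.cos (a + l * X ω) ∂μ) - Real.cos a := by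
    have hptw : ∀ ω, (∫ t, k ω t ∂volume) = Real.cos (a + l * X ω) - Real.cos a :=
      fun ω => hFTC (X ω)
    rw [integral_congr_ae (ae_of_all _ hptw), integral_sub hcosint (integrable_const _),
      integral_const]
    simp
  have hR : (∫ t, ∫ ω, k ω t ∂μ ∂volume) = ∫ t, h t * W t ∂volume :=
    integral_congr_ae (ae_of_all _ hRt)
  constructor
  · rw [hL, hR] at hswap
    linarith
  · have hi := hk_int.integral_prod_right
    exact hi.congr (ae_of_all _ fun t => hRt t)

-- Iio version of closeness
lemma E1 {Ω : Type*} [MeasurableSpace Ω] (μ : Measure Ω) [IsProbabilityMeasure μ]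
    (X : Ω → ℝ) (hX : Measurable X) (D : ℝ)
    (hclose : ∀ x : ℝ,
      |(μ {ω | X ω ≤ x}).toReal - cdf (gaussianReal 0 1) x| ≤ D / (1 + x ^ 2)) (t : ℝ) :
    |((μ.map X) (Set.Iio t)).toReal - ((gaussianReal 0 1) (Set.Iio t)).toReal| ≤ D / (1 + t ^ 2) := by
  set ν := μ.map X with hν
  set γ := gaussianReal 0 1 with hγ
  haveI : IsProbabilityMeasure ν := Measure.isProbabilityMeasure_map hX.aemeasurable
  set s : ℕ → ℝ := fun n => t - 1/(n+1) with hs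
  have hslt : ∀ n, s n < t := by
    intro n
    have : (0:ℝ) < 1/(n+1) := by positivity
    simp only [hs]; linarith
  have hmono : Monotone fun n => Set.Iic (s n) := by
    intro n m hnm
    apply Set.Iic_subset_Iic.2
    have h1 : (1:ℝ)/(m+1) ≤ 1/(n+1) := by
      apply one_div_le_one_div_of_le (by positivity)
      exact_mod_cast by omega
    simp only [hs]; linarith
  have hUnion : (⋃ n, Set.Iic (s n)) = Set.Iio t := by
    ext x
    simp only [Set.mem_iUnion, Set.mem_Iic, Set.mem_Iio]
    constructor
    · rintro ⟨n, hn⟩; exact lt_of_le_of_lt hn (hslt n)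
    · intro hx
      obtain ⟨n, hn⟩ := exists_nat_one_div_lt (sub_pos.2 hx)
      exact ⟨n, by simp only [hs]; linarith⟩
  have htend : ∀ (m : Measure ℝ) [IsProbabilityMeasure m],
      Tendsto (fun n => (m (Set.Iic (s n))).toReal) atTop (𝓝 ((m (Set.Iio t)).toReal)) := by
    intro m _
    have h0 := tendsto_measure_iUnion_atTop (μ := m) hmono
    rw [hUnion] at h0
    exact (ENNReal.tendsto_toReal (measure_ne_top _ _)).comp h0
  have hst : Tendsto s atTop (𝓝 t) := by
    have h1 : Tendsto (fun n : ℕ => (1:ℝ)/(n+1)) atTop (𝓝 0) :=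
      tendsto_one_div_add_atTop_nhds_zero_nat
    have := tendsto_const_nhds (α := ℕ) (x := t) |>.sub h1
    simpa [hs, one_div] using this
  have hC : Tendsto (fun n => D / (1 + (s n)^2)) atTop (𝓝 (D / (1 + t^2))) := by
    have hcont : Continuous fun x : ℝ => D / (1 + x^2) :=
      continuous_const.div (by continuity) (fun x => by positivity)
    exact (hcont.tendsto t).comp hst
  have hseq : ∀ n, |(ν (Set.Iic (s n))).toReal - (γ (Set.Iic (s n))).toReal| ≤ D / (1 + (s n)^2) := by
    intro n
    have := hclose (s n)
    rw [cdf_eq_real] at this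
    rw [show μ {ω | X ω ≤ s n} = ν (Set.Iic (s n)) from
      (Measure.map_apply hX measurableSet_Iic).symm] at this
    exact this
  have hA : Tendsto (fun n => |(ν (Set.Iic (s n))).toReal - (γ (Set.Iic (s n))).toReal|) atTop
      (𝓝 |(ν (Set.Iio t)).toReal - (γ (Set.Iio t)).toReal|) :=
    ((htend ν).sub (htend γ)).abs
  exact le_of_tendsto_of_tendsto hA hC (Eventually.of_forall hseq)

lemma gauss_no_atom (t : ℝ) : (gaussianReal 0 1) {t} = 0 :=
  gaussianReal_absolutelyContinuous 0 one_ne_zero (measure_singleton t)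

lemma gauss_Iio_eq_Iic (t : ℝ) : (gaussianReal 0 1) (Set.Iio t) = (gaussianReal 0 1) (Set.Iic t) := by
  rw [← Set.Iio_union_right]
  refine le_antisymm (measure_mono Set.subset_union_left) ?_
  refine (measure_union_le _ _).trans ?_
  rw [gauss_no_atom, add_zero]

lemma pdf_le_exp_neg (x : ℝ) : gaussianPDFReal 0 1 x ≤ (Real.sqrt (2*π))⁻¹ * (Real.exp (1/2) * Real.exp (-x)) := by
  rw [gaussianPDFReal_def]
  simp only [NNReal.coe_one, mul_one, sub_zero]
  rw [← Real.exp_add]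
  apply mul_le_mul_of_nonneg_left _ (by positivity)
  apply Real.exp_le_exp.2
  nlinarith [sq_nonneg (x - 1)]

lemma pdf_le_exp_pos (x : ℝ) : gaussianPDFReal 0 1 x ≤ (Real.sqrt (2*π))⁻¹ * (Real.exp (1/2) * Real.exp x) := by
  rw [gaussianPDFReal_def]
  simp only [NNReal.coe_one, mul_one, sub_zero]
  rw [← Real.exp_add]
  apply mul_le_mul_of_nonneg_left _ (by positivity)
  apply Real.exp_le_exp.2
  nlinarith [sq_nonneg (x + 1)]

lemma gauss_tail_Ici (t : ℝ) :
    ((gaussianReal 0 1) (Set.Ici t)).toReal ≤ (Real.sqrt (2*π))⁻¹ * Real.exp (1/2) * Real.exp (-t) := by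
  rw [gaussianReal_apply_eq_integral 0 one_ne_zero, ENNReal.toReal_ofReal
    (setIntegral_nonneg measurableSet_Ici (fun x _ => gaussianPDFReal_nonneg 0 1 x))]
  have hint : IntegrableOn (fun x => (Real.sqrt (2*π))⁻¹ * (Real.exp (1/2) * Real.exp (-x)))
      (Set.Ici t) volume := by
    rw [integrableOn_Ici_iff_integrableOn_Ioi]
    have h0 : IntegrableOn (fun x => ((Real.sqrt (2*π))⁻¹ * Real.exp (1/2)) * Real.exp (-1*x))
        (Set.Ioi t) volume :=
      (exp_neg_integrableOn_Ioi t (one_pos)).const_mul ((Real.sqrt (2*π))⁻¹ * Real.exp (1/2))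
    refine IntegrableOn.congr_fun h0 (fun x _ => by rw [neg_one_mul]; ring) measurableSet_Ioi
  calc (∫ x in Set.Ici t, gaussianPDFReal 0 1 x)
      ≤ ∫ x in Set.Ici t, (Real.sqrt (2*π))⁻¹ * (Real.exp (1/2) * Real.exp (-x)) := by
        apply setIntegral_mono ((integrable_gaussianPDFReal 0 1).integrableOn) hint
        exact fun x => pdf_le_exp_neg x
    _ = (Real.sqrt (2*π))⁻¹ * Real.exp (1/2) * Real.exp (-t) := by
        rw [MeasureTheory.integral_Ici_eq_integral_Ioi]
        rw [show (fun x => (Real.sqrt (2*π))⁻¹ * (Real.exp (1/2) * Real.exp (-x)))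
          = fun x => ((Real.sqrt (2*π))⁻¹ * Real.exp (1/2)) * Real.exp (-x) from by funext x; ring]
        rw [integral_const_mul, integral_exp_neg_Ioi]

lemma gauss_tail_Iic (t : ℝ) :
    ((gaussianReal 0 1) (Set.Iic t)).toReal ≤ (Real.sqrt (2*π))⁻¹ * Real.exp (1/2) * Real.exp t := by
  rw [gaussianReal_apply_eq_integral 0 one_ne_zero, ENNReal.toReal_ofReal
    (setIntegral_nonneg measurableSet_Iic (fun x _ => gaussianPDFReal_nonneg 0 1 x))]
  have hint : IntegrableOn (fun x => (Real.sqrt (2*π))⁻¹ * (Real.exp (1/2) * Real.exp x))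
      (Set.Iic t) volume := by
    have h0 : IntegrableOn (fun x => ((Real.sqrt (2*π))⁻¹ * Real.exp (1/2)) * Real.exp x)
        (Set.Iic t) volume :=
      (integrableOn_exp_Iic t).const_mul ((Real.sqrt (2*π))⁻¹ * Real.exp (1/2))
    exact IntegrableOn.congr_fun h0 (fun x _ => by ring) measurableSet_Iic
  calc (∫ x in Set.Iic t, gaussianPDFReal 0 1 x)
      ≤ ∫ x in Set.Iic t, (Real.sqrt (2*π))⁻¹ * (Real.exp (1/2) * Real.exp x) := by
        apply setIntegral_mono ((integrable_gaussianPDFReal 0 1).integrableOn) hint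
        exact fun x => pdf_le_exp_pos x
    _ = (Real.sqrt (2*π))⁻¹ * Real.exp (1/2) * Real.exp t := by
        rw [show (fun x => (Real.sqrt (2*π))⁻¹ * (Real.exp (1/2) * Real.exp x))
          = fun x => ((Real.sqrt (2*π))⁻¹ * Real.exp (1/2)) * Real.exp x from by funext x; ring]
        rw [integral_const_mul, integral_exp_Iic]

lemma integrable_exp_neg_abs' : Integrable (fun t : ℝ => Real.exp (-|t|)) := by
  have h1 : IntegrableOn (fun t : ℝ => Real.exp (-|t|)) (Set.Iic 0) volume := by
    refine IntegrableOn.congr_fun (integrableOn_exp_Iic 0) (fun x hx => ?_) measurableSet_Iic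
    rw [abs_of_nonpos hx, neg_neg]
  have h2 : IntegrableOn (fun t : ℝ => Real.exp (-|t|)) (Set.Ioi 0) volume := by
    refine IntegrableOn.congr_fun (exp_neg_integrableOn_Ioi 0 one_pos) (fun x hx => ?_) measurableSet_Ioi
    rw [neg_one_mul, abs_of_pos hx]
  have := h1.union h2
  rwa [Set.Iic_union_Ioi, integrableOn_univ] at this

/-- Bias of the exponentially corrected cosine statistic for a random variable close to a
standard Gaussian in the nonuniform Kolmogorov sense. -/
theorem bias_corrected_cosine_near_gaussian
    {Ω : Type*} [MeasurableSpace Ω] (μ : Measure Ω) [IsProbabilityMeasure μ]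
    (X : Ω → ℝ) (hX : Measurable X) (D : ℝ) (hD : 0 ≤ D)
    (hclose : ∀ x : ℝ,
      |(μ {ω | X ω ≤ x}).toReal - cdf (gaussianReal 0 1) x| ≤ D / (1 + x ^ 2))
    (a l : ℝ) (hl : 0 < l) :
    |Real.exp (l ^ 2 / 2) * (∫ ω, Real.cos (a + l * X ω) ∂μ) - Real.cos a|
      ≤ 2 * Real.pi * l * D * Real.exp (l ^ 2 / 2) := by
  set γ := gaussianReal 0 1 with hγdef
  set ν := μ.map X with hνdef
  haveI : IsProbabilityMeasure ν := Measure.isProbabilityMeasure_map hX.aemeasurable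
  set C : ℝ := (Real.sqrt (2*π))⁻¹ * Real.exp (1/2) with hC
  have hCpos : 0 ≤ C := by rw [hC]; positivity
  set Gγ : ℝ → ℝ := fun t => C * Real.exp (-|t|) with hGγdef
  have hGγint : Integrable Gγ := integrable_exp_neg_abs'.const_mul C
  have haux : ∀ (m : Measure ℝ) [IsProbabilityMeasure m], ∀ t : ℝ,
      (m (Set.Ici t)).toReal = 1 - (m (Set.Iio t)).toReal := by
    intro m _ t
    have h0 := measure_add_measure_compl (μ := m) (measurableSet_Iio (a := t))
    rw [compl_Iio, measure_univ] at h0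
    have h1 := congrArg ENNReal.toReal h0
    rw [ENNReal.toReal_add (measure_ne_top _ _) (measure_ne_top _ _)] at h1
    simp at h1
    linarith
  have hcl : ∀ t : ℝ, |(ν (Set.Iio t)).toReal - (γ (Set.Iio t)).toReal| ≤ D * (1 + t^2)⁻¹ := by
    intro t
    have := E1 μ X hX D hclose t
    rwa [div_eq_mul_inv] at this
  have hGγb : ∀ t : ℝ, (if 0 < t then (γ (Set.Ici t)).toReal else (γ (Set.Iio t)).toReal) ≤ Gγ t := by
    intro t
    by_cases ht : 0 < t
    · rw [if_pos ht]
      have h1 := gauss_tail_Ici t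
      show (γ (Set.Ici t)).toReal ≤ C * Real.exp (-|t|)
      rw [abs_of_pos ht]
      calc (γ (Set.Ici t)).toReal ≤ (Real.sqrt (2*π))⁻¹ * Real.exp (1/2) * Real.exp (-t) := h1
      _ = C * Real.exp (-t) := by rw [hC]
    · rw [if_neg ht]
      show (γ (Set.Iio t)).toReal ≤ C * Real.exp (-|t|)
      rw [abs_of_nonpos (not_lt.1 ht), neg_neg]
      calc (γ (Set.Iio t)).toReal = (γ (Set.Iic t)).toReal := by rw [gauss_Iio_eq_Iic]
      _ ≤ (Real.sqrt (2*π))⁻¹ * Real.exp (1/2) * Real.exp t := gauss_tail_Iic t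
      _ = C * Real.exp t := by rw [hC]
  set Gν : ℝ → ℝ := fun t => Gγ t + D * (1+t^2)⁻¹ with hGνdef
  have hGνint : Integrable Gν := hGγint.add (integrable_inv_one_add_sq.const_mul D)
  have hGνb : ∀ t : ℝ, (if 0 < t then (ν (Set.Ici t)).toReal else (ν (Set.Iio t)).toReal) ≤ Gν t := by
    intro t
    have habs := abs_le.1 (hcl t)
    by_cases ht : 0 < t
    · rw [if_pos ht, haux ν t, hGνdef]
      have h2 := hGγb t
      rw [if_pos ht] at h2
      have h3 := haux γ t
      simp only []
      linarith [habs.1, habs.2]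
    · rw [if_neg ht, hGνdef]
      have h2 := hGγb t
      rw [if_neg ht] at h2
      simp only []
      linarith [habs.1, habs.2]
  obtain ⟨hrepν, hintν⟩ := cos_repr μ X hX a l Gν hGνint hGνb
  have hmapid : Measure.map id γ = γ := Measure.map_id
  obtain ⟨hrepγ, hintγ⟩ := cos_repr γ id measurable_id a l Gγ hGγint
    (by intro t; rw [hmapid]; exact hGγb t)
  rw [hmapid] at hrepγ hintγ
  simp only [id_eq] at hrepγ
  have hgv : ∫ x, Real.cos (a + l * x) ∂γ = Real.exp (-(l^2)/2) * Real.cos a := gauss_cos a l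
  set Iν : ℝ := ∫ t, (-l * Real.sin (a + l * t)) *
      (if 0 < t then (ν (Set.Ici t)).toReal else -((ν (Set.Iio t)).toReal)) with hIν
  set Iγ : ℝ := ∫ t, (-l * Real.sin (a + l * t)) *
      (if 0 < t then (γ (Set.Ici t)).toReal else -((γ (Set.Iio t)).toReal)) with hIγ
  have hdiff : |Iν - Iγ| ≤ l * D * π := by
    rw [hIν, hIγ, ← integral_sub hintν hintγ]
    have hb : ∀ t : ℝ, ‖((-l * Real.sin (a + l * t)) *
        (if 0 < t then (ν (Set.Ici t)).toReal else -((ν (Set.Iio t)).toReal)))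
        - ((-l * Real.sin (a + l * t)) *
        (if 0 < t then (γ (Set.Ici t)).toReal else -((γ (Set.Iio t)).toReal)))‖
        ≤ (l * D) * (1 + t^2)⁻¹ := by
      intro t
      have hW : |(if 0 < t then (ν (Set.Ici t)).toReal else -((ν (Set.Iio t)).toReal))
          - (if 0 < t then (γ (Set.Ici t)).toReal else -((γ (Set.Iio t)).toReal))|
          ≤ D * (1 + t^2)⁻¹ := by
        by_cases ht : 0 < t
        · simp only [if_pos ht]
          rw [haux ν t, haux γ t, show (1 - (ν (Set.Iio t)).toReal) - (1 - (γ (Set.Iio t)).toReal)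
            = -((ν (Set.Iio t)).toReal - (γ (Set.Iio t)).toReal) from by ring, abs_neg]
          exact hcl t
        · simp only [if_neg ht]
          rw [show -((ν (Set.Iio t)).toReal) - -((γ (Set.Iio t)).toReal)
            = -((ν (Set.Iio t)).toReal - (γ (Set.Iio t)).toReal) from by ring, abs_neg]
          exact hcl t
      have hsin : |(-l * Real.sin (a + l * t))| ≤ l := by
        rw [abs_mul, abs_neg, abs_of_pos hl]
        calc l * |Real.sin (a + l*t)| ≤ l * 1 :=
          mul_le_mul_of_nonneg_left (Real.abs_sin_le_one _) hl.le
        _ = l := mul_one _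
      rw [show ((-l * Real.sin (a + l * t)) *
          (if 0 < t then (ν (Set.Ici t)).toReal else -((ν (Set.Iio t)).toReal)))
          - ((-l * Real.sin (a + l * t)) *
          (if 0 < t then (γ (Set.Ici t)).toReal else -((γ (Set.Iio t)).toReal)))
          = (-l * Real.sin (a + l * t)) *
            ((if 0 < t then (ν (Set.Ici t)).toReal else -((ν (Set.Iio t)).toReal))
            - (if 0 < t then (γ (Set.Ici t)).toReal else -((γ (Set.Iio t)).toReal))) from by ring]
      rw [Real.norm_eq_abs, abs_mul, mul_assoc]
      exact mul_le_mul hsin hW (abs_nonneg _) hl.le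
    have h0 := norm_integral_le_of_norm_le ((integrable_inv_one_add_sq).const_mul (l*D))
      (ae_of_all _ hb)
    rw [Real.norm_eq_abs] at h0
    calc |∫ t, _| ≤ ∫ t : ℝ, (l * D) * (1 + t^2)⁻¹ := h0
    _ = (l * D) * π := by rw [integral_const_mul, integral_univ_inv_one_add_sq]
    _ = l * D * π := by ring
  have hexpinv : Real.exp (l^2/2) * Real.exp (-(l^2)/2) = 1 := by
    rw [← Real.exp_add, show l^2/2 + -(l^2)/2 = 0 from by ring, Real.exp_zero]
  have hIγval : Iγ = Real.exp (-(l^2)/2) * Real.cos a - Real.cos a := by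
    rw [hrepγ] at hgv
    linarith
  have hkey : Real.exp (l^2/2) * (∫ ω, Real.cos (a + l * X ω) ∂μ) - Real.cos a
      = Real.exp (l^2/2) * (Iν - Iγ) := by
    rw [hrepν, hIγval]
    linear_combination (Real.cos a) * hexpinv
  rw [hkey, abs_mul, abs_of_pos (Real.exp_pos _)]
  calc Real.exp (l^2/2) * |Iν - Iγ| ≤ Real.exp (l^2/2) * (l * D * π) :=
    mul_le_mul_of_nonneg_left hdiff (Real.exp_pos _).le
  _ ≤ 2 * Real.pi * l * D * Real.exp (l ^ 2 / 2) := by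
    nlinarith [Real.pi_pos, Real.exp_pos (l^2/2), hl.le, hD,
      mul_nonneg (mul_nonneg hl.le hD) Real.pi_pos.le]
end

section
/- Let X be a real random variable and D ≥ 0 a constant such that |P(X ≤ x) − F_{N(0,1)}(x)| ≤ D/(1 + x²) for all real x. Then for all real a and all λ > 0: Var(e^{λ²/2} cos(a + λX)) ≤ (λ² + 6π λ D) · e^{λ²}. -/
open MeasureTheory ProbabilityTheory Set Real Complex
open scoped NNReal ENNReal

noncomputable section

namespace VBCC

/-- The gaussian cosine integral. -/
lemma gauss_cos (b t : ℝ) :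
    ∫ y, Real.cos (b + t * y) ∂(gaussianReal 0 1) = Real.cos b * Real.exp (-(t ^ 2) / 2) := by
  have h2pi : (0:ℝ) < 2 * π := by positivity
  rw [gaussianReal_of_var_ne_zero 0 one_ne_zero]
  have hpdf : gaussianPDF 0 1 = fun x => ((Real.toNNReal (gaussianPDFReal 0 1 x) : ℝ≥0) : ℝ≥0∞) := by
    funext x; rfl
  rw [hpdf, integral_withDensity_eq_integral_smul
    ((measurable_gaussianPDFReal 0 1).real_toNNReal) _]
  have hpdfval : ∀ x : ℝ, gaussianPDFReal 0 1 x
      = (Real.sqrt (2 * π))⁻¹ * Real.exp (-(x ^ 2) / 2) := by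
    intro x
    rw [gaussianPDFReal_def]
    norm_num
  have hsmul : ∀ x : ℝ, (Real.toNNReal (gaussianPDFReal 0 1 x) : ℝ≥0) • Real.cos (b + t * x)
      = (Real.sqrt (2 * π))⁻¹ * (Real.exp (-(x ^ 2) / 2) * Real.cos (b + t * x)) := by
    intro x
    rw [NNReal.smul_def, smul_eq_mul, Real.coe_toNNReal _ (gaussianPDFReal_nonneg 0 1 x),
      hpdfval x, mul_assoc]
  simp only [hsmul]
  rw [integral_const_mul]
  -- the complex integral
  have hre : ∀ x : ℝ, Real.exp (-(x ^ 2) / 2) * Real.cos (b + t * x)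
      = (Complex.exp ((-(1/2) : ℂ) * (x:ℂ) ^ 2 + ((t : ℂ) * Complex.I) * (x:ℂ)
          + (b : ℂ) * Complex.I)).re := by
    intro x
    have : (-(1/2) : ℂ) * (x:ℂ) ^ 2 + ((t : ℂ) * Complex.I) * (x:ℂ) + (b : ℂ) * Complex.I
        = ((-(x ^ 2) / 2 : ℝ) : ℂ) + ((b + t * x : ℝ) : ℂ) * Complex.I := by
      push_cast; ring
    rw [this, Complex.exp_add, ← Complex.ofReal_exp, Complex.re_ofReal_mul,
      Complex.exp_ofReal_mul_I_re]
  simp only [hre]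
  simp only [← RCLike.re_eq_complex_re]
  rw [integral_re (integrable_cexp_quadratic' (by norm_num) _ _)]
  simp only [RCLike.re_eq_complex_re]
  rw [integral_cexp_quadratic (b := (-(1/2) : ℂ)) (by norm_num) ((t : ℂ) * Complex.I)
    ((b : ℂ) * Complex.I)]
  have h1 : ((π : ℂ) / -(-(1/2) : ℂ)) = ((2 * π : ℝ) : ℂ) := by push_cast; ring
  have h2 : ((2 * π : ℝ) : ℂ) ^ ((1:ℂ)/2) = ((Real.sqrt (2 * π) : ℝ) : ℂ) := by
    rw [Real.sqrt_eq_rpow, Complex.ofReal_cpow h2pi.le]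
    norm_num
  have h3 : (b : ℂ) * Complex.I - ((t:ℂ) * Complex.I) ^ 2 / (4 * (-(1/2) : ℂ))
      = ((-(t ^ 2) / 2 : ℝ) : ℂ) + ((b : ℝ) : ℂ) * Complex.I := by
    have : Complex.I ^ 2 = -1 := Complex.I_sq
    push_cast
    ring_nf
    rw [Complex.I_sq]
    ring
  rw [h1, h2, h3, Complex.exp_add, ← Complex.ofReal_exp, ← mul_assoc, ← Complex.ofReal_mul,
    Complex.re_ofReal_mul, Complex.exp_ofReal_mul_I_re]
  rw [← mul_assoc, ← mul_assoc, inv_mul_cancel₀ (by positivity : Real.sqrt (2 * π) ≠ 0)]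
  ring



/-- cumulative distribution as a real function -/
def Fc (ν : Measure ℝ) (x : ℝ) : ℝ := (ν (Set.Iic x)).toReal

def Wf (ν : Measure ℝ) (x : ℝ) : ℝ := (if 0 < x then 1 else 0) - Fc ν x

def Wa (ν : Measure ℝ) (x : ℝ) : ℝ := if 0 < x then 1 - Fc ν x else Fc ν x

lemma Fc_mono (ν : Measure ℝ) [IsFiniteMeasure ν] : Monotone (Fc ν) := fun x y hxy =>
  ENNReal.toReal_mono (measure_ne_top ν _) (measure_mono (Set.Iic_subset_Iic.mpr hxy))

lemma Fc_measurable (ν : Measure ℝ) [IsFiniteMeasure ν] : Measurable (Fc ν) :=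
  (Fc_mono ν).measurable

lemma Fc_nonneg (ν : Measure ℝ) (x : ℝ) : 0 ≤ Fc ν x := ENNReal.toReal_nonneg

lemma Fc_le_one (ν : Measure ℝ) [IsProbabilityMeasure ν] (x : ℝ) : Fc ν x ≤ 1 := by
  have := prob_le_one (μ := ν) (s := Set.Iic x)
  simpa [Fc] using ENNReal.toReal_mono ENNReal.one_ne_top this

lemma Ioi_toReal (ν : Measure ℝ) [IsProbabilityMeasure ν] (x : ℝ) :
    (ν (Set.Ioi x)).toReal = 1 - Fc ν x := by
  have h : Set.Ioi x = (Set.Iic x)ᶜ := by ext y; simp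
  rw [h, prob_compl_eq_one_sub measurableSet_Iic,
    ENNReal.toReal_sub_of_le prob_le_one ENNReal.one_ne_top, ENNReal.toReal_one, Fc]

lemma Wa_measurable (ν : Measure ℝ) [IsFiniteMeasure ν] : Measurable (Wa ν) := by
  unfold Wa
  exact Measurable.ite measurableSet_Ioi (measurable_const.sub (Fc_measurable ν))
    (Fc_measurable ν)

lemma Wf_measurable (ν : Measure ℝ) [IsFiniteMeasure ν] : Measurable (Wf ν) := by
  unfold Wf
  exact (Measurable.ite measurableSet_Ioi measurable_const measurable_const).sub
    (Fc_measurable ν)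

lemma abs_Wf (ν : Measure ℝ) [IsProbabilityMeasure ν] (x : ℝ) : |Wf ν x| = Wa ν x := by
  unfold Wf Wa
  split_ifs with h
  · rw [_root_.abs_of_nonneg (by linarith [Fc_le_one ν x])]
  · rw [_root_.abs_of_nonpos (by simp [Fc_nonneg ν x])]; simp

lemma Wa_nonneg (ν : Measure ℝ) [IsProbabilityMeasure ν] (x : ℝ) : 0 ≤ Wa ν x := by
  rw [← abs_Wf]; exact abs_nonneg _

lemma int_cos (ν : Measure ℝ) [IsProbabilityMeasure ν] (b t : ℝ) :
    Integrable (fun y => Real.cos (b + t * y)) ν := by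
  refine Integrable.mono' (integrable_const 1) ?_ ?_
  · exact (Real.continuous_cos.comp (continuous_const.add
      (continuous_const.mul continuous_id))).aestronglyMeasurable
  · exact Filter.Eventually.of_forall fun y => by
      simpa using Real.abs_cos_le_one (b + t * y)

/-- The kernel of the integration-by-parts representation. -/
def Kk (y x : ℝ) : ℝ := (if 0 < x ∧ x < y then 1 else 0) - (if y ≤ x ∧ x ≤ 0 then 1 else 0)

lemma Kk_int_x (b t y : ℝ) :
    ∫ x, (-t * Real.sin (b + t * x)) * Kk y x = Real.cos (b + t * y) - Real.cos b := by
  set h : ℝ → ℝ := fun x => -t * Real.sin (b + t * x) with hh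
  have hcont : Continuous h :=
    continuous_const.mul (Real.continuous_sin.comp (continuous_const.add
      (continuous_const.mul continuous_id)))
  have hftc : ∀ z : ℝ, ∫ x in (0:ℝ)..z, h x = Real.cos (b + t * z) - Real.cos b := by
    intro z
    have hd : ∀ x ∈ Set.uIcc (0:ℝ) z, HasDerivAt (fun x => Real.cos (b + t * x)) (h x) x := by
      intro x _
      have h1 : HasDerivAt (fun x : ℝ => b + t * x) t x := by
        simpa using ((hasDerivAt_id x).const_mul t).const_add b
      have := (Real.hasDerivAt_cos (b + t * x)).comp x h1
      exact this.congr_deriv (by simp only [hh]; ring)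
    have := intervalIntegral.integral_eq_sub_of_hasDerivAt hd (hcont.intervalIntegrable 0 z)
    simpa using this
  have hmul : ∀ x, h x * Kk y x = (Set.Ioo 0 y).indicator h x - (Set.Icc y 0).indicator h x := by
    intro x
    unfold Kk
    rw [Set.indicator_apply, Set.indicator_apply]
    simp only [Set.mem_Ioo, Set.mem_Icc]
    split_ifs <;> ring
  change ∫ x, h x * Kk y x = _
  simp only [hmul]
  rw [integral_sub
    ((hcont.integrableOn_Icc.mono_set Set.Ioo_subset_Icc_self).integrable_indicator
      measurableSet_Ioo)
    (hcont.integrableOn_Icc.integrable_indicator measurableSet_Icc),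
    integral_indicator measurableSet_Ioo, integral_indicator measurableSet_Icc]
  rcases lt_trichotomy y 0 with hy | hy | hy
  · rw [Set.Ioo_eq_empty (by linarith : ¬ (0:ℝ) < y), integral_Icc_eq_integral_Ioc,
      ← intervalIntegral.integral_of_le hy.le, intervalIntegral.integral_symm 0 y, hftc y]
    simp
  · subst hy
    rw [Set.Ioo_eq_empty (by simp), integral_Icc_eq_integral_Ioc]
    simp
  · rw [Set.Icc_eq_empty (by linarith : ¬ y ≤ 0), ← integral_Ioc_eq_integral_Ioo,
      ← intervalIntegral.integral_of_le hy.le]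
    simp [hftc y]

lemma Kk_int_y (ν : Measure ℝ) [IsProbabilityMeasure ν] (x : ℝ) :
    ∫ y, Kk y x ∂ν = Wf ν x := by
  by_cases hx : 0 < x
  · have hk : ∀ y, Kk y x = (Set.Ioi x).indicator (1 : ℝ → ℝ) y := by
      intro y
      simp [Kk, Set.indicator_apply, hx, not_le.mpr hx]
    simp only [hk]
    rw [integral_indicator_one measurableSet_Ioi, measureReal_def, Ioi_toReal]
    simp [Wf, hx]
  · have hk : ∀ y, Kk y x = -((Set.Iic x).indicator (1 : ℝ → ℝ) y) := by
      intro y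
      simp [Kk, Set.indicator_apply, hx, not_lt.mp hx]
    simp only [hk]
    rw [integral_neg, integral_indicator_one measurableSet_Iic, measureReal_def]
    simp [Wf, Fc, hx]

lemma Kk_abs_int_y (ν : Measure ℝ) [IsProbabilityMeasure ν] (x : ℝ) :
    ∫ y, |Kk y x| ∂ν = Wa ν x := by
  by_cases hx : 0 < x
  · have hk : ∀ y, |Kk y x| = (Set.Ioi x).indicator (1 : ℝ → ℝ) y := by
      intro y
      simp only [Kk, Set.indicator_apply, Set.mem_Ioi, hx, true_and, not_le.mpr hx, and_false,
        if_false, sub_zero]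
      split_ifs <;> simp
    simp only [hk]
    rw [integral_indicator_one measurableSet_Ioi, measureReal_def, Ioi_toReal]
    simp [Wa, hx]
  · have hk : ∀ y, |Kk y x| = (Set.Iic x).indicator (1 : ℝ → ℝ) y := by
      intro y
      simp only [Kk, Set.indicator_apply, Set.mem_Iic, hx, false_and, if_false, zero_sub,
        abs_neg, not_lt.mp hx, and_true]
      split_ifs <;> simp
    simp only [hk]
    rw [integral_indicator_one measurableSet_Iic, measureReal_def]
    simp [Wa, Fc, hx]

lemma rep (ν : Measure ℝ) [IsProbabilityMeasure ν] (hW : Integrable (Wa ν)) (b t : ℝ) :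
    ∫ y, Real.cos (b + t * y) ∂ν
      = Real.cos b + ∫ x, (-t * Real.sin (b + t * x)) * Wf ν x := by
  set h : ℝ → ℝ := fun x => -t * Real.sin (b + t * x) with hh
  have hcont : Continuous h :=
    continuous_const.mul (Real.continuous_sin.comp (continuous_const.add
      (continuous_const.mul continuous_id)))
  have habs : ∀ x, |h x| ≤ |t| := by
    intro x
    rw [hh]
    simp only [abs_mul, abs_neg]
    calc |t| * |Real.sin (b + t * x)| ≤ |t| * 1 :=
          mul_le_mul_of_nonneg_left (Real.abs_sin_le_one _) (abs_nonneg t)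
      _ = |t| := mul_one _
  have hKabs : ∀ y x : ℝ, |Kk y x| ≤ 1 := by
    intro y x
    unfold Kk
    split_ifs <;> norm_num
  have hKm : Measurable (fun p : ℝ × ℝ => Kk p.1 p.2) := by
    unfold Kk
    apply Measurable.sub
    · exact Measurable.ite
        (((measurableSet_lt measurable_const measurable_snd).inter
          (measurableSet_lt measurable_snd measurable_fst)))
        measurable_const measurable_const
    · exact Measurable.ite
        (((measurableSet_le measurable_fst measurable_snd).inter
          (measurableSet_le measurable_snd measurable_const)))
        measurable_const measurable_const
  have hFm : Measurable (fun p : ℝ × ℝ => h p.2 * Kk p.1 p.2) :=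
    (hcont.measurable.comp measurable_snd).mul hKm
  have key : Integrable (fun p : ℝ × ℝ => h p.2 * Kk p.1 p.2) (ν.prod volume) := by
    rw [integrable_prod_iff' hFm.aestronglyMeasurable]
    constructor
    · refine Filter.Eventually.of_forall fun x => ?_
      refine Integrable.mono' (integrable_const |t|) ?_ ?_
      · exact (hFm.comp measurable_prodMk_right).aestronglyMeasurable
      · exact Filter.Eventually.of_forall fun y => by
          rw [Real.norm_eq_abs, abs_mul]
          calc |h x| * |Kk y x| ≤ |t| * 1 :=
                mul_le_mul (habs x) (hKabs y x) (abs_nonneg _) (abs_nonneg t)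
            _ = |t| := mul_one _
    · have heq : (fun x : ℝ => ∫ y, ‖h x * Kk y x‖ ∂ν) = fun x => |h x| * Wa ν x := by
        funext x
        simp only [Real.norm_eq_abs, abs_mul]
        rw [integral_const_mul, Kk_abs_int_y]
      have hint2 : Integrable (fun x => |h x| * Wa ν x) := by
        refine hW.bdd_mul (c := |t|) ?_ (Filter.Eventually.of_forall fun x => by simpa using habs x)
        exact (continuous_abs.comp hcont).aestronglyMeasurable
      exact heq ▸ hint2
  have swap : ∫ y, ∫ x, h x * Kk y x ∂volume ∂ν = ∫ x, ∫ y, h x * Kk y x ∂ν ∂volume :=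
    integral_integral_swap (f := fun y x => h x * Kk y x) key
  have lhs : ∫ y, ∫ x, h x * Kk y x ∂volume ∂ν
      = (∫ y, Real.cos (b + t * y) ∂ν) - Real.cos b := by
    have hx : ∀ y, ∫ x, h x * Kk y x ∂volume = Real.cos (b + t * y) - Real.cos b := fun y =>
      Kk_int_x b t y
    simp only [hx]
    rw [integral_sub (int_cos ν b t) (integrable_const _), integral_const]
    simp
  have rhs : ∫ x, ∫ y, h x * Kk y x ∂ν ∂volume = ∫ x, h x * Wf ν x ∂volume := by
    congr 1
    funext x
    rw [integral_const_mul, Kk_int_y]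
  rw [lhs, rhs] at swap
  linarith [swap]

lemma pdf_le_right (y : ℝ) :
    gaussianPDFReal 0 1 y ≤ Real.exp (1/2) * Real.exp (-y) := by
  rw [gaussianPDFReal_def]
  have h1 : (Real.sqrt (2 * π * 1))⁻¹ ≤ 1 := by
    rw [inv_le_one_iff₀]
    right
    rw [show (2 * π * 1 : ℝ) = 2 * π by ring]
    nlinarith [Real.sq_sqrt (by positivity : (0:ℝ) ≤ 2 * π), Real.sqrt_nonneg (2*π),
      Real.pi_gt_three]
  calc (Real.sqrt (2 * π * 1))⁻¹ * Real.exp (-(y - 0) ^ 2 / (2 * 1))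
      ≤ 1 * Real.exp (-(y - 0) ^ 2 / (2 * 1)) :=
        mul_le_mul_of_nonneg_right h1 (Real.exp_nonneg _)
    _ = Real.exp (-(y) ^ 2 / 2) := by norm_num
    _ ≤ Real.exp (1/2) * Real.exp (-y) := by
        rw [← Real.exp_add]
        apply Real.exp_le_exp.mpr
        nlinarith [sq_nonneg (y - 1)]

lemma pdf_le_left (y : ℝ) :
    gaussianPDFReal 0 1 y ≤ Real.exp (1/2) * Real.exp y := by
  have := pdf_le_right (-y)
  rw [gaussianPDFReal_def] at this ⊢
  simp only [neg_neg] at this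
  calc (Real.sqrt (2 * π * 1))⁻¹ * Real.exp (-(y - 0) ^ 2 / (2 * 1))
      = (Real.sqrt (2 * π * 1))⁻¹ * Real.exp (-(-y - 0) ^ 2 / (2 * 1)) := by ring_nf
    _ ≤ Real.exp (1/2) * Real.exp y := this

lemma Wa_gauss_le (x : ℝ) :
    Wa (gaussianReal 0 1) x ≤ Real.exp (1/2) * Real.exp (-|x|) := by
  have hv : (1 : ℝ≥0) ≠ 0 := one_ne_zero
  by_cases hx : 0 < x
  · have h1 : Wa (gaussianReal 0 1) x = ((gaussianReal 0 1) (Set.Ioi x)).toReal := by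
      rw [Ioi_toReal, Wa, if_pos hx]
    rw [h1, gaussianReal_apply_eq_integral 0 hv _,
      ENNReal.toReal_ofReal (setIntegral_nonneg measurableSet_Ioi
        (fun y _ => gaussianPDFReal_nonneg 0 1 y))]
    have hintexp : IntegrableOn (fun y : ℝ => Real.exp (1/2) * Real.exp (-y)) (Set.Ioi x) := by
      have hbase : IntegrableOn (fun y : ℝ => Real.exp (1/2) * Real.exp (-1 * y)) (Set.Ioi x) :=
        (exp_neg_integrableOn_Ioi x (by norm_num : (0:ℝ) < 1)).const_mul (Real.exp (1/2))
      refine hbase.congr_fun (fun y _ => by norm_num) measurableSet_Ioi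
    calc ∫ y in Set.Ioi x, gaussianPDFReal 0 1 y
        ≤ ∫ y in Set.Ioi x, Real.exp (1/2) * Real.exp (-y) := by
          refine setIntegral_mono_on (integrable_gaussianPDFReal 0 1).integrableOn hintexp
            measurableSet_Ioi (fun y _ => pdf_le_right y)
      _ = Real.exp (1/2) * Real.exp (-x) := by
          rw [integral_const_mul, integral_exp_neg_Ioi]
      _ = Real.exp (1/2) * Real.exp (-|x|) := by rw [abs_of_pos hx]
  · have h1 : Wa (gaussianReal 0 1) x = ((gaussianReal 0 1) (Set.Iic x)).toReal := by
      rw [Wa, if_neg hx]; rfl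
    rw [h1, gaussianReal_apply_eq_integral 0 hv _,
      ENNReal.toReal_ofReal (setIntegral_nonneg measurableSet_Iic
        (fun y _ => gaussianPDFReal_nonneg 0 1 y))]
    have hintexp : IntegrableOn (fun y : ℝ => Real.exp (1/2) * Real.exp y) (Set.Iic x) :=
      (integrableOn_exp_Iic x).const_mul (Real.exp (1/2))
    calc ∫ y in Set.Iic x, gaussianPDFReal 0 1 y
        ≤ ∫ y in Set.Iic x, Real.exp (1/2) * Real.exp y := by
          refine setIntegral_mono_on (integrable_gaussianPDFReal 0 1).integrableOn hintexp
            measurableSet_Iic (fun y _ => pdf_le_left y)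
      _ = Real.exp (1/2) * Real.exp x := by
          rw [integral_const_mul, integral_exp_Iic]
      _ = Real.exp (1/2) * Real.exp (-|x|) := by
          rw [abs_of_nonpos (not_lt.mp hx), neg_neg]

lemma integrable_exp_negabs : Integrable (fun x : ℝ => Real.exp (1/2) * Real.exp (-|x|)) := by
  apply Integrable.const_mul
  have h1 : IntegrableOn (fun x : ℝ => Real.exp (-|x|)) (Set.Iic 0) :=
    (integrableOn_exp_Iic 0).congr_fun
      (fun x hx => by rw [abs_of_nonpos (Set.mem_Iic.mp hx), neg_neg]) measurableSet_Iic
  have h2 : IntegrableOn (fun x : ℝ => Real.exp (-|x|)) (Set.Ioi 0) :=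
    (exp_neg_integrableOn_Ioi 0 (by norm_num : (0:ℝ) < 1)).congr_fun
      (fun x hx => by rw [abs_of_pos (Set.mem_Ioi.mp hx)]; norm_num) measurableSet_Ioi
  have := h1.union h2
  rwa [Set.Iic_union_Ioi, integrableOn_univ] at this

lemma integrable_Wa_gauss : Integrable (Wa (gaussianReal 0 1)) := by
  refine Integrable.mono' integrable_exp_negabs
    (Wa_measurable _).aestronglyMeasurable
    (Filter.Eventually.of_forall fun x => ?_)
  rw [Real.norm_eq_abs, _root_.abs_of_nonneg (Wa_nonneg _ x)]
  exact Wa_gauss_le x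

lemma integrable_Wa_of_close {ν : Measure ℝ} [IsProbabilityMeasure ν] {D : ℝ}
    (hd : ∀ x, |Fc ν x - Fc (gaussianReal 0 1) x| ≤ D / (1 + x ^ 2)) :
    Integrable (Wa ν) := by
  refine Integrable.mono'
    (integrable_Wa_gauss.add ((integrable_inv_one_add_sq).const_mul D))
    (Wa_measurable ν).aestronglyMeasurable
    (Filter.Eventually.of_forall fun x => ?_)
  rw [Real.norm_eq_abs, _root_.abs_of_nonneg (Wa_nonneg ν x)]
  have h1 := hd x
  rw [div_eq_mul_inv] at h1
  rcases abs_le.mp h1 with ⟨hl, hr⟩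
  have : Wa ν x ≤ Wa (gaussianReal 0 1) x + D * (1 + x ^ 2)⁻¹ := by
    unfold Wa
    split_ifs with hx
    · linarith
    · linarith
  simpa using this

lemma integrable_Wf {ν : Measure ℝ} [IsProbabilityMeasure ν] (hW : Integrable (Wa ν)) :
    Integrable (Wf ν) := by
  refine hW.mono' (Wf_measurable ν).aestronglyMeasurable (Filter.Eventually.of_forall fun x => ?_)
  rw [Real.norm_eq_abs, abs_Wf]

lemma compare {ν : Measure ℝ} [IsProbabilityMeasure ν] {D : ℝ}
    (hd : ∀ x, |Fc ν x - Fc (gaussianReal 0 1) x| ≤ D / (1 + x ^ 2)) (b t : ℝ) :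
    |(∫ y, Real.cos (b + t * y) ∂ν) - Real.cos b * Real.exp (-(t ^ 2) / 2)|
      ≤ π * |t| * D := by
  have hWv : Integrable (Wa ν) := integrable_Wa_of_close hd
  have hWg : Integrable (Wa (gaussianReal 0 1)) := integrable_Wa_gauss
  set h : ℝ → ℝ := fun x => -t * Real.sin (b + t * x) with hh
  have hcont : Continuous h :=
    continuous_const.mul (Real.continuous_sin.comp (continuous_const.add
      (continuous_const.mul continuous_id)))
  have habs : ∀ x, |h x| ≤ |t| := by
    intro x
    rw [hh]
    simp only [abs_mul, abs_neg]
    calc |t| * |Real.sin (b + t * x)| ≤ |t| * 1 :=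
          mul_le_mul_of_nonneg_left (Real.abs_sin_le_one _) (abs_nonneg t)
      _ = |t| := mul_one _
  have hint : ∀ (κ : Measure ℝ) [IsProbabilityMeasure κ], Integrable (Wa κ) →
      Integrable (fun x => h x * Wf κ x) := by
    intro κ _ hWκ
    exact (integrable_Wf hWκ).bdd_mul (c := |t|) hcont.aestronglyMeasurable
      (Filter.Eventually.of_forall fun x => by simpa using habs x)
  rw [← gauss_cos b t, rep ν hWv b t, rep _ hWg b t]
  have hsub : (Real.cos b + ∫ x, h x * Wf ν x)
      - (Real.cos b + ∫ x, h x * Wf (gaussianReal 0 1) x)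
      = ∫ x, h x * (Fc (gaussianReal 0 1) x - Fc ν x) := by
    rw [show (Real.cos b + ∫ x, h x * Wf ν x)
        - (Real.cos b + ∫ x, h x * Wf (gaussianReal 0 1) x)
        = (∫ x, h x * Wf ν x) - ∫ x, h x * Wf (gaussianReal 0 1) x by ring]
    rw [← integral_sub (hint ν hWv) (hint _ hWg)]
    congr 1
    funext x
    unfold Wf
    ring
  rw [hsub]
  have hbound : ∀ x : ℝ, ‖h x * (Fc (gaussianReal 0 1) x - Fc ν x)‖
      ≤ |t| * (D * (1 + x ^ 2)⁻¹) := by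
    intro x
    rw [Real.norm_eq_abs, abs_mul]
    have h2 := hd x
    rw [div_eq_mul_inv] at h2
    rw [abs_sub_comm] at h2
    exact mul_le_mul (habs x) h2 (abs_nonneg _)
      (abs_nonneg t)
  calc |∫ x, h x * (Fc (gaussianReal 0 1) x - Fc ν x)|
      ≤ ∫ x, |t| * (D * (1 + x ^ 2)⁻¹) := by
        refine norm_integral_le_of_norm_le
          (((integrable_inv_one_add_sq).const_mul D).const_mul |t|)
          (Filter.Eventually.of_forall hbound)
    _ = |t| * (D * π) := by
        rw [integral_const_mul, integral_const_mul, integral_univ_inv_one_add_sq]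
    _ = π * |t| * D := by ring

end VBCC

/-- Variance of the exponentially corrected cosine statistic for a random variable close to a
standard Gaussian in the nonuniform Kolmogorov sense. -/
theorem variance_bias_corrected_cosine_near_gaussian
    {Ω : Type*} [MeasurableSpace Ω] (μ : Measure Ω) [IsProbabilityMeasure μ]
    (X : Ω → ℝ) (hX : Measurable X) (D : ℝ) (hD : 0 ≤ D)
    (hclose : ∀ x : ℝ,
      |(μ {ω | X ω ≤ x}).toReal - cdf (gaussianReal 0 1) x| ≤ D / (1 + x ^ 2))
    (a l : ℝ) (hl : 0 < l) :
    variance (fun ω => Real.exp (l ^ 2 / 2) * Real.cos (a + l * X ω)) μ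
      ≤ (l ^ 2 + 6 * Real.pi * l * D) * Real.exp (l ^ 2) := by
  have hπ := Real.pi_pos
  set ν : Measure ℝ := Measure.map X μ with hν
  haveI : IsProbabilityMeasure ν := Measure.isProbabilityMeasure_map hX.aemeasurable
  have hd : ∀ x, |VBCC.Fc ν x - VBCC.Fc (gaussianReal 0 1) x| ≤ D / (1 + x ^ 2) := by
    intro x
    have h1 : VBCC.Fc ν x = (μ {ω | X ω ≤ x}).toReal := by
      rw [VBCC.Fc, hν, Measure.map_apply hX measurableSet_Iic]
      rfl
    have h2 : VBCC.Fc (gaussianReal 0 1) x = cdf (gaussianReal 0 1) x :=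
      (cdf_eq_real (gaussianReal 0 1) x).symm
    rw [h1, h2]
    exact hclose x
  have hmeasc : ∀ b t : ℝ, Measurable (fun ω => Real.cos (b + t * X ω)) := fun b t =>
    Real.measurable_cos.comp (measurable_const.add (measurable_const.mul hX))
  have hintc : ∀ b t : ℝ, Integrable (fun ω => Real.cos (b + t * X ω)) μ := fun b t =>
    Integrable.mono' (integrable_const 1) (hmeasc b t).aestronglyMeasurable
      (Filter.Eventually.of_forall fun ω => by simpa using Real.abs_cos_le_one _)
  have hmap : ∀ b t : ℝ, ∫ ω, Real.cos (b + t * X ω) ∂μ = ∫ y, Real.cos (b + t * y) ∂ν := by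
    intro b t
    rw [hν, integral_map hX.aemeasurable]
    exact (Real.continuous_cos.comp
      (continuous_const.add (continuous_const.mul continuous_id))).aestronglyMeasurable
  set m1 := ∫ ω, Real.cos (a + l * X ω) ∂μ with hm1def
  set m2 := ∫ ω, Real.cos (2*a + 2*l * X ω) ∂μ with hm2def
  set q := Real.exp (-(l ^ 2) / 2) with hqdef
  have hq0 : 0 < q := Real.exp_pos _
  have hqle : q ≤ 1 := by
    rw [hqdef]
    calc Real.exp (-(l ^ 2) / 2) ≤ Real.exp 0 := Real.exp_le_exp.mpr (by nlinarith)
      _ = 1 := Real.exp_zero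
  have e1 : |m1 - Real.cos a * q| ≤ π * l * D := by
    have h := VBCC.compare hd a l
    rw [← hmap a l, abs_of_pos hl] at h
    exact h
  have e2 : |m2 - Real.cos (2*a) * q ^ 4| ≤ 2 * (π * l * D) := by
    have h := VBCC.compare hd (2*a) (2*l)
    rw [← hmap (2*a) (2*l), abs_of_pos (by linarith : (0:ℝ) < 2*l)] at h
    have hq4 : Real.exp (-((2*l) ^ 2) / 2) = q ^ 4 := by
      rw [hqdef, show -((2*l) ^ 2) / 2
          = (-(l ^ 2) / 2) + ((-(l ^ 2) / 2) + ((-(l ^ 2) / 2) + (-(l ^ 2) / 2))) by ring,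
        Real.exp_add, Real.exp_add, Real.exp_add]
      ring
    rw [hq4] at h
    calc |m2 - Real.cos (2*a) * q ^ 4| ≤ π * (2*l) * D := h
      _ = 2 * (π * l * D) := by ring
  have hm1abs : |m1| ≤ 1 := by
    rw [hm1def]
    have h := norm_integral_le_of_norm_le (f := fun ω => Real.cos (a + l * X ω)) (μ := μ)
      (integrable_const (1:ℝ))
      (Filter.Eventually.of_forall fun ω => by
        rw [Real.norm_eq_abs]; exact Real.abs_cos_le_one _)
    simpa [Real.norm_eq_abs] using h
  rw [variance_const_mul]
  have hmem : MemLp (fun ω => Real.cos (a + l * X ω)) 2 μ :=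
    (memLp_top_of_bound (hmeasc a l).aestronglyMeasurable 1
      (Filter.Eventually.of_forall fun ω => by
        simpa using Real.abs_cos_le_one _)).mono_exponent le_top
  rw [variance_eq_sub hmem]
  have hsq : (μ[(fun ω => Real.cos (a + l * X ω)) ^ 2]) = 1/2 + m2/2 := by
    have hpt : ∀ ω, ((fun ω => Real.cos (a + l * X ω)) ^ 2) ω
        = 1/2 + Real.cos (2*a + 2*l * X ω) / 2 := by
      intro ω
      simp only [Pi.pow_apply]
      rw [show (2:ℝ)*a + 2*l * X ω = 2*(a + l * X ω) by ring, ← Real.cos_sq]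
    rw [show (μ[(fun ω => Real.cos (a + l * X ω)) ^ 2])
        = ∫ ω, (1/2 + Real.cos (2*a + 2*l * X ω) / 2) ∂μ from
        integral_congr_ae (Filter.Eventually.of_forall hpt)]
    rw [integral_add (integrable_const _) ((hintc (2*a) (2*l)).div_const 2),
      integral_const]
    have hdiv : ∫ ω, Real.cos (2*a + 2*l * X ω) / 2 ∂μ
        = (∫ ω, Real.cos (2*a + 2*l * X ω) ∂μ) / 2 := integral_div 2 _
    rw [hdiv, ← hm2def]
    simp
  rw [hsq, ← hm1def]
  have hexp2 : Real.exp (l ^ 2 / 2) ^ 2 = Real.exp (l ^ 2) := by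
    rw [sq, ← Real.exp_add]
    ring_nf
  rw [hexp2]
  -- the scalar estimate
  set c := Real.cos a with hcdef
  have hcabs : |c| ≤ 1 := Real.abs_cos_le_one a
  have hg1abs : |c * q| ≤ 1 := by
    rw [abs_mul, _root_.abs_of_pos hq0]
    calc |c| * q ≤ 1 * 1 := mul_le_mul hcabs hqle hq0.le zero_le_one
      _ = 1 := mul_one 1
  have hpld : 0 ≤ π * l * D := by positivity
  have hquad : (c * q) ^ 2 - m1 ^ 2 ≤ 2 * (π * l * D) := by
    calc (c * q) ^ 2 - m1 ^ 2 = (c * q - m1) * (c * q + m1) := by ring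
      _ ≤ |(c * q - m1) * (c * q + m1)| := le_abs_self _
      _ = |c * q - m1| * |c * q + m1| := abs_mul _ _
      _ ≤ (π * l * D) * 2 := by
          refine mul_le_mul ?_ ?_ (abs_nonneg _) hpld
          · rw [abs_sub_comm]; exact e1
          · calc |c * q + m1| ≤ |c * q| + |m1| := abs_add_le _ _
              _ ≤ 2 := by linarith
      _ = 2 * (π * l * D) := by ring
  have h2l : 1 - 2 * l ^ 2 ≤ q ^ 4 := by
    have hone := Real.add_one_le_exp (-(2 * l ^ 2))
    have hq4 : q ^ 4 = Real.exp (-(2 * l ^ 2)) := by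
      rw [hqdef, show -(2 * l ^ 2)
          = (-(l ^ 2) / 2) + ((-(l ^ 2) / 2) + ((-(l ^ 2) / 2) + (-(l ^ 2) / 2))) by ring,
        Real.exp_add, Real.exp_add, Real.exp_add]
      ring
    rw [hq4]
    linarith
  have hgauss : 1/2 + (Real.cos (2*a) * q ^ 4) / 2 - (c * q) ^ 2 ≤ l ^ 2 := by
    rw [Real.cos_two_mul a, ← hcdef]
    have hq21 : q ^ 2 ≤ 1 := by nlinarith
    have hterm : c ^ 2 * (q ^ 4 - q ^ 2) ≤ 0 := by nlinarith [sq_nonneg c, sq_nonneg q]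
    nlinarith [h2l, hterm]
  have hkey : 1/2 + m2/2 - m1 ^ 2 ≤ l ^ 2 + 6 * π * l * D := by
    rcases abs_le.mp e2 with ⟨_, e2r⟩
    have : 1/2 + m2/2 - m1 ^ 2
        = (1/2 + (Real.cos (2*a) * q ^ 4) / 2 - (c * q) ^ 2)
          + (m2 - Real.cos (2*a) * q ^ 4) / 2 + ((c * q) ^ 2 - m1 ^ 2) := by ring
    rw [this]
    linarith
  calc Real.exp (l ^ 2) * (1/2 + m2/2 - m1 ^ 2)
      ≤ Real.exp (l ^ 2) * (l ^ 2 + 6 * π * l * D) :=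
        mul_le_mul_of_nonneg_left hkey (Real.exp_pos _).le
    _ = (l ^ 2 + 6 * π * l * D) * Real.exp (l ^ 2) := mul_comm _ _
end
end

section
/- There exists a universal constant A > 0 such that the following holds. Let n ≥ 1 and let X_1, …, X_n be independent real random variables with E[X_i] = 0 for all i, Σ_{i=1}^n E[X_i²] = 1, and Σ_{i=1}^n E[|X_i|³] ≤ Δ for some Δ ≥ 0. Set S = Σ_{i=1}^n X_i. Then for all real a and all λ > 0: |e^{λ²/2} · E[cos(a + λS)] − cos(a)| ≤ A · λ · Δ · e^{λ²/2}. -/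
open MeasureTheory ProbabilityTheory

namespace BiasAux

lemma taylor3 (y : ℝ) :
    ‖Complex.exp (y * Complex.I) - (1 + y * Complex.I - (y:ℂ)^2/2)‖ ≤ 4 * |y|^3 := by
  have habs : ‖(y:ℂ) * Complex.I‖ = |y| := by
    simp [norm_mul, Complex.norm_I, Complex.norm_real]
  rcases le_or_gt (|y|) 1 with hy | hy
  · have h := Complex.exp_bound (x := (y:ℂ) * Complex.I) (by rw [habs]; exact hy)
      (n := 3) (by norm_num)
    have hsum : ∑ m ∈ Finset.range 3, ((y:ℂ) * Complex.I)^m / m.factorial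
        = 1 + y * Complex.I - (y:ℂ)^2/2 := by
      simp [Finset.sum_range_succ, Nat.factorial]
      ring_nf
      simp [Complex.I_sq]
      ring
    rw [hsum, habs] at h
    have h3 : (0:ℝ) ≤ |y|^3 := by positivity
    calc ‖Complex.exp (y * Complex.I) - (1 + y * Complex.I - (y:ℂ)^2/2)‖
        ≤ |y|^3 * ((3+1 : ℕ) * ((3).factorial * 3 : ℝ)⁻¹) := h
      _ ≤ 4 * |y|^3 := by norm_num [Nat.factorial]; nlinarith
  · have h1 : ‖Complex.exp ((y:ℂ) * Complex.I)‖ = 1 := by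
      rw [Complex.norm_exp_ofReal_mul_I]
    have h2 : ‖(1 + y * Complex.I - (y:ℂ)^2/2 : ℂ)‖ ≤ 1 + |y| + y^2/2 := by
      calc ‖(1 + y * Complex.I - (y:ℂ)^2/2 : ℂ)‖
          ≤ ‖(1 + y * Complex.I : ℂ)‖ + ‖((y:ℂ)^2/2 : ℂ)‖ := norm_sub_le _ _
        _ ≤ (‖(1:ℂ)‖ + ‖(y:ℂ) * Complex.I‖) + ‖((y:ℂ)^2/2 : ℂ)‖ := by
            gcongr; exact norm_add_le _ _
        _ ≤ 1 + |y| + y^2/2 := by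
            rw [norm_one, habs]
            simp [norm_div, norm_pow, abs_sq]
    have h3 : 1 ≤ |y| := hy.le
    have h4 : y^2 = |y|^2 := (sq_abs y).symm
    calc ‖Complex.exp (y * Complex.I) - (1 + y * Complex.I - (y:ℂ)^2/2)‖
        ≤ ‖Complex.exp ((y:ℂ) * Complex.I)‖ + ‖(1 + y * Complex.I - (y:ℂ)^2/2 : ℂ)‖ :=
          norm_sub_le _ _
      _ ≤ 1 + (1 + |y| + y^2/2) := by rw [h1]; linarith
      _ ≤ 4 * |y|^3 := by nlinarith [abs_nonneg y]

lemma exp_neg_sub_one_sub (t : ℝ) (ht : 0 ≤ t) : |Real.exp (-t) - (1 - t)| ≤ t^2 := by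
  have h1 : 1 - t ≤ Real.exp (-t) := by
    have := Real.add_one_le_exp (-t); linarith
  have h2 : Real.exp (-t) ≤ 1 - t + t^2 := by
    have hp : (0:ℝ) < 1 + t := by linarith
    have he : 1 + t ≤ Real.exp t := by have := Real.add_one_le_exp t; linarith
    have hinv : Real.exp (-t) ≤ (1+t)⁻¹ := by
      rw [Real.exp_neg]
      exact inv_anti₀ hp he
    have : (1+t)⁻¹ ≤ 1 - t + t^2 := by
      rw [inv_le_iff_one_le_mul₀ hp]  -- might not be the name
      nlinarith
    linarith
  rw [abs_le]
  constructor <;> nlinarith [sq_nonneg t]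

lemma exp_neg_le_inv (x : ℝ) (hx : 0 < x) : Real.exp (-x) ≤ x⁻¹ := by
  rw [Real.exp_neg]
  exact inv_anti₀ hx (le_trans (by linarith) (Real.add_one_le_exp x))


variable {Ω : Type} [MeasurableSpace Ω] {μ : Measure Ω}

lemma cauchy_schwarz (f g : Ω → ℝ)
    (hf2 : Integrable (fun ω => f ω ^ 2) μ) (hg2 : Integrable (fun ω => g ω ^ 2) μ)
    (hfg : Integrable (fun ω => f ω * g ω) μ) :
    (∫ ω, f ω * g ω ∂μ)^2 ≤ (∫ ω, f ω ^ 2 ∂μ) * (∫ ω, g ω ^ 2 ∂μ) := by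
  set A := ∫ ω, f ω ^ 2 ∂μ
  set B := ∫ ω, f ω * g ω ∂μ
  set C := ∫ ω, g ω ^ 2 ∂μ
  have key : ∀ t : ℝ, 0 ≤ A * (t * t) + (2 * B) * t + C := by
    intro t
    have h1 : Integrable (fun ω => t^2 * f ω ^ 2 + (2*t) * (f ω * g ω)) μ :=
      (hf2.const_mul _).add (hfg.const_mul _)
    have h2 : Integrable (fun ω => (t^2 * f ω ^ 2 + (2*t) * (f ω * g ω)) + g ω ^2) μ :=
      h1.add hg2
    have hnn : 0 ≤ ∫ ω, ((t^2 * f ω ^ 2 + (2*t) * (f ω * g ω)) + g ω ^2) ∂μ := by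
      apply integral_nonneg
      intro ω
      simp only [Pi.zero_apply]
      have : (t * f ω + g ω)^2 = (t^2 * f ω ^ 2 + (2*t) * (f ω * g ω)) + g ω ^2 := by ring
      rw [← this]; positivity
    rw [integral_add h1 hg2, integral_add (hf2.const_mul _) (hfg.const_mul _),
      integral_const_mul, integral_const_mul] at hnn
    calc (0:ℝ) ≤ t^2 * A + (2*t) * B + C := hnn
      _ = A * (t*t) + (2*B)*t + C := by ring
  have hd := discrim_le_zero key
  rw [discrim] at hd
  nlinarith

lemma lyapunov [IsProbabilityMeasure μ] (X : Ω → ℝ) (hm : Measurable X)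
    (h1 : Integrable X μ) (h2 : Integrable (fun ω => X ω ^ 2) μ)
    (h3 : Integrable (fun ω => |X ω| ^ 3) μ) :
    (∫ ω, X ω ^ 2 ∂μ)^3 ≤ (∫ ω, |X ω| ^ 3 ∂μ)^2 := by
  set p := ∫ ω, |X ω| ∂μ
  set q := ∫ ω, X ω ^ 2 ∂μ
  set r := ∫ ω, |X ω| ^ 3 ∂μ
  have hp : 0 ≤ p := integral_nonneg fun ω => abs_nonneg _
  have hq : 0 ≤ q := integral_nonneg fun ω => sq_nonneg _
  have hr : 0 ≤ r := integral_nonneg fun ω => by positivity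
  -- CS1 : q^2 ≤ p * r,  with f = sqrt |X|, g = |X| * sqrt |X|
  have habs : Integrable (fun ω => |X ω|) μ := h1.abs
  have hcs1 : q^2 ≤ p * r := by
    have e1 : ∀ ω, (Real.sqrt |X ω|)^2 = |X ω| := fun ω => Real.sq_sqrt (abs_nonneg _)
    have e2 : ∀ ω, (|X ω| * Real.sqrt |X ω|)^2 = |X ω|^3 := by
      intro ω
      rw [mul_pow, Real.sq_sqrt (abs_nonneg (X ω))]
      ring
    have e3 : ∀ ω, Real.sqrt |X ω| * (|X ω| * Real.sqrt |X ω|) = X ω ^ 2 := by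
      intro ω
      have h := Real.sq_sqrt (abs_nonneg (X ω))
      have : Real.sqrt |X ω| * (|X ω| * Real.sqrt |X ω|) = (Real.sqrt |X ω|)^2 * |X ω| := by ring
      rw [this, h, ← sq_abs]
      ring
    have hf2 : Integrable (fun ω => (Real.sqrt |X ω|)^2) μ := by
      simp only [e1]; exact habs
    have hg2 : Integrable (fun ω => (|X ω| * Real.sqrt |X ω|)^2) μ := by
      simp only [e2]; exact h3
    have hfg : Integrable (fun ω => Real.sqrt |X ω| * (|X ω| * Real.sqrt |X ω|)) μ := by
      simp only [e3]; exact h2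
    have := cauchy_schwarz (μ := μ) _ _ hf2 hg2 hfg
    simp only [e1, e2, e3] at this
    exact this
  -- CS2 : p^2 ≤ q
  have hcs2 : p^2 ≤ q := by
    have hone : Integrable (fun _ : Ω => (1:ℝ)^2) μ := by simpa using integrable_const (1:ℝ)
    have habs2 : Integrable (fun ω => |X ω| ^ 2) μ := by
      have : (fun ω => |X ω| ^ 2) = fun ω => X ω ^2 := by funext ω; rw [sq_abs]
      rw [this]; exact h2
    have hfg : Integrable (fun ω => (1:ℝ) * |X ω|) μ := by simpa using habs
    have := cauchy_schwarz (μ := μ) (fun _ => (1:ℝ)) (fun ω => |X ω|) hone habs2 hfg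
    simpa [sq_abs] using this
  rcases eq_or_lt_of_le hq with h0 | h0
  · rw [← h0]; simpa using sq_nonneg r
  · have h4 : q^4 ≤ (p*r)^2 := by
      have := pow_le_pow_left₀ (sq_nonneg q) hcs1 2
      calc q^4 = (q^2)^2 := by ring
        _ ≤ (p*r)^2 := this
    have h5 : (p*r)^2 ≤ q * r^2 := by nlinarith [sq_nonneg r]
    have h6 : q * q^3 ≤ q * r^2 := by nlinarith
    exact le_of_mul_le_mul_left h6 h0

lemma norm_prod_sub_prod {ι : Type*} [DecidableEq ι] (s : Finset ι) (z w : ι → ℂ) (c : ι → ℝ)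
    (hc : ∀ i, 0 ≤ c i) (hz : ∀ i ∈ s, ‖z i‖ ≤ c i) (hw : ∀ i ∈ s, ‖w i‖ ≤ c i) :
    ‖(∏ i ∈ s, z i) - ∏ i ∈ s, w i‖ ≤ ∑ i ∈ s, ‖z i - w i‖ * ∏ j ∈ s.erase i, c j := by
  induction s using Finset.induction_on with
  | empty => simp
  | @insert a s' ha ih =>
    have hz' : ∀ i ∈ s', ‖z i‖ ≤ c i := fun i hi => hz i (Finset.mem_insert_of_mem hi)
    have hw' : ∀ i ∈ s', ‖w i‖ ≤ c i := fun i hi => hw i (Finset.mem_insert_of_mem hi)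
    have ihs := ih hz' hw'
    have hwprod : ‖∏ j ∈ s', w j‖ ≤ ∏ j ∈ s', c j := by
      refine le_trans (Finset.norm_prod_le s' w) ?_
      exact Finset.prod_le_prod (fun i _ => norm_nonneg _) hw'
    have ha' : ‖z a‖ ≤ c a := hz a (Finset.mem_insert_self a s')
    have hsum_nonneg : 0 ≤ ∑ i ∈ s', ‖z i - w i‖ * ∏ j ∈ s'.erase i, c j := by
      apply Finset.sum_nonneg
      intro i _
      exact mul_nonneg (norm_nonneg _) (Finset.prod_nonneg (fun j _ => hc j))
    rw [Finset.prod_insert ha, Finset.prod_insert ha]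
    have step : z a * ∏ i ∈ s', z i - w a * ∏ i ∈ s', w i
        = z a * ((∏ i ∈ s', z i) - ∏ i ∈ s', w i) + (z a - w a) * ∏ i ∈ s', w i := by ring
    rw [step]
    have t1 := norm_add_le (z a * ((∏ i ∈ s', z i) - ∏ i ∈ s', w i))
      ((z a - w a) * ∏ i ∈ s', w i)
    rw [norm_mul, norm_mul] at t1
    have t2 : ‖z a‖ * ‖(∏ i ∈ s', z i) - ∏ i ∈ s', w i‖
        ≤ c a * ∑ i ∈ s', ‖z i - w i‖ * ∏ j ∈ s'.erase i, c j :=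
      mul_le_mul ha' ihs (norm_nonneg _) (hc a)
    have t3 : ‖z a - w a‖ * ‖∏ j ∈ s', w j‖ ≤ ‖z a - w a‖ * ∏ j ∈ s', c j :=
      mul_le_mul_of_nonneg_left hwprod (norm_nonneg _)
    have hre : ∑ i ∈ (insert a s'), ‖z i - w i‖ * ∏ j ∈ (insert a s').erase i, c j
        = ‖z a - w a‖ * (∏ j ∈ s', c j)
            + c a * ∑ i ∈ s', ‖z i - w i‖ * ∏ j ∈ s'.erase i, c j := by
      rw [Finset.sum_insert ha, Finset.erase_insert ha, Finset.mul_sum]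
      congr 1
      apply Finset.sum_congr rfl
      intro i hi
      have hia : i ≠ a := fun h => ha (h ▸ hi)
      have hnotmem : a ∉ s'.erase i := fun h => ha (Finset.mem_of_mem_erase h)
      rw [Finset.erase_insert_of_ne (Ne.symm hia), Finset.prod_insert hnotmem]
      ring
    rw [hre]
    linarith


lemma integrable_of_norm_le_one [IsProbabilityMeasure μ] {f : Ω → ℂ}
    (hf : AEStronglyMeasurable f μ) (h : ∀ ω, ‖f ω‖ ≤ 1) : Integrable f μ :=
  Integrable.mono' (integrable_const 1) hf (Filter.Eventually.of_forall h)

lemma indepFun_integral_mul_complex {f g : Ω → ℂ} (h : IndepFun f g μ)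
    (hf : Integrable f μ) (hg : Integrable g μ) :
    ∫ ω, f ω * g ω ∂μ = (∫ ω, f ω ∂μ) * ∫ ω, g ω ∂μ := by
  have hprod : Integrable (fun ω => f ω * g ω) μ := by
    have := h.integrable_mul hf hg
    exact this
  have hrr : IndepFun (fun ω => (f ω).re) (fun ω => (g ω).re) μ :=
    h.comp Complex.measurable_re Complex.measurable_re
  have hri : IndepFun (fun ω => (f ω).re) (fun ω => (g ω).im) μ :=
    h.comp Complex.measurable_re Complex.measurable_im
  have hir : IndepFun (fun ω => (f ω).im) (fun ω => (g ω).re) μ :=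
    h.comp Complex.measurable_im Complex.measurable_re
  have hii : IndepFun (fun ω => (f ω).im) (fun ω => (g ω).im) μ :=
    h.comp Complex.measurable_im Complex.measurable_im
  have mfr : AEStronglyMeasurable (fun ω => (f ω).re) μ := hf.re.1
  have mfi : AEStronglyMeasurable (fun ω => (f ω).im) μ := hf.im.1
  have mgr : AEStronglyMeasurable (fun ω => (g ω).re) μ := hg.re.1
  have mgi : AEStronglyMeasurable (fun ω => (g ω).im) μ := hg.im.1
  have irr : Integrable (fun ω => (f ω).re * (g ω).re) μ := by
    exact hrr.integrable_mul hf.re hg.re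
  have iii : Integrable (fun ω => (f ω).im * (g ω).im) μ := by
    exact hii.integrable_mul hf.im hg.im
  have iri : Integrable (fun ω => (f ω).re * (g ω).im) μ := by
    exact hri.integrable_mul hf.re hg.im
  have iir : Integrable (fun ω => (f ω).im * (g ω).re) μ := by
    exact hir.integrable_mul hf.im hg.re
  have Hfg_re : (∫ ω, f ω * g ω ∂μ).re = ∫ ω, (f ω * g ω).re ∂μ := by
    have := integral_re hprod
    simp only [RCLike.re_to_complex] at this
    exact this.symm
  have Hfg_im : (∫ ω, f ω * g ω ∂μ).im = ∫ ω, (f ω * g ω).im ∂μ := by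
    have := integral_im hprod
    simp only [RCLike.im_to_complex] at this
    exact this.symm
  have Hf_re : (∫ ω, f ω ∂μ).re = ∫ ω, (f ω).re ∂μ := by
    have := integral_re hf
    simp only [RCLike.re_to_complex] at this
    exact this.symm
  have Hf_im : (∫ ω, f ω ∂μ).im = ∫ ω, (f ω).im ∂μ := by
    have := integral_im hf
    simp only [RCLike.im_to_complex] at this
    exact this.symm
  have Hg_re : (∫ ω, g ω ∂μ).re = ∫ ω, (g ω).re ∂μ := by
    have := integral_re hg
    simp only [RCLike.re_to_complex] at this
    exact this.symm
  have Hg_im : (∫ ω, g ω ∂μ).im = ∫ ω, (g ω).im ∂μ := by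
    have := integral_im hg
    simp only [RCLike.im_to_complex] at this
    exact this.symm
  apply Complex.ext
  · rw [Complex.mul_re, Hfg_re, Hf_re, Hf_im, Hg_re, Hg_im]
    calc ∫ ω, (f ω * g ω).re ∂μ
        = ∫ ω, ((f ω).re * (g ω).re - (f ω).im * (g ω).im) ∂μ := by
          simp only [Complex.mul_re]
      _ = (∫ ω, (f ω).re * (g ω).re ∂μ) - ∫ ω, (f ω).im * (g ω).im ∂μ :=
          integral_sub irr iii
      _ = (∫ ω, (f ω).re ∂μ) * (∫ ω, (g ω).re ∂μ)
            - (∫ ω, (f ω).im ∂μ) * ∫ ω, (g ω).im ∂μ := by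
          rw [hrr.integral_fun_mul_eq_mul_integral mfr mgr, hii.integral_fun_mul_eq_mul_integral mfi mgi]
  · rw [Complex.mul_im, Hfg_im, Hf_re, Hf_im, Hg_re, Hg_im]
    calc ∫ ω, (f ω * g ω).im ∂μ
        = ∫ ω, ((f ω).re * (g ω).im + (f ω).im * (g ω).re) ∂μ := by
          simp only [Complex.mul_im]
      _ = (∫ ω, (f ω).re * (g ω).im ∂μ) + ∫ ω, (f ω).im * (g ω).re ∂μ :=
          integral_add iri iir
      _ = (∫ ω, (f ω).re ∂μ) * (∫ ω, (g ω).im ∂μ)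
            + (∫ ω, (f ω).im ∂μ) * ∫ ω, (g ω).re ∂μ := by
          rw [hri.integral_fun_mul_eq_mul_integral mfr mgi, hir.integral_fun_mul_eq_mul_integral mfi mgr]


lemma integral_finset_prod_of_indep [IsProbabilityMeasure μ] {n : ℕ} (g : Fin n → Ω → ℂ)
    (hmeas : ∀ i, Measurable (g i))
    (hindep : iIndepFun g μ)
    (hbd : ∀ i ω, ‖g i ω‖ ≤ 1) (s : Finset (Fin n)) :
    ∫ ω, ∏ i ∈ s, g i ω ∂μ = ∏ i ∈ s, ∫ ω, g i ω ∂μ := by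
  have hint : ∀ t : Finset (Fin n), Integrable (fun ω => ∏ i ∈ t, g i ω) μ := by
    intro t
    apply integrable_of_norm_le_one
    · exact (Finset.measurable_prod t (fun i _ => hmeas i)).aestronglyMeasurable
    · intro ω
      calc ‖∏ i ∈ t, g i ω‖ ≤ ∏ i ∈ t, ‖g i ω‖ := Finset.norm_prod_le _ _
        _ ≤ ∏ i ∈ t, (1:ℝ) := Finset.prod_le_prod (fun i _ => norm_nonneg _)
            (fun i _ => hbd i ω)
        _ = 1 := Finset.prod_const_one
  induction s using Finset.induction_on with
  | empty => simp
  | @insert a s' ha ih =>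
    have hind : IndepFun (∏ j ∈ s', g j) (g a) μ :=
      hindep.indepFun_finsetProd_of_notMem hmeas ha
    have hP : Integrable (∏ j ∈ s', g j) μ := by
      have : (∏ j ∈ s', g j) = fun ω => ∏ j ∈ s', g j ω := by
        funext ω; exact Finset.prod_apply ω s' g
      rw [this]; exact hint s'
    have hga : Integrable (g a) μ :=
      integrable_of_norm_le_one (hmeas a).aestronglyMeasurable (hbd a)
    have key := indepFun_integral_mul_complex hind.symm hga hP
    have e : (fun ω => ∏ i ∈ insert a s', g i ω)
        = fun ω => g a ω * (∏ j ∈ s', g j) ω := by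
      funext ω
      rw [Finset.prod_insert ha, Finset.prod_apply]
    rw [e]
    simp only [key]
    rw [Finset.prod_insert ha, ← ih]
    congr 1
    apply integral_congr_ae
    filter_upwards with ω
    exact Finset.prod_apply ω s' g


lemma charfn_taylor [IsProbabilityMeasure μ] (X : Ω → ℝ) (hm : Measurable X)
    (h1 : Integrable X μ) (hmean : ∫ ω, X ω ∂μ = 0)
    (h2 : Integrable (fun ω => X ω ^ 2) μ) (h3 : Integrable (fun ω => |X ω| ^ 3) μ)
    (l : ℝ) (hl : 0 < l) :
    ‖(∫ ω, Complex.exp ((l * X ω : ℝ) * Complex.I) ∂μ)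
        - ((1 - l^2 * (∫ ω, X ω ^ 2 ∂μ) / 2 : ℝ) : ℂ)‖
      ≤ 4 * l^3 * ∫ ω, |X ω| ^ 3 ∂μ := by
  have hgmeas : Measurable (fun ω => Complex.exp ((l * X ω : ℝ) * Complex.I)) :=
    Complex.measurable_exp.comp ((Complex.measurable_ofReal.comp (hm.const_mul l)).mul_const _)
  have hgint : Integrable (fun ω => Complex.exp ((l * X ω : ℝ) * Complex.I)) μ := by
    apply integrable_of_norm_le_one hgmeas.aestronglyMeasurable
    intro ω
    rw [Complex.norm_exp_ofReal_mul_I]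
  have hY : Integrable (fun ω => l * X ω) μ := h1.const_mul l
  have hYc : Integrable (fun ω => ((l * X ω : ℝ) : ℂ)) μ := hY.ofReal
  have hY2 : Integrable (fun ω => (l * X ω) ^ 2) μ := by
    have : (fun ω => (l * X ω)^2) = fun ω => l^2 * X ω ^2 := by funext ω; ring
    rw [this]; exact h2.const_mul _
  have hY2c : Integrable (fun ω => (((l * X ω) ^ 2 : ℝ) : ℂ)) μ := hY2.ofReal
  -- integrals of the polynomial part
  have hIY : ∫ ω, ((l * X ω : ℝ) : ℂ) ∂μ = 0 := by
    have h : ∫ ω, l * X ω ∂μ = 0 := by rw [integral_const_mul, hmean]; ring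
    calc ∫ ω, ((l * X ω : ℝ) : ℂ) ∂μ = ((∫ ω, l * X ω ∂μ : ℝ) : ℂ) := integral_ofReal
      _ = 0 := by rw [h]; simp
  have hIY2 : ∫ ω, (((l * X ω) ^ 2 : ℝ) : ℂ) ∂μ = ((l^2 * ∫ ω, X ω ^ 2 ∂μ : ℝ) : ℂ) := by
    have h : ∫ ω, (l * X ω)^2 ∂μ = l^2 * ∫ ω, X ω ^ 2 ∂μ := by
      have e : (fun ω => (l * X ω)^2) = fun ω => l^2 * X ω ^2 := by funext ω; ring
      rw [e, integral_const_mul]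
    calc ∫ ω, (((l * X ω)^2 : ℝ) : ℂ) ∂μ = ((∫ ω, (l * X ω)^2 ∂μ : ℝ) : ℂ) := integral_ofReal
      _ = ((l^2 * ∫ ω, X ω ^ 2 ∂μ : ℝ) : ℂ) := by rw [h]
  -- the remainder function
  set D : Ω → ℂ := fun ω =>
    Complex.exp ((l * X ω : ℝ) * Complex.I)
      - (1 + ((l * X ω : ℝ) : ℂ) * Complex.I - (((l * X ω : ℝ) : ℂ))^2 / 2) with hD
  have hpoly : Integrable (fun ω =>
      (1 + ((l * X ω : ℝ) : ℂ) * Complex.I - (((l * X ω : ℝ) : ℂ))^2 / 2)) μ := by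
    apply Integrable.sub
    · exact (integrable_const 1).add (hYc.mul_const _)
    · have : (fun ω => (((l * X ω : ℝ) : ℂ))^2 / 2)
          = fun ω => (((l * X ω)^2 : ℝ) : ℂ) * (2:ℂ)⁻¹ := by
        funext ω; push_cast; ring
      rw [this]
      exact hY2c.mul_const _
  have hDint : Integrable D μ := hgint.sub hpoly
  have hkey : ∫ ω, D ω ∂μ
      = (∫ ω, Complex.exp ((l * X ω : ℝ) * Complex.I) ∂μ)
        - ((1 - l^2 * (∫ ω, X ω ^ 2 ∂μ) / 2 : ℝ) : ℂ) := by
    rw [hD]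
    rw [integral_sub hgint hpoly]
    congr 1
    have e2 : (fun ω => (1 + ((l * X ω : ℝ) : ℂ) * Complex.I - (((l * X ω : ℝ) : ℂ))^2 / 2))
        = fun ω => (1 + ((l * X ω : ℝ) : ℂ) * Complex.I - (((l * X ω)^2 : ℝ) : ℂ) / 2) := by
      funext ω; push_cast; ring
    rw [e2]
    have i1 : Integrable (fun ω => (1:ℂ) + ((l * X ω : ℝ) : ℂ) * Complex.I) μ :=
      (integrable_const 1).add (hYc.mul_const _)
    have i2 : Integrable (fun ω => (((l * X ω) ^ 2 : ℝ) : ℂ) / 2) μ := hY2c.div_const _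
    rw [integral_sub i1 i2]
    rw [integral_add (integrable_const (1:ℂ)) (hYc.mul_const Complex.I)]
    rw [integral_mul_const, integral_div, hIY, hIY2]
    simp only [integral_const, probReal_univ, one_smul, zero_mul]
    push_cast
    ring
  rw [← hkey]
  have hbound : ∀ ω, ‖D ω‖ ≤ 4 * l^3 * |X ω|^3 := by
    intro ω
    have := taylor3 (l * X ω)
    have habs : |l * X ω|^3 = l^3 * |X ω|^3 := by
      rw [abs_mul, abs_of_pos hl, mul_pow]
    rw [habs] at this
    calc ‖D ω‖ ≤ 4 * (l^3 * |X ω|^3) := this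
      _ = 4 * l^3 * |X ω|^3 := by ring
  calc ‖∫ ω, D ω ∂μ‖ ≤ ∫ ω, ‖D ω‖ ∂μ := norm_integral_le_integral_norm _
    _ ≤ ∫ ω, 4 * l^3 * |X ω|^3 ∂μ :=
        integral_mono hDint.norm (h3.const_mul (4 * l^3)) hbound
    _ = 4 * l^3 * ∫ ω, |X ω|^3 ∂μ := integral_const_mul _ _

end BiasAux

set_option maxHeartbeats 2000000 in
/-- Bias of the exponentially corrected cosine of a standardized sum of independent centered
random variables: the distributional core of Lemma 5.1. -/
theorem bias_corrected_cosine_of_standardized_sum :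
    ∃ A : ℝ, 0 < A ∧
      ∀ (Ω : Type) [MeasurableSpace Ω] (μ : Measure Ω) [IsProbabilityMeasure μ]
        (n : ℕ), 1 ≤ n →
        ∀ (X : Fin n → Ω → ℝ) (Δ : ℝ), 0 ≤ Δ →
          (∀ i, Measurable (X i)) →
          iIndepFun X μ →
          (∀ i, Integrable (X i) μ) →
          (∀ i, (∫ ω, X i ω ∂μ) = 0) →
          (∀ i, Integrable (fun ω => (X i ω) ^ 2) μ) →
          (∑ i, ∫ ω, (X i ω) ^ 2 ∂μ) = 1 →
          (∀ i, Integrable (fun ω => |X i ω| ^ 3) μ) →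
          (∑ i, ∫ ω, |X i ω| ^ 3 ∂μ) ≤ Δ →
          ∀ (a l : ℝ), 0 < l →
            |Real.exp (l ^ 2 / 2) * (∫ ω, Real.cos (a + l * ∑ i, X i ω) ∂μ)
                - Real.cos a|
              ≤ A * l * Δ * Real.exp (l ^ 2 / 2) := by
  classical
  refine ⟨100 * Real.exp 5, by positivity, ?_⟩
  intro Ω mΩ μ _ n hn X Δ hΔ hXm hindep hXint hXmean hX2int hX2sum hX3int hX3sum a l hl
  have hexp5 : (1:ℝ) ≤ Real.exp 5 := Real.one_le_exp (by norm_num)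
  set q : Fin n → ℝ := fun i => ∫ ω, X i ω ^ 2 ∂μ with hqdef
  set β : Fin n → ℝ := fun i => ∫ ω, |X i ω| ^ 3 ∂μ with hβdef
  have hq0 : ∀ i, 0 ≤ q i := fun i => integral_nonneg fun ω => sq_nonneg _
  have hβ0 : ∀ i, 0 ≤ β i := fun i => integral_nonneg fun ω => by positivity
  have hlyap : ∀ i, (q i)^3 ≤ (β i)^2 := fun i =>
    BiasAux.lyapunov (X i) (hXm i) (hXint i) (hX2int i) (hX3int i)
  have hβsum : ∑ i, β i ≤ Δ := hX3sum
  have hβsum0 : 0 ≤ ∑ i, β i := Finset.sum_nonneg fun i _ => hβ0 i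
  have hβΔ : ∀ i, β i ≤ Δ := fun i =>
    le_trans (Finset.single_le_sum (fun j _ => hβ0 j) (Finset.mem_univ i)) hX3sum
  have hqsum : ∑ i, q i = 1 := hX2sum
  have hq1 : ∀ i, q i ≤ 1 := fun i => by
    rw [← hqsum]; exact Finset.single_le_sum (fun j _ => hq0 j) (Finset.mem_univ i)
  -- the complex characteristic factors
  set g : Fin n → Ω → ℂ := fun i ω => Complex.exp ((l * X i ω : ℝ) * Complex.I) with hgdef
  have hgmeas : ∀ i, Measurable (g i) := fun i =>
    Complex.measurable_exp.comp
      ((Complex.measurable_ofReal.comp ((hXm i).const_mul l)).mul_const _)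
  have hgnorm : ∀ i ω, ‖g i ω‖ = 1 := fun i ω => by
    simp only [hgdef]
    exact Complex.norm_exp_ofReal_mul_I _
  have hgbd : ∀ i ω, ‖g i ω‖ ≤ 1 := fun i ω => le_of_eq (hgnorm i ω)
  have hgindep : iIndepFun g μ := by
    have hm : ∀ _i : Fin n, Measurable (fun y : ℝ => Complex.exp ((l * y : ℝ) * Complex.I)) :=
      fun _i => Complex.measurable_exp.comp
        ((Complex.measurable_ofReal.comp (measurable_id.const_mul l)).mul_const _)
    exact hindep.comp (fun _i (y : ℝ) => Complex.exp ((l * y : ℝ) * Complex.I)) hm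
  set φ : Fin n → ℂ := fun i => ∫ ω, g i ω ∂μ with hφdef
  have hgint : ∀ i, Integrable (g i) μ := fun i =>
    BiasAux.integrable_of_norm_le_one (hgmeas i).aestronglyMeasurable (hgbd i)
  have hφnorm : ∀ i, ‖φ i‖ ≤ 1 := fun i => by
    calc ‖φ i‖ ≤ ∫ ω, ‖g i ω‖ ∂μ := norm_integral_le_integral_norm _
      _ = ∫ ω, (1:ℝ) ∂μ := integral_congr_ae (Filter.Eventually.of_forall fun ω => hgnorm i ω)
      _ = 1 := by simp
  -- Step 1 : the basic identity
  have hprodint : ∫ ω, ∏ i, g i ω ∂μ = ∏ i, φ i :=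
    BiasAux.integral_finset_prod_of_indep g hgmeas hgindep hgbd Finset.univ
  have hcosid : ∫ ω, Real.cos (a + l * ∑ i, X i ω) ∂μ
      = (Complex.exp ((a:ℝ) * Complex.I) * ∏ i, φ i).re := by
    have hpt : ∀ ω, Real.cos (a + l * ∑ i, X i ω)
        = (Complex.exp ((a:ℝ) * Complex.I) * ∏ i, g i ω).re := by
      intro ω
      rw [← Complex.exp_ofReal_mul_I_re]
      congr 1
      have hsplit : ((a + l * ∑ i, X i ω : ℝ) : ℂ) * Complex.I
          = ((a:ℝ):ℂ) * Complex.I + ∑ i, ((l * X i ω : ℝ) : ℂ) * Complex.I := by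
        rw [← Finset.sum_mul, ← add_mul]
        congr 1
        push_cast
        rw [Finset.mul_sum]
      rw [hsplit, Complex.exp_add, Complex.exp_sum]
    have hintg : Integrable (fun ω => Complex.exp ((a:ℝ) * Complex.I) * ∏ i, g i ω) μ := by
      apply BiasAux.integrable_of_norm_le_one
      · exact (measurable_const.mul
          (Finset.measurable_prod Finset.univ (fun i _ => hgmeas i))).aestronglyMeasurable
      · intro ω
        rw [norm_mul]
        have h1 : ‖Complex.exp ((a:ℝ) * Complex.I)‖ = 1 := by
          rw [Complex.norm_exp_ofReal_mul_I]
        have h2 : ‖∏ i, g i ω‖ ≤ 1 := by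
          calc ‖∏ i, g i ω‖ ≤ ∏ i, ‖g i ω‖ := Finset.norm_prod_le _ _
            _ ≤ ∏ _i : Fin n, (1:ℝ) := Finset.prod_le_prod
                (fun i _ => norm_nonneg _) (fun i _ => hgbd i ω)
            _ = 1 := Finset.prod_const_one
        rw [h1, one_mul]
        exact h2
    calc ∫ ω, Real.cos (a + l * ∑ i, X i ω) ∂μ
        = ∫ ω, (Complex.exp ((a:ℝ) * Complex.I) * ∏ i, g i ω).re ∂μ :=
          integral_congr_ae (Filter.Eventually.of_forall hpt)
      _ = (∫ ω, Complex.exp ((a:ℝ) * Complex.I) * ∏ i, g i ω ∂μ).re := by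
          have := integral_re hintg
          simp only [RCLike.re_to_complex] at this
          exact this
      _ = (Complex.exp ((a:ℝ) * Complex.I) * ∏ i, φ i).re := by
          rw [integral_const_mul, hprodint]
  -- Step 2 : reduction to the characteristic function estimate
  set P : ℂ := ∏ i, φ i with hPdef
  set r : ℝ := Real.exp (-(l^2)/2) with hrdef
  have hrc : Real.exp (l^2/2) * r = 1 := by
    have h0 : l^2/2 + -(l^2)/2 = 0 := by ring
    rw [hrdef, ← Real.exp_add, h0, Real.exp_zero]
  suffices hE : ‖P - (r:ℂ)‖ ≤ 100 * Real.exp 5 * (l * Δ) by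
    rw [hcosid]
    have hcpos : 0 < Real.exp (l^2/2) := Real.exp_pos _
    have hre : (Complex.exp ((a:ℝ) * Complex.I) * (r:ℂ)).re = Real.cos a * r := by
      rw [Complex.mul_re]
      simp [Complex.ofReal_re, Complex.ofReal_im, Complex.exp_ofReal_mul_I_re]
    have hconst : Real.exp (l^2/2) * (Real.cos a * r) = Real.cos a := by
      calc Real.exp (l^2/2) * (Real.cos a * r) = Real.cos a * (Real.exp (l^2/2) * r) := by ring
        _ = Real.cos a := by rw [hrc, mul_one]
    have hrw : Real.exp (l^2/2) * (Complex.exp ((a:ℝ) * Complex.I) * P).re - Real.cos a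
        = Real.exp (l^2/2) * ((Complex.exp ((a:ℝ) * Complex.I) * (P - (r:ℂ))).re) := by
      rw [mul_sub, Complex.sub_re, hre, mul_sub, hconst]
    rw [hrw, abs_mul, abs_of_pos hcpos]
    have habs2 : |(Complex.exp ((a:ℝ) * Complex.I) * (P - (r:ℂ))).re| ≤ ‖P - (r:ℂ)‖ := by
      calc |(Complex.exp ((a:ℝ) * Complex.I) * (P - (r:ℂ))).re|
          ≤ ‖Complex.exp ((a:ℝ) * Complex.I) * (P - (r:ℂ))‖ :=
            Complex.abs_re_le_norm _
        _ = ‖Complex.exp ((a:ℝ) * Complex.I)‖ * ‖P - (r:ℂ)‖ :=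
            norm_mul _ _
        _ = ‖P - (r:ℂ)‖ := by
            rw [Complex.norm_exp_ofReal_mul_I, one_mul]
    calc Real.exp (l^2/2) * |(Complex.exp ((a:ℝ) * Complex.I) * (P - (r:ℂ))).re|
        ≤ Real.exp (l^2/2) * (100 * Real.exp 5 * (l * Δ)) :=
          mul_le_mul_of_nonneg_left (le_trans habs2 hE) hcpos.le
      _ = 100 * Real.exp 5 * l * Δ * Real.exp (l^2/2) := by ring
  -- per-factor exponential bounds
  set e : Fin n → ℝ := fun i => -(l^2 * q i)/2 + 4*l^3*β i with hedef
  have hTaylor : ∀ i, ‖φ i - ((1 - l^2 * q i / 2 : ℝ) : ℂ)‖ ≤ 4 * l^3 * β i := fun i =>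
    BiasAux.charfn_taylor (X i) (hXm i) (hXint i) (hXmean i) (hX2int i) (hX3int i) l hl
  have hφe : ∀ i, ‖φ i‖ ≤ Real.exp (e i) := by
    intro i
    have h5 : e i = -(l^2 * q i)/2 + 4*l^3*β i := by rw [hedef]
    rcases le_or_gt (l^2 * q i) 1 with hsm | hbig
    · have hT := hTaylor i
      have h1 : ‖φ i‖ ≤ ‖((1 - l^2 * q i / 2 : ℝ) : ℂ)‖ + 4*l^3*β i := by
        have h := norm_add_le (φ i - ((1 - l^2 * q i / 2 : ℝ) : ℂ))
          (((1 - l^2 * q i / 2 : ℝ) : ℂ))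
        rw [sub_add_cancel] at h
        linarith
      have h2 : ‖((1 - l^2 * q i / 2 : ℝ) : ℂ)‖ = 1 - l^2 * q i / 2 := by
        rw [Complex.norm_real, Real.norm_eq_abs, abs_of_nonneg]
        linarith
      have h4 : e i + 1 ≤ Real.exp (e i) := Real.add_one_le_exp (e i)
      rw [h2] at h1
      calc ‖φ i‖ ≤ 1 - l^2 * q i / 2 + 4*l^3*β i := h1
        _ = e i + 1 := by rw [h5]; ring
        _ ≤ Real.exp (e i) := h4
    · have hqpos : 0 < q i := by nlinarith [sq_nonneg l]
      have hstep : (q i)^2 < (l * β i)^2 := by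
        have hA : l^2 * (q i)^3 ≤ l^2 * (β i)^2 := by nlinarith [hlyap i, sq_nonneg l]
        have hB : 0 < (q i)^2 * (l^2 * q i - 1) :=
          mul_pos (pow_pos hqpos 2) (by linarith)
        nlinarith [hA, hB]
      have hlb : q i ≤ l * β i := by
        nlinarith [hq0 i, mul_nonneg hl.le (hβ0 i), sq_nonneg (q i + l * β i)]
      have h0 : 0 ≤ e i := by
        rw [h5]
        nlinarith [mul_nonneg (sq_nonneg l) (sub_nonneg.mpr hlb), sq_nonneg l,
          mul_nonneg (sq_nonneg l) (hq0 i)]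
      calc ‖φ i‖ ≤ 1 := hφnorm i
        _ ≤ Real.exp (e i) := Real.one_le_exp h0
  have hsum_e : ∑ i, e i = -(l^2)/2 + 4*l^3*(∑ i, β i) := by
    rw [hedef, Finset.sum_add_distrib]
    congr 1
    · have h1 : ∀ i ∈ Finset.univ, -(l^2 * q i)/2 = (-(l^2)/2) * q i := fun i _ => by ring
      rw [Finset.sum_congr rfl h1, ← Finset.mul_sum, hqsum, mul_one]
    · have h2 : ∀ i ∈ Finset.univ, 4*l^3*β i = 4*l^3 * β i := fun i _ => rfl
      rw [← Finset.mul_sum]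
  rcases le_or_gt (l * Δ) (1/16) with hcase1 | hcase1
  · -- small l * Δ
    have hPle : ‖P‖ ≤ Real.exp (-(l^2)/2 + 4*l^3*(∑ i, β i)) := by
      calc ‖P‖ ≤ ∏ i, ‖φ i‖ := Finset.norm_prod_le _ _
        _ ≤ ∏ i, Real.exp (e i) :=
            Finset.prod_le_prod (fun i _ => norm_nonneg _) (fun i _ => hφe i)
        _ = Real.exp (∑ i, e i) := (Real.exp_sum _ _).symm
        _ = Real.exp (-(l^2)/2 + 4*l^3*(∑ i, β i)) := by rw [hsum_e]
    have hP4 : ‖P‖ ≤ Real.exp (-(l^2)/4) := by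
      refine le_trans hPle (Real.exp_le_exp.mpr ?_)
      have : 4*l^3*(∑ i, β i) ≤ 4*l^3*Δ := by
        apply mul_le_mul_of_nonneg_left hβsum (by positivity)
      nlinarith [sq_nonneg l]
    rcases le_or_gt (l^3 * Δ) 1 with hcase2 | hcase2
    · -- main regime : termwise comparison
      set w : Fin n → ℂ := fun i => ((Real.exp (-(l^2 * q i)/2) : ℝ) : ℂ) with hwdef
      have hprodw : ∏ i, w i = (r:ℂ) := by
        rw [hwdef, hrdef, ← Complex.ofReal_prod, ← Real.exp_sum]
        have h1 : ∀ i ∈ Finset.univ, -(l^2 * q i)/2 = (-(l^2)/2) * q i := fun i _ => by ring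
        rw [Finset.sum_congr rfl h1, ← Finset.mul_sum, hqsum, mul_one]
      have hwe : ∀ i, ‖w i‖ ≤ Real.exp (e i) := by
        intro i
        rw [hwdef, Complex.norm_real, Real.norm_eq_abs, abs_of_pos (Real.exp_pos _)]
        apply Real.exp_le_exp.mpr
        rw [hedef]
        have : 0 ≤ 4*l^3*β i := by
          have := mul_nonneg (pow_pos hl 3).le (hβ0 i)
          linarith
        linarith
      have hl2q : ∀ i, l^2 * q i ≤ 1 := by
        intro i
        have h6 : (l^2 * q i)^3 ≤ 1 := by
          have e1 : (l^2 * q i)^3 = l^6 * (q i)^3 := by ring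
          have e2 : l^6 * (q i)^3 ≤ l^6 * (β i)^2 := by
            apply mul_le_mul_of_nonneg_left (hlyap i) (by positivity)
          have e3 : l^6 * (β i)^2 ≤ (l^3 * Δ)^2 := by
            have : (l^3 * β i)^2 ≤ (l^3 * Δ)^2 := by
              apply pow_le_pow_left₀ (by positivity) ?_ 2
              exact mul_le_mul_of_nonneg_left (hβΔ i) (by positivity)
            calc l^6 * (β i)^2 = (l^3 * β i)^2 := by ring
              _ ≤ (l^3 * Δ)^2 := this
          have e4 : (l^3 * Δ)^2 ≤ 1 := by nlinarith [mul_nonneg (pow_pos hl 3).le hΔ]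
          calc (l^2 * q i)^3 = l^6 * (q i)^3 := e1
            _ ≤ l^6 * (β i)^2 := e2
            _ ≤ (l^3 * Δ)^2 := e3
            _ ≤ 1 := e4
        nlinarith [mul_nonneg (sq_nonneg l) (hq0 i), sq_nonneg (l^2*q i - 1),
          sq_nonneg (l^2*q i + 1)]
      have hφw : ∀ i, ‖φ i - w i‖ ≤ 5 * l^3 * β i := by
        intro i
        have ht0 : 0 ≤ l^2 * q i / 2 := by
          have := mul_nonneg (sq_nonneg l) (hq0 i); linarith
        have hmid : ‖((1 - l^2 * q i/2 : ℝ):ℂ) - w i‖ ≤ (l^2 * q i/2)^2 := by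
          simp only [hwdef]
          rw [show ((Real.exp (-(l^2 * q i)/2) : ℝ) : ℂ) = ((Real.exp (-(l^2 * q i/2)) : ℝ) : ℂ)
            by norm_num [neg_div]]
          rw [← Complex.ofReal_sub, Complex.norm_real, Real.norm_eq_abs]
          rw [abs_sub_comm]
          exact BiasAux.exp_neg_sub_one_sub (l^2 * q i/2) ht0
        have hq2 : l * (q i)^2 ≤ β i := by
          have h7 : (l * (q i)^2)^2 ≤ (β i)^2 := by
            have e1 : (l * (q i)^2)^2 = (l^2 * q i) * (q i)^3 := by ring
            have e2 : (l^2 * q i) * (q i)^3 ≤ 1 * (β i)^2 := by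
              apply mul_le_mul (hl2q i) (hlyap i) (by positivity) (by norm_num)
            rw [e1]; linarith
          nlinarith [hβ0 i, mul_nonneg hl.le (sq_nonneg (q i)),
            sq_nonneg (l * (q i)^2 + β i)]
        have ht2 : (l^2 * q i/2)^2 ≤ l^3 * β i := by
          calc (l^2 * q i/2)^2 = l^3 * (l * (q i)^2) / 4 := by ring
            _ ≤ l^3 * β i / 4 := by
                have := mul_le_mul_of_nonneg_left hq2 (le_of_lt (pow_pos hl 3))
                linarith
            _ ≤ l^3 * β i := by
                have : 0 ≤ l^3 * β i := mul_nonneg (pow_pos hl 3).le (hβ0 i)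
                linarith
        have htri := norm_add_le (φ i - ((1 - l^2 * q i/2 : ℝ):ℂ))
          (((1 - l^2 * q i/2 : ℝ):ℂ) - w i)
        rw [sub_add_sub_cancel] at htri
        calc ‖φ i - w i‖ ≤ ‖φ i - ((1 - l^2 * q i/2 : ℝ):ℂ)‖
              + ‖((1 - l^2 * q i/2 : ℝ):ℂ) - w i‖ := htri
          _ ≤ 4*l^3*β i + (l^2 * q i/2)^2 := add_le_add (hTaylor i) hmid
          _ ≤ 4*l^3*β i + l^3*β i := by linarith [ht2]
          _ = 5*l^3*β i := by ring
      have hEsum : ‖P - (r:ℂ)‖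
          ≤ ∑ i, ‖φ i - w i‖ * ∏ j ∈ Finset.univ.erase i, Real.exp (e j) := by
        rw [hPdef, ← hprodw]
        exact BiasAux.norm_prod_sub_prod Finset.univ φ w (fun j => Real.exp (e j))
          (fun j => (Real.exp_pos _).le) (fun j _ => hφe j) (fun j _ => hwe j)
      have herase : ∀ i : Fin n, ∏ j ∈ Finset.univ.erase i, Real.exp (e j)
          ≤ Real.exp 5 * Real.exp (-(l^2)/2) := by
        intro i
        rw [← Real.exp_sum, ← Real.exp_add]
        apply Real.exp_le_exp.mpr
        have hsume : ∑ j ∈ Finset.univ.erase i, e j = (∑ j, e j) - e i :=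
          Finset.sum_erase_eq_sub (Finset.mem_univ i)
        rw [hsume, hsum_e]
        have h8 : e i = -(l^2 * q i)/2 + 4*l^3*β i := by rw [hedef]
        rw [h8]
        have h9 : 4*l^3*(∑ j, β j) ≤ 4 := by
          have ha : 4*l^3*(∑ j, β j) ≤ 4*l^3*Δ :=
            mul_le_mul_of_nonneg_left hβsum (by positivity)
          nlinarith [pow_pos hl 3]
        have h10 : l^2 * q i / 2 ≤ 1/2 := by linarith [hl2q i]
        have h11 : 0 ≤ 4*l^3*β i := by
          have := mul_nonneg (pow_pos hl 3).le (hβ0 i)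
          linarith
        linarith
      have hfinal : ∑ i, ‖φ i - w i‖ * ∏ j ∈ Finset.univ.erase i, Real.exp (e j)
          ≤ (∑ i, 5*l^3*β i) * (Real.exp 5 * Real.exp (-(l^2)/2)) := by
        rw [Finset.sum_mul]
        apply Finset.sum_le_sum
        intro i _
        apply mul_le_mul (hφw i) (herase i)
          (Finset.prod_nonneg fun j _ => (Real.exp_pos _).le)
          (by positivity)
      have hsumβ : (∑ i, 5*l^3*β i) = 5*l^3*(∑ i, β i) := by
        rw [← Finset.mul_sum]
      have hl2r : l^2 * Real.exp (-(l^2)/2) ≤ 2 := by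
        have hA := Real.add_one_le_exp (l^2/2)
        have hid : Real.exp (-(l^2)/2) = (Real.exp (l^2/2))⁻¹ := by
          rw [← Real.exp_neg]
          congr 1
          ring
        have hpos := Real.exp_pos (l^2/2)
        rw [hid]
        calc l^2 * (Real.exp (l^2/2))⁻¹ ≤ (2 * Real.exp (l^2/2)) * (Real.exp (l^2/2))⁻¹ := by
              apply mul_le_mul_of_nonneg_right ?_ (inv_nonneg.mpr hpos.le)
              linarith
          _ = 2 := by field_simp
      have hchain : 5*l^3*(∑ i, β i) * (Real.exp 5 * Real.exp (-(l^2)/2))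
          ≤ 100 * Real.exp 5 * (l * Δ) := by
        have c1 : 5*l^3*(∑ i, β i) * (Real.exp 5 * Real.exp (-(l^2)/2))
            ≤ 5*l^3*Δ * (Real.exp 5 * Real.exp (-(l^2)/2)) := by
          apply mul_le_mul_of_nonneg_right ?_ (by positivity)
          apply mul_le_mul_of_nonneg_left hβsum (by positivity)
        have c2 : 5*l^3*Δ * (Real.exp 5 * Real.exp (-(l^2)/2))
            = (5*Δ*Real.exp 5*l) * (l^2 * Real.exp (-(l^2)/2)) := by ring
        have c3 : (5*Δ*Real.exp 5*l) * (l^2 * Real.exp (-(l^2)/2))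
            ≤ (5*Δ*Real.exp 5*l) * 2 :=
          mul_le_mul_of_nonneg_left hl2r (by positivity)
        have c4 : (5*Δ*Real.exp 5*l) * 2 = 10 * Real.exp 5 * (l*Δ) := by ring
        have c5 : 10 * Real.exp 5 * (l*Δ) ≤ 100 * Real.exp 5 * (l*Δ) := by
          apply mul_le_mul_of_nonneg_right ?_ (mul_nonneg hl.le hΔ)
          nlinarith [Real.exp_pos 5]
        calc 5*l^3*(∑ i, β i) * (Real.exp 5 * Real.exp (-(l^2)/2))
            ≤ 5*l^3*Δ * (Real.exp 5 * Real.exp (-(l^2)/2)) := c1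
          _ = (5*Δ*Real.exp 5*l) * (l^2 * Real.exp (-(l^2)/2)) := c2
          _ ≤ (5*Δ*Real.exp 5*l) * 2 := c3
          _ = 10 * Real.exp 5 * (l*Δ) := c4
          _ ≤ 100 * Real.exp 5 * (l*Δ) := c5
      calc ‖P - (r:ℂ)‖
          ≤ ∑ i, ‖φ i - w i‖ * ∏ j ∈ Finset.univ.erase i, Real.exp (e j) := hEsum
        _ ≤ (∑ i, 5*l^3*β i) * (Real.exp 5 * Real.exp (-(l^2)/2)) := hfinal
        _ = 5*l^3*(∑ i, β i) * (Real.exp 5 * Real.exp (-(l^2)/2)) := by rw [hsumβ]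
        _ ≤ 100 * Real.exp 5 * (l * Δ) := hchain
    · -- large l, small Δ : both terms are exponentially small
      have h1 : Real.exp (-(l^2)/4) ≤ 4 / l^2 := by
        have := BiasAux.exp_neg_le_inv (l^2/4) (by positivity)
        have heq : -(l^2)/4 = -(l^2/4) := by ring
        rw [heq]
        calc Real.exp (-(l^2/4)) ≤ (l^2/4)⁻¹ := this
          _ = 4 / l^2 := by rw [inv_div]
      have h2 : r ≤ 2 / l^2 := by
        have := BiasAux.exp_neg_le_inv (l^2/2) (by positivity)
        have heq : -(l^2)/2 = -(l^2/2) := by ring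
        rw [hrdef, heq]
        calc Real.exp (-(l^2/2)) ≤ (l^2/2)⁻¹ := this
          _ = 2 / l^2 := by rw [inv_div]
      have h3 : 1 / l^2 ≤ l * Δ := by
        rw [div_le_iff₀ (by positivity)]
        nlinarith
      have hEb : ‖P - (r:ℂ)‖ ≤ ‖P‖ + r := by
        calc ‖P - (r:ℂ)‖ ≤ ‖P‖ + ‖(r:ℂ)‖ := norm_sub_le _ _
          _ = ‖P‖ + r := by
              rw [Complex.norm_real, Real.norm_eq_abs, abs_of_pos (Real.exp_pos _)]
      have : ‖P - (r:ℂ)‖ ≤ 6 / l^2 := by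
        calc ‖P - (r:ℂ)‖ ≤ ‖P‖ + r := hEb
          _ ≤ 4/l^2 + 2/l^2 := add_le_add (le_trans hP4 h1) h2
          _ = 6/l^2 := by ring
      have h6 : (6:ℝ)/l^2 = 6 * (1/l^2) := by ring
      have hlΔ0 : 0 ≤ l * Δ := mul_nonneg hl.le hΔ
      calc ‖P - (r:ℂ)‖ ≤ 6/l^2 := this
        _ = 6 * (1/l^2) := h6
        _ ≤ 6 * (l*Δ) := mul_le_mul_of_nonneg_left h3 (by norm_num)
        _ ≤ 100 * Real.exp 5 * (l*Δ) := by nlinarith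
  · -- trivial regime : l * Δ large
    have hP1 : ‖P‖ ≤ 1 := by
      calc ‖P‖ ≤ ∏ i, ‖φ i‖ := Finset.norm_prod_le _ _
        _ ≤ ∏ _i : Fin n, (1:ℝ) :=
            Finset.prod_le_prod (fun i _ => norm_nonneg _) (fun i _ => hφnorm i)
        _ = 1 := Finset.prod_const_one
    have hr1 : r ≤ 1 := by
      rw [hrdef, Real.exp_le_one_iff]
      nlinarith [sq_nonneg l]
    calc ‖P - (r:ℂ)‖ ≤ ‖P‖ + ‖(r:ℂ)‖ := norm_sub_le _ _
      _ ≤ 1 + 1 := by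
          apply add_le_add hP1
          rw [Complex.norm_real, Real.norm_eq_abs, abs_of_pos (Real.exp_pos _)]
          exact hr1
      _ ≤ 100 * Real.exp 5 * (l*Δ) := by
          have h1 : (2:ℝ) ≤ 100 * (l*Δ) := by nlinarith
          have h2 : 100 * (l*Δ) ≤ 100 * Real.exp 5 * (l*Δ) := by nlinarith
          linarith
end

section
/- Let d ≥ 1, let K ⊆ ℝ^d be a measurable set of finite Lebesgue measure, and let Z : K × Ω → ℝ be a jointly measurable random field on a probability space (Ω, 𝒜, P) with ∫_K E[Z(t)²] dt < ∞. Let δ > 0 and assume that Cov(Z(t), Z(t')) = 0 whenever t, t' ∈ K satisfy |t_p − t'_p| > δ for some coordinate p ∈ {1, …, d}. Then Var(∫_K Z(t) dt) ≤ (2δ)^d · ∫_K Var(Z(t)) dt. -/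
open MeasureTheory ProbabilityTheory

lemma aux_integrable_mul {Ω : Type*} [MeasurableSpace Ω] {μ : Measure Ω}
    {f g : Ω → ℝ} (hf : MemLp f 2 μ) (hg : MemLp g 2 μ) :
    Integrable (fun ω => f ω * g ω) μ := by
  refine Integrable.mono' ((hf.integrable_sq.add hg.integrable_sq).div_const 2)
    (hf.aestronglyMeasurable.mul hg.aestronglyMeasurable) (Filter.Eventually.of_forall ?_)
  intro ω
  show ‖f ω * g ω‖ ≤ (f ω ^ 2 + g ω ^ 2) / 2
  have := sq_nonneg (|f ω| - |g ω|)
  have h1 : ‖f ω * g ω‖ = |f ω| * |g ω| := by rw [Real.norm_eq_abs, abs_mul]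
  have h2 : |f ω| ^ 2 = f ω ^ 2 := sq_abs _
  have h3 : |g ω| ^ 2 = g ω ^ 2 := sq_abs _
  nlinarith [abs_nonneg (f ω), abs_nonneg (g ω)]

lemma aux_abs_integral_mul_le {Ω : Type*} [MeasurableSpace Ω] {μ : Measure Ω}
    {f g : Ω → ℝ} (hf : MemLp f 2 μ) (hg : MemLp g 2 μ) :
    ∫ ω, ‖f ω * g ω‖ ∂μ ≤ ((∫ ω, f ω ^ 2 ∂μ) + ∫ ω, g ω ^ 2 ∂μ) / 2 := by
  have hint : Integrable (fun ω => ‖f ω * g ω‖) μ := (aux_integrable_mul hf hg).norm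
  have hbd : Integrable (fun ω => (f ω ^ 2 + g ω ^ 2) / 2) μ :=
    (hf.integrable_sq.add hg.integrable_sq).div_const 2
  calc ∫ ω, ‖f ω * g ω‖ ∂μ ≤ ∫ ω, (f ω ^ 2 + g ω ^ 2) / 2 ∂μ := by
        refine integral_mono hint hbd fun ω => ?_
        show ‖f ω * g ω‖ ≤ (f ω ^ 2 + g ω ^ 2) / 2
        have := sq_nonneg (|f ω| - |g ω|)
        have h1 : ‖f ω * g ω‖ = |f ω| * |g ω| := by rw [Real.norm_eq_abs, abs_mul]
        have h2 : |f ω| ^ 2 = f ω ^ 2 := sq_abs _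
        have h3 : |g ω| ^ 2 = g ω ^ 2 := sq_abs _
        nlinarith [abs_nonneg (f ω), abs_nonneg (g ω)]
    _ = ((∫ ω, f ω ^ 2 ∂μ) + ∫ ω, g ω ^ 2 ∂μ) / 2 := by
        rw [integral_div, integral_add hf.integrable_sq hg.integrable_sq]

/-- Variance of the integral of a short-range correlated random field. -/
theorem variance_integral_short_range_field
    (d : ℕ) (hd : 1 ≤ d)
    {Ω : Type*} [MeasurableSpace Ω] (μ : Measure Ω) [IsProbabilityMeasure μ]
    (K : Set (Fin d → ℝ)) (hK : MeasurableSet K) (hKfin : volume K < ⊤)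
    (Z : (Fin d → ℝ) → Ω → ℝ)
    (hZmeas : Measurable (fun p : (Fin d → ℝ) × Ω => Z p.1 p.2))
    (hZL2 : ∀ t ∈ K, MemLp (Z t) 2 μ)
    (hZint : IntegrableOn (fun t => ∫ ω, (Z t ω) ^ 2 ∂μ) K (volume : Measure (Fin d → ℝ)))
    (δ : ℝ) (hδ : 0 < δ)
    (hshort : ∀ t ∈ K, ∀ t' ∈ K, (∃ p : Fin d, δ < |t p - t' p|) →
      (∫ ω, Z t ω * Z t' ω ∂μ) - (∫ ω, Z t ω ∂μ) * (∫ ω, Z t' ω ∂μ) = 0) :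
    variance (fun ω => ∫ t in K, Z t ω) μ
      ≤ (2 * δ) ^ d * ∫ t in K, variance (Z t) μ := by
  classical
  set ν : Measure (Fin d → ℝ) := (volume : Measure (Fin d → ℝ)).restrict K with hνdef
  haveI hνfin : IsFiniteMeasure ν := by
    constructor
    rw [hνdef, Measure.restrict_apply_univ]
    exact hKfin
  set m : (Fin d → ℝ) → ℝ := fun t => ∫ ω, Z t ω ∂μ with hmdef
  set g : (Fin d → ℝ) → ℝ := fun t => ∫ ω, Z t ω ^ 2 ∂μ with hgdef
  set v : (Fin d → ℝ) → ℝ := fun t => variance (Z t) μ with hvdef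
  set W : (Fin d → ℝ) → Ω → ℝ := fun t ω => Z t ω - m t with hWdef
  have hKae : ∀ᵐ t ∂ν, t ∈ K := ae_restrict_mem hK
  have hm_meas : StronglyMeasurable m := hZmeas.stronglyMeasurable.integral_prod_right'
  have hg_meas : StronglyMeasurable g :=
    (hZmeas.pow_const 2).stronglyMeasurable.integral_prod_right'
  have hgint : Integrable g ν := hZint
  have hWL2 : ∀ t ∈ K, MemLp (W t) 2 μ :=
    fun t ht => (hZL2 t ht).sub (memLp_const (m t))
  have hvar : ∀ t ∈ K, v t = g t - m t ^ 2 := fun t ht => variance_eq_sub (hZL2 t ht)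
  have hv_nonneg : ∀ t, 0 ≤ v t := fun t => variance_nonneg _ _
  have hmsq_le : ∀ t ∈ K, m t ^ 2 ≤ g t := by
    intro t ht
    have := hv_nonneg t
    rw [hvar t ht] at this
    linarith
  have hmsqint : Integrable (fun t => m t ^ 2) ν := by
    refine Integrable.mono' hgint ((hm_meas.measurable.pow_const 2).aestronglyMeasurable) ?_
    filter_upwards [hKae] with t ht
    rw [Real.norm_eq_abs, abs_of_nonneg (sq_nonneg _)]
    exact hmsq_le t ht
  have hmint : Integrable m ν := by
    refine Integrable.mono' ((integrable_const (1:ℝ)).add hgint)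
      hm_meas.aestronglyMeasurable ?_
    filter_upwards [hKae] with t ht
    have h1 : |m t| ≤ 1 + m t ^ 2 := by nlinarith [sq_nonneg (|m t| - 1), sq_abs (m t)]
    have := hmsq_le t ht
    rw [Real.norm_eq_abs]
    calc |m t| ≤ 1 + m t ^ 2 := h1
      _ ≤ 1 + g t := by linarith
  have hvint : Integrable v ν := by
    refine (hgint.sub hmsqint).congr ?_
    filter_upwards [hKae] with t ht
    exact (hvar t ht).symm
  -- the variance of W t is v t
  have hvW : ∀ t ∈ K, ∫ ω, W t ω ^ 2 ∂μ = v t := by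
    intro t ht
    show ∫ ω, W t ω ^ 2 ∂μ = variance (Z t) μ
    have h := variance_eq_integral (hZL2 t ht).aemeasurable
    rw [h]
  -- joint measurability of W
  have hWmeas : Measurable (fun p : (Fin d → ℝ) × Ω => W p.1 p.2) :=
    hZmeas.sub (hm_meas.measurable.comp measurable_fst)
  -- Z is integrable on the product space
  have hQint : Integrable (fun p : (Fin d → ℝ) × Ω => Z p.1 p.2) (ν.prod μ) := by
    refine (integrable_prod_iff hZmeas.aestronglyMeasurable).2 ⟨?_, ?_⟩
    · filter_upwards [hKae] with t ht
      exact (hZL2 t ht).integrable one_le_two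
    · refine Integrable.mono' ((integrable_const (1:ℝ)).add hgint)
        (hZmeas.norm.stronglyMeasurable.integral_prod_right').aestronglyMeasurable ?_
      filter_upwards [hKae] with t ht
      show ‖∫ ω, ‖Z t ω‖ ∂μ‖ ≤ 1 + g t
      have hZt := (hZL2 t ht).integrable one_le_two
      have h2 : Integrable (fun ω => 1 + Z t ω ^ 2) μ :=
        (integrable_const _).add (hZL2 t ht).integrable_sq
      rw [Real.norm_eq_abs, abs_of_nonneg (integral_nonneg fun ω => norm_nonneg _)]
      calc ∫ ω, ‖Z t ω‖ ∂μ ≤ ∫ ω, (1 + Z t ω ^ 2) ∂μ := by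
            refine integral_mono hZt.norm h2 fun ω => ?_
            rw [Real.norm_eq_abs]
            nlinarith [sq_nonneg (|Z t ω| - 1), sq_abs (Z t ω)]
        _ = 1 + g t := by
            rw [integral_add (integrable_const _) (hZL2 t ht).integrable_sq, integral_const]
            simp; rfl
  have hKKae : ∀ᵐ q ∂(ν.prod ν), q.1 ∈ K ∧ q.2 ∈ K := by
    have hprod : ν.prod ν
        = ((volume : Measure (Fin d → ℝ)).prod volume).restrict (K ×ˢ K) := by
      rw [hνdef, Measure.prod_restrict]
    rw [hprod]
    filter_upwards [ae_restrict_mem (hK.prod hK)] with q hq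
    exact ⟨hq.1, hq.2⟩
  -- joint measurability / integrability of the product field
  have hPmeas : Measurable
      (fun q : ((Fin d → ℝ) × (Fin d → ℝ)) × Ω => W q.1.1 q.2 * W q.1.2 q.2) := by
    have h1 : Measurable (fun q : ((Fin d → ℝ) × (Fin d → ℝ)) × Ω => W q.1.1 q.2) :=
      hWmeas.comp ((measurable_fst.fst).prodMk measurable_snd)
    have h2 : Measurable (fun q : ((Fin d → ℝ) × (Fin d → ℝ)) × Ω => W q.1.2 q.2) :=
      hWmeas.comp ((measurable_fst.snd).prodMk measurable_snd)
    exact h1.mul h2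
  have hv1 : Integrable (fun q : (Fin d → ℝ) × (Fin d → ℝ) => v q.1) (ν.prod ν) := by
    simpa using hvint.mul_prod (integrable_const (1:ℝ))
  have hv2 : Integrable (fun q : (Fin d → ℝ) × (Fin d → ℝ) => v q.2) (ν.prod ν) := by
    simpa using (integrable_const (1:ℝ)).mul_prod hvint
  have hPint : Integrable (fun q : ((Fin d → ℝ) × (Fin d → ℝ)) × Ω => W q.1.1 q.2 * W q.1.2 q.2)
      ((ν.prod ν).prod μ) := by
    refine (integrable_prod_iff hPmeas.aestronglyMeasurable).2 ⟨?_, ?_⟩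
    · filter_upwards [hKKae] with q hq
      exact aux_integrable_mul (hWL2 q.1 hq.1) (hWL2 q.2 hq.2)
    · refine Integrable.mono' ((hv1.add hv2).div_const 2)
        (hPmeas.norm.stronglyMeasurable.integral_prod_right').aestronglyMeasurable ?_
      filter_upwards [hKKae] with q hq
      show ‖∫ ω, ‖W q.1 ω * W q.2 ω‖ ∂μ‖ ≤ (v q.1 + v q.2) / 2
      rw [Real.norm_eq_abs, abs_of_nonneg (integral_nonneg fun ω => norm_nonneg _)]
      calc ∫ ω, ‖W q.1 ω * W q.2 ω‖ ∂μ
          ≤ ((∫ ω, W q.1 ω ^ 2 ∂μ) + ∫ ω, W q.2 ω ^ 2 ∂μ) / 2 :=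
            aux_abs_integral_mul_le (hWL2 _ hq.1) (hWL2 _ hq.2)
        _ = (v q.1 + v q.2) / 2 := by rw [hvW _ hq.1, hvW _ hq.2]
  -- the centered integral
  set Y : Ω → ℝ := fun ω => ∫ t, Z t ω ∂ν with hYdef
  set U : Ω → ℝ := fun ω => ∫ t, W t ω ∂ν with hUdef
  have hU_aesm : AEStronglyMeasurable U μ :=
    ((hWmeas.comp measurable_swap).stronglyMeasurable.integral_prod_right').aestronglyMeasurable
  have hUsq_eq : ∀ ω, U ω ^ 2 = ∫ q, W q.1 ω * W q.2 ω ∂(ν.prod ν) := by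
    intro ω
    have h := integral_prod_mul (μ := ν) (ν := ν) (fun t => W t ω) (fun t => W t ω)
    rw [sq]
    exact h.symm
  have hUsq_int : Integrable (fun ω => U ω ^ 2) μ := by
    have h := (hPint.swap).integral_prod_left
    exact h.congr (Filter.Eventually.of_forall fun ω => (hUsq_eq ω).symm)
  have hUmem : MemLp U 2 μ := (memLp_two_iff_integrable_sq hU_aesm).2 hUsq_int
  have hYU : ∀ᵐ ω ∂μ, Y ω = U ω + ∫ t, m t ∂ν := by
    filter_upwards [hQint.prod_left_ae] with ω hω
    have hWω : Integrable (fun t => W t ω) ν := hω.sub hmint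
    have h1 : (fun t => Z t ω) = fun t => W t ω + m t := by
      funext t; simp [hWdef]
    show ∫ t, Z t ω ∂ν = (∫ t, W t ω ∂ν) + ∫ t, m t ∂ν
    rw [h1, integral_add hWω hmint]
  have hYmem : MemLp Y 2 μ :=
    MemLp.ae_eq (hYU.mono fun ω h => h.symm) (hUmem.add (memLp_const (∫ t, m t ∂ν)))
  have hEY : ∫ ω, Y ω ∂μ = ∫ t, m t ∂ν := integral_integral_swap hQint.swap
  have hvarY : variance Y μ = ∫ ω, U ω ^ 2 ∂μ := by
    rw [variance_eq_integral hYmem.aemeasurable]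
    refine integral_congr_ae ?_
    filter_upwards [hYU] with ω hω
    show (Y ω - ∫ ω', Y ω' ∂μ) ^ 2 = U ω ^ 2
    rw [hEY, hω]
    ring
  have hswap : ∫ ω, U ω ^ 2 ∂μ = ∫ q, (∫ ω, W q.1 ω * W q.2 ω ∂μ) ∂(ν.prod ν) := by
    have h1 : ∫ ω, U ω ^ 2 ∂μ = ∫ ω, ∫ q, W q.1 ω * W q.2 ω ∂(ν.prod ν) ∂μ :=
      integral_congr_ae (Filter.Eventually.of_forall hUsq_eq)
    rw [h1]
    exact integral_integral_swap hPint.swap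
  -- the short-range set
  set S : Set ((Fin d → ℝ) × (Fin d → ℝ)) := {q | ∀ p : Fin d, |q.1 p - q.2 p| ≤ δ} with hSdef
  have hSmeas : MeasurableSet S := by
    have hS2 : S = ⋂ p : Fin d, {q : (Fin d → ℝ) × (Fin d → ℝ) | |q.1 p - q.2 p| ≤ δ} := by
      ext q; simp [hSdef, Set.mem_iInter]
    rw [hS2]
    refine MeasurableSet.iInter fun p => ?_
    have hcont : Continuous fun q : (Fin d → ℝ) × (Fin d → ℝ) => |q.1 p - q.2 p| :=
      (((continuous_apply p).comp continuous_fst).sub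
        ((continuous_apply p).comp continuous_snd)).abs
    exact (isClosed_le hcont continuous_const).measurableSet
  have hslice1 : ∀ a : Fin d → ℝ, {b : Fin d → ℝ | (a, b) ∈ S}
      = Set.Icc (fun p => a p - δ) (fun p => a p + δ) := by
    intro a; ext b
    simp only [hSdef, Set.mem_setOf_eq, Set.mem_Icc, Pi.le_def]
    constructor
    · intro h
      refine ⟨fun p => ?_, fun p => ?_⟩ <;>
        · have h2 := abs_le.1 (h p); linarith [h2.1, h2.2]
    · intro h p
      rw [abs_le]
      exact ⟨by linarith [h.1 p, h.2 p], by linarith [h.1 p, h.2 p]⟩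
  have hslice2 : ∀ b : Fin d → ℝ, {a : Fin d → ℝ | (a, b) ∈ S}
      = Set.Icc (fun p => b p - δ) (fun p => b p + δ) := by
    intro b; ext a
    simp only [hSdef, Set.mem_setOf_eq, Set.mem_Icc, Pi.le_def]
    constructor
    · intro h
      refine ⟨fun p => ?_, fun p => ?_⟩ <;>
        · have h2 := abs_le.1 (h p); linarith [h2.1, h2.2]
    · intro h p
      rw [abs_le]
      exact ⟨by linarith [h.1 p, h.2 p], by linarith [h.1 p, h.2 p]⟩
  have hIccvol : ∀ a : Fin d → ℝ,
      ν (Set.Icc (fun p => a p - δ) (fun p => a p + δ)) ≤ ENNReal.ofReal ((2*δ)^d) := by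
    intro a
    calc ν (Set.Icc (fun p => a p - δ) (fun p => a p + δ))
        ≤ volume (Set.Icc (fun p => a p - δ) (fun p => a p + δ)) :=
          Measure.restrict_apply_le _ _
      _ = ∏ p : Fin d, ENNReal.ofReal ((a p + δ) - (a p - δ)) := Real.volume_Icc_pi
      _ = ENNReal.ofReal ((2*δ)^d) := by
          have harith : ∀ p : Fin d, (a p + δ) - (a p - δ) = 2*δ := fun p => by ring
          simp only [harith]
          rw [Finset.prod_const, ← ENNReal.ofReal_pow (by positivity)]
          simp [Finset.card_univ]
  -- integrabilities of covariance and bound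
  have hCint : Integrable
      (fun q : (Fin d → ℝ) × (Fin d → ℝ) => ∫ ω, W q.1 ω * W q.2 ω ∂μ) (ν.prod ν) :=
    hPint.integral_prod_left
  have hB1int : Integrable (S.indicator
      (fun q : (Fin d → ℝ) × (Fin d → ℝ) => v q.1 / 2)) (ν.prod ν) :=
    ((hv1.div_const 2).indicator hSmeas)
  have hB2int : Integrable (S.indicator
      (fun q : (Fin d → ℝ) × (Fin d → ℝ) => v q.2 / 2)) (ν.prod ν) :=
    ((hv2.div_const 2).indicator hSmeas)
  have hBint : Integrable (S.indicator
      (fun q : (Fin d → ℝ) × (Fin d → ℝ) => (v q.1 + v q.2) / 2)) (ν.prod ν) :=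
    (((hv1.add hv2).div_const 2).indicator hSmeas)
  -- The covariance is bounded by the indicator bound
  have hCleB : ∀ᵐ q ∂(ν.prod ν), (∫ ω, W q.1 ω * W q.2 ω ∂μ)
      ≤ S.indicator (fun q : (Fin d → ℝ) × (Fin d → ℝ) => (v q.1 + v q.2) / 2) q := by
    filter_upwards [hKKae] with q hq
    by_cases hqS : q ∈ S
    · rw [Set.indicator_of_mem hqS]
      calc ∫ ω, W q.1 ω * W q.2 ω ∂μ ≤ ∫ ω, ‖W q.1 ω * W q.2 ω‖ ∂μ := by
            refine le_trans (le_abs_self _) ?_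
            rw [← Real.norm_eq_abs]
            exact norm_integral_le_integral_norm _
        _ ≤ ((∫ ω, W q.1 ω ^ 2 ∂μ) + ∫ ω, W q.2 ω ^ 2 ∂μ) / 2 :=
            aux_abs_integral_mul_le (hWL2 _ hq.1) (hWL2 _ hq.2)
        _ = (v q.1 + v q.2) / 2 := by rw [hvW _ hq.1, hvW _ hq.2]
    · rw [Set.indicator_of_notMem hqS]
      have hex : ∃ p : Fin d, δ < |q.1 p - q.2 p| := by
        by_contra hcon
        push_neg at hcon
        exact hqS fun p => hcon p
      have h0 := hshort q.1 hq.1 q.2 hq.2 hex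
      have hZ1 := (hZL2 _ hq.1).integrable one_le_two
      have hZ2 := (hZL2 _ hq.2).integrable one_le_two
      have hZZ := aux_integrable_mul (hZL2 _ hq.1) (hZL2 _ hq.2)
      have hm1 : m q.1 = ∫ ω, Z q.1 ω ∂μ := rfl
      have hm2 : m q.2 = ∫ ω, Z q.2 ω ∂μ := rfl
      have hfun : ∀ ω, W q.1 ω * W q.2 ω
          = Z q.1 ω * Z q.2 ω - m q.1 * Z q.2 ω - m q.2 * Z q.1 ω + m q.1 * m q.2 := by
        intro ω; simp only [hWdef]; ring
      have h1 : Integrable (fun ω => Z q.1 ω * Z q.2 ω - m q.1 * Z q.2 ω) μ :=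
        hZZ.sub (hZ2.const_mul _)
      have h2 : Integrable
          (fun ω => Z q.1 ω * Z q.2 ω - m q.1 * Z q.2 ω - m q.2 * Z q.1 ω) μ :=
        h1.sub (hZ1.const_mul _)
      have hexp : ∫ ω, W q.1 ω * W q.2 ω ∂μ
          = (∫ ω, Z q.1 ω * Z q.2 ω ∂μ) - m q.1 * m q.2 := by
        calc ∫ ω, W q.1 ω * W q.2 ω ∂μ
            = ∫ ω, (Z q.1 ω * Z q.2 ω - m q.1 * Z q.2 ω - m q.2 * Z q.1 ω
                + m q.1 * m q.2) ∂μ := integral_congr_ae (Filter.Eventually.of_forall hfun)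
          _ = (∫ ω, (Z q.1 ω * Z q.2 ω - m q.1 * Z q.2 ω - m q.2 * Z q.1 ω) ∂μ)
                + ∫ _ω, (m q.1 * m q.2 : ℝ) ∂μ := integral_add h2 (integrable_const _)
          _ = (∫ ω, Z q.1 ω * Z q.2 ω ∂μ) - m q.1 * (∫ ω, Z q.2 ω ∂μ)
                - m q.2 * (∫ ω, Z q.1 ω ∂μ) + m q.1 * m q.2 := by
              rw [integral_sub h1 (hZ1.const_mul _), integral_sub hZZ (hZ2.const_mul _),
                integral_const_mul, integral_const_mul, integral_const]
              simp
          _ = (∫ ω, Z q.1 ω * Z q.2 ω ∂μ) - m q.1 * m q.2 := by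
              rw [← hm1, ← hm2]; ring
      have h0' : (∫ ω, Z q.1 ω * Z q.2 ω ∂μ) - m q.1 * m q.2 = 0 := by
        rw [hm1, hm2]; exact h0
      exact le_of_eq (by rw [hexp]; exact h0')
  have key : variance Y μ ≤ ∫ q, S.indicator
      (fun q : (Fin d → ℝ) × (Fin d → ℝ) => (v q.1 + v q.2) / 2) q ∂(ν.prod ν) := by
    rw [hvarY, hswap]
    exact integral_mono_ae hCint hBint hCleB
  -- bound the first half
  have hI1 : ∫ q, S.indicator (fun q : (Fin d → ℝ) × (Fin d → ℝ) => v q.1 / 2) q ∂(ν.prod ν)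
      ≤ (2*δ)^d * ((∫ t, v t ∂ν) / 2) := by
    rw [integral_prod _ hB1int]
    have hinner : ∀ t : Fin d → ℝ,
        (∫ t', S.indicator (fun q : (Fin d → ℝ) × (Fin d → ℝ) => v q.1 / 2) (t, t') ∂ν)
        = (ν {b | (t, b) ∈ S}).toReal • (v t / 2) := by
      intro t
      have hfe : (fun t' => S.indicator (fun q : (Fin d → ℝ) × (Fin d → ℝ) => v q.1 / 2) (t, t'))
          = Set.indicator {b | (t, b) ∈ S} (fun _ => v t / 2) := by
        funext b
        by_cases h : (t, b) ∈ S
        · rw [Set.indicator_of_mem h, Set.indicator_of_mem (by exact h)]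
        · rw [Set.indicator_of_notMem h, Set.indicator_of_notMem (by exact h)]
      rw [hfe]
      exact integral_indicator_const _ (by rw [hslice1]; exact measurableSet_Icc)
    calc ∫ t, (∫ t', S.indicator
            (fun q : (Fin d → ℝ) × (Fin d → ℝ) => v q.1 / 2) (t, t') ∂ν) ∂ν
        = ∫ t, (ν {b | (t, b) ∈ S}).toReal • (v t / 2) ∂ν :=
          integral_congr_ae (Filter.Eventually.of_forall hinner)
      _ ≤ ∫ t, (2*δ)^d * (v t / 2) ∂ν := by
          refine integral_mono ?_ ((hvint.div_const 2).const_mul _) fun t => ?_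
          · exact (hB1int.integral_prod_left).congr
              (Filter.Eventually.of_forall fun t => hinner t)
          · have h1 : (ν {b | (t, b) ∈ S}).toReal ≤ (2*δ)^d := by
              refine ENNReal.toReal_le_of_le_ofReal (by positivity) ?_
              rw [hslice1 t]
              exact hIccvol t
            have h2 : (0:ℝ) ≤ v t / 2 := by
              have := hv_nonneg t; linarith
            calc (ν {b | (t, b) ∈ S}).toReal • (v t / 2)
                = (ν {b | (t, b) ∈ S}).toReal * (v t / 2) := rfl
              _ ≤ (2*δ)^d * (v t / 2) := mul_le_mul_of_nonneg_right h1 h2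
      _ = (2*δ)^d * ((∫ t, v t ∂ν) / 2) := by
          rw [integral_const_mul, integral_div]
  -- bound the second half (symmetric)
  have hI2 : ∫ q, S.indicator (fun q : (Fin d → ℝ) × (Fin d → ℝ) => v q.2 / 2) q ∂(ν.prod ν)
      ≤ (2*δ)^d * ((∫ t, v t ∂ν) / 2) := by
    rw [integral_prod_symm _ hB2int]
    have hinner : ∀ b : Fin d → ℝ,
        (∫ a, S.indicator (fun q : (Fin d → ℝ) × (Fin d → ℝ) => v q.2 / 2) (a, b) ∂ν)
        = (ν {a | (a, b) ∈ S}).toReal • (v b / 2) := by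
      intro b
      have hfe : (fun a => S.indicator (fun q : (Fin d → ℝ) × (Fin d → ℝ) => v q.2 / 2) (a, b))
          = Set.indicator {a | (a, b) ∈ S} (fun _ => v b / 2) := by
        funext a
        by_cases h : (a, b) ∈ S
        · rw [Set.indicator_of_mem h, Set.indicator_of_mem (by exact h)]
        · rw [Set.indicator_of_notMem h, Set.indicator_of_notMem (by exact h)]
      rw [hfe]
      exact integral_indicator_const _ (by rw [hslice2]; exact measurableSet_Icc)
    calc ∫ b, (∫ a, S.indicator
            (fun q : (Fin d → ℝ) × (Fin d → ℝ) => v q.2 / 2) (a, b) ∂ν) ∂ν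
        = ∫ b, (ν {a | (a, b) ∈ S}).toReal • (v b / 2) ∂ν :=
          integral_congr_ae (Filter.Eventually.of_forall hinner)
      _ ≤ ∫ b, (2*δ)^d * (v b / 2) ∂ν := by
          refine integral_mono ?_ ((hvint.div_const 2).const_mul _) fun b => ?_
          · exact (hB2int.swap.integral_prod_left).congr
              (Filter.Eventually.of_forall fun b => hinner b)
          · have h1 : (ν {a | (a, b) ∈ S}).toReal ≤ (2*δ)^d := by
              refine ENNReal.toReal_le_of_le_ofReal (by positivity) ?_
              rw [hslice2 b]
              exact hIccvol b
            have h2 : (0:ℝ) ≤ v b / 2 := by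
              have := hv_nonneg b; linarith
            calc (ν {a | (a, b) ∈ S}).toReal • (v b / 2)
                = (ν {a | (a, b) ∈ S}).toReal * (v b / 2) := rfl
              _ ≤ (2*δ)^d * (v b / 2) := mul_le_mul_of_nonneg_right h1 h2
      _ = (2*δ)^d * ((∫ t, v t ∂ν) / 2) := by
          rw [integral_const_mul, integral_div]
  have hsum : ∫ q, S.indicator
      (fun q : (Fin d → ℝ) × (Fin d → ℝ) => (v q.1 + v q.2) / 2) q ∂(ν.prod ν)
      = (∫ q, S.indicator (fun q : (Fin d → ℝ) × (Fin d → ℝ) => v q.1 / 2) q ∂(ν.prod ν))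
        + ∫ q, S.indicator (fun q : (Fin d → ℝ) × (Fin d → ℝ) => v q.2 / 2) q ∂(ν.prod ν) := by
    rw [← integral_add hB1int hB2int]
    refine integral_congr_ae (Filter.Eventually.of_forall fun q => ?_)
    by_cases h : q ∈ S
    · simp only [Pi.add_apply, Set.indicator_of_mem h]
      ring
    · simp only [Pi.add_apply, Set.indicator_of_notMem h]
      ring
  calc variance Y μ
      ≤ ∫ q, S.indicator
          (fun q : (Fin d → ℝ) × (Fin d → ℝ) => (v q.1 + v q.2) / 2) q ∂(ν.prod ν) := key
    _ = (∫ q, S.indicator (fun q : (Fin d → ℝ) × (Fin d → ℝ) => v q.1 / 2) q ∂(ν.prod ν))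
        + ∫ q, S.indicator (fun q : (Fin d → ℝ) × (Fin d → ℝ) => v q.2 / 2) q ∂(ν.prod ν) := hsum
    _ ≤ (2*δ)^d * ((∫ t, v t ∂ν) / 2) + (2*δ)^d * ((∫ t, v t ∂ν) / 2) := add_le_add hI1 hI2
    _ = (2*δ)^d * ∫ t, v t ∂ν := by ring
end
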